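/- arXiv:2210.16959 — 6 statements merged into one kernel-verified Lean document; each statement's English description precedes it below -/
import Mathlib

section
/- For every integer n ≥ 1 the 2-adic valuation of the Tribonacci number T(n) is given by: ν₂(T(n)) = 0 if n ≡ 1, 2 (mod 4); ν₂(T(n)) = 1 if n ≡ 3, 11 (mod 16); ν₂(T(n)) = 2 if n ≡ 4, 8 (mod 16); ν₂(T(n)) = 3 if n ≡ 7 (mod 16); ν₂(T(n)) = ν₂(n) − 1 if n ≡ 0 (mod 16); ν₂(T(n)) = ν₂(n+4) − 1 if n ≡ 12 (mod 16); ν₂(T(n)) = ν₂(n+17) + 1 if n ≡ 15 (mod 32); ν₂(T(n)) = ν₂(n+1) + 1 if n ≡ 31 (mod 32). -/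
private lemma val2' (x : ℤ) (v : ℕ) (s : ℤ) (h : x = 2^v * (2*s+1)) : padicValInt 2 x = v := by
  have hodd : ¬ (2 ∣ (2*s+1).natAbs) := by
    rw [← Int.natAbs_natCast 2, Int.natAbs_dvd_natAbs]
    omega
  have hne : (2*s+1).natAbs ≠ 0 := by omega
  rw [padicValInt, h, Int.natAbs_mul, Int.natAbs_pow, show Int.natAbs 2 = 2 from rfl]
  rw [padicValNat.mul (by positivity) hne, padicValNat.prime_pow,
    padicValNat.eq_zero_of_not_dvd hodd]
  rfl

private lemma addf (T : ℤ → ℤ) (hT0 : T 0 = 0) (hT1 : T 1 = 1) (hT2 : T 2 = 1)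
    (hTrec : ∀ n : ℤ, T (n + 3) = T (n + 2) + T (n + 1) + T n) :
    ∀ m n : ℤ, T (m + n) = T (m+1) * T n + T m * (T (n+1) - T n) + T (m-1) * T (n-1) := by
  have hm1 : T (-1) = 0 := by have h := hTrec (-1); norm_num at h; omega
  intro m n
  have key : ∀ m : ℤ,
      (T (m + n) = T (m+1) * T n + T m * (T (n+1) - T n) + T (m-1) * T (n-1))
      ∧ (T ((m+1) + n) = T (m+2) * T n + T (m+1) * (T (n+1) - T n) + T m * T (n-1))
      ∧ (T ((m+2) + n) = T (m+3) * T n + T (m+2) * (T (n+1) - T n) + T (m+1) * T (n-1)) := by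
    intro m
    induction m using Int.induction_on with
    | zero =>
      have r1 := hTrec (n - 2)
      have r2 := hTrec (n - 1)
      have h3 : T (3 : ℤ) = 2 := by have h := hTrec 0; norm_num at h; omega
      ring_nf
      ring_nf at r1 r2
      refine ⟨?_, ?_, ?_⟩
      · rw [hT1, hT0, hm1]; ring
      · rw [hT2, hT1, hT0]; linarith
      · rw [h3, hT2, hT1]; linarith
    | succ i ih =>
      obtain ⟨h1, h2, h3⟩ := ih
      have r := hTrec ((i : ℤ) + n)
      have c1 := hTrec ((i : ℤ) + 1)
      have c2 := hTrec (i : ℤ)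
      have c3 := hTrec ((i : ℤ) - 1)
      refine ⟨?_, ?_, ?_⟩
      · ring_nf; ring_nf at h2; linarith [h2]
      · ring_nf; ring_nf at h3; linarith [h3]
      · ring_nf at r c1 c2 c3 h1 h2 h3 ⊢
        rw [r, h3, h2, h1, c1, c2, c3]; ring
    | pred i ih =>
      obtain ⟨h1, h2, h3⟩ := ih
      have r := hTrec (-(i : ℤ) + n - 1)
      have d1 := hTrec (-(i : ℤ))
      have d2 := hTrec (-(i : ℤ) - 1)
      have d3 := hTrec (-(i : ℤ) - 2)
      refine ⟨?_, ?_, ?_⟩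
      · ring_nf at r d1 d2 d3 h1 h2 h3 ⊢
        have r' : T (-1 - (i:ℤ) + n) = T (2 - (i:ℤ) + n) - T (1 - (i:ℤ) + n) - T (-(i:ℤ) + n) := by
          linarith [r]
        have d3' : T (-2 - (i:ℤ)) = T (1 - (i:ℤ)) - T (-(i:ℤ)) - T (-1 - (i:ℤ)) := by
          linarith [d3]
        rw [r', h3, h2, h1, d1, d2, d3']; ring
      · ring_nf; ring_nf at h1; linarith [h1]
      · ring_nf; ring_nf at h2; linarith [h2]
  exact (key m).1

/-- **2-adic valuation of Tribonacci numbers** (Marques–Lengyel).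
`T : ℤ → ℤ` is the Tribonacci sequence. For `n ≥ 1` the 2-adic valuation of `T n`
is given by the stated case distinction. -/
theorem tribonacci_padicValInt_two
    (T : ℤ → ℤ)
    (hT0 : T 0 = 0) (hT1 : T 1 = 1) (hT2 : T 2 = 1)
    (hTrec : ∀ n : ℤ, T (n + 3) = T (n + 2) + T (n + 1) + T n) :
    ∀ n : ℤ, 1 ≤ n →
      ((n % 4 = 1 ∨ n % 4 = 2) → padicValInt 2 (T n) = 0) ∧
      ((n % 16 = 3 ∨ n % 16 = 11) → padicValInt 2 (T n) = 1) ∧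
      ((n % 16 = 4 ∨ n % 16 = 8) → padicValInt 2 (T n) = 2) ∧
      (n % 16 = 7 → padicValInt 2 (T n) = 3) ∧
      (n % 16 = 0 → padicValInt 2 (T n) = padicValInt 2 n - 1) ∧
      (n % 16 = 12 → padicValInt 2 (T n) = padicValInt 2 (n + 4) - 1) ∧
      (n % 32 = 15 → padicValInt 2 (T n) = padicValInt 2 (n + 17) + 1) ∧
      (n % 32 = 31 → padicValInt 2 (T n) = padicValInt 2 (n + 1) + 1) := by
  have addf' := addf T hT0 hT1 hT2 hTrec
  have v3 : T (3 : ℤ) = 2 := by have h := hTrec (0 : ℤ); norm_num at h; omega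
  have v4 : T (4 : ℤ) = 4 := by have h := hTrec (1 : ℤ); norm_num at h; omega
  have v5 : T (5 : ℤ) = 7 := by have h := hTrec (2 : ℤ); norm_num at h; omega
  have v6 : T (6 : ℤ) = 13 := by have h := hTrec (3 : ℤ); norm_num at h; omega
  have v7 : T (7 : ℤ) = 24 := by have h := hTrec (4 : ℤ); norm_num at h; omega
  have v8 : T (8 : ℤ) = 44 := by have h := hTrec (5 : ℤ); norm_num at h; omega
  have v9 : T (9 : ℤ) = 81 := by have h := hTrec (6 : ℤ); norm_num at h; omega
  have v10 : T (10 : ℤ) = 149 := by have h := hTrec (7 : ℤ); norm_num at h; omega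
  have v11 : T (11 : ℤ) = 274 := by have h := hTrec (8 : ℤ); norm_num at h; omega
  have v12 : T (12 : ℤ) = 504 := by have h := hTrec (9 : ℤ); norm_num at h; omega
  have v13 : T (13 : ℤ) = 927 := by have h := hTrec (10 : ℤ); norm_num at h; omega
  have v14 : T (14 : ℤ) = 1705 := by have h := hTrec (11 : ℤ); norm_num at h; omega
  have v15 : T (15 : ℤ) = 3136 := by have h := hTrec (12 : ℤ); norm_num at h; omega
  have v16 : T (16 : ℤ) = 5768 := by have h := hTrec (13 : ℤ); norm_num at h; omega
  have v17 : T (17 : ℤ) = 10609 := by have h := hTrec (14 : ℤ); norm_num at h; omega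
  have v18 : T (18 : ℤ) = 19513 := by have h := hTrec (15 : ℤ); norm_num at h; omega
  have v19 : T (19 : ℤ) = 35890 := by have h := hTrec (16 : ℤ); norm_num at h; omega
  have v20 : T (20 : ℤ) = 66012 := by have h := hTrec (17 : ℤ); norm_num at h; omega
  have v21 : T (21 : ℤ) = 121415 := by have h := hTrec (18 : ℤ); norm_num at h; omega
  have v22 : T (22 : ℤ) = 223317 := by have h := hTrec (19 : ℤ); norm_num at h; omega
  have v23 : T (23 : ℤ) = 410744 := by have h := hTrec (20 : ℤ); norm_num at h; omega
  have v24 : T (24 : ℤ) = 755476 := by have h := hTrec (21 : ℤ); norm_num at h; omega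
  have v25 : T (25 : ℤ) = 1389537 := by have h := hTrec (22 : ℤ); norm_num at h; omega
  have v26 : T (26 : ℤ) = 2555757 := by have h := hTrec (23 : ℤ); norm_num at h; omega
  have v27 : T (27 : ℤ) = 4700770 := by have h := hTrec (24 : ℤ); norm_num at h; omega
  have v28 : T (28 : ℤ) = 8646064 := by have h := hTrec (25 : ℤ); norm_num at h; omega
  have v29 : T (29 : ℤ) = 15902591 := by have h := hTrec (26 : ℤ); norm_num at h; omega
  have v30 : T (30 : ℤ) = 29249425 := by have h := hTrec (27 : ℤ); norm_num at h; omega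
  have v31 : T (31 : ℤ) = 53798080 := by have h := hTrec (28 : ℤ); norm_num at h; omega
  have v32 : T (32 : ℤ) = 98950096 := by have h := hTrec (29 : ℤ); norm_num at h; omega
  have v33 : T (33 : ℤ) = 181997601 := by have h := hTrec (30 : ℤ); norm_num at h; omega
  have wm1 : T (-1 : ℤ) = 0 := by have h := hTrec (-1 : ℤ); norm_num at h; omega
  have wm2 : T (-2 : ℤ) = 1 := by have h := hTrec (-2 : ℤ); norm_num at h; omega
  have wm3 : T (-3 : ℤ) = -1 := by have h := hTrec (-3 : ℤ); norm_num at h; omega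
  have wm4 : T (-4 : ℤ) = 0 := by have h := hTrec (-4 : ℤ); norm_num at h; omega
  have wm5 : T (-5 : ℤ) = 2 := by have h := hTrec (-5 : ℤ); norm_num at h; omega
  have wm6 : T (-6 : ℤ) = -3 := by have h := hTrec (-6 : ℤ); norm_num at h; omega
  have wm7 : T (-7 : ℤ) = 1 := by have h := hTrec (-7 : ℤ); norm_num at h; omega
  have wm8 : T (-8 : ℤ) = 4 := by have h := hTrec (-8 : ℤ); norm_num at h; omega
  have wm9 : T (-9 : ℤ) = -8 := by have h := hTrec (-9 : ℤ); norm_num at h; omega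
  have wm10 : T (-10 : ℤ) = 5 := by have h := hTrec (-10 : ℤ); norm_num at h; omega
  have wm11 : T (-11 : ℤ) = 7 := by have h := hTrec (-11 : ℤ); norm_num at h; omega
  have wm12 : T (-12 : ℤ) = -20 := by have h := hTrec (-12 : ℤ); norm_num at h; omega
  have wm13 : T (-13 : ℤ) = 18 := by have h := hTrec (-13 : ℤ); norm_num at h; omega
  have wm14 : T (-14 : ℤ) = 9 := by have h := hTrec (-14 : ℤ); norm_num at h; omega
  have wm15 : T (-15 : ℤ) = -47 := by have h := hTrec (-15 : ℤ); norm_num at h; omega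
  have wm16 : T (-16 : ℤ) = 56 := by have h := hTrec (-16 : ℤ); norm_num at h; omega
  have wm17 : T (-17 : ℤ) = 0 := by have h := hTrec (-17 : ℤ); norm_num at h; omega
  have wm18 : T (-18 : ℤ) = -103 := by have h := hTrec (-18 : ℤ); norm_num at h; omega
  -- identities from the 2-adic zeros T(-4) = 0 and T(-17) = 0
  have Iz4 : ∀ h : ℤ, T (h - 4) = -T h + 2 * T (h - 1) := by
    intro h
    have h1 := addf' (-4) h
    rw [show (-4:ℤ)+1 = -3 from by norm_num, show (-4:ℤ)-1 = -5 from by norm_num,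
      wm3, wm4, wm5] at h1
    rw [show h - 4 = -4 + h from by ring, h1]; ring
  have Iz17 : ∀ h : ℤ, T (h - 17) = 56 * T h - 103 * T (h - 1) := by
    intro h
    have h1 := addf' (-17) h
    rw [show (-17:ℤ)+1 = -16 from by norm_num, show (-17:ℤ)-1 = -18 from by norm_num,
      wm16, wm17, wm18] at h1
    rw [show h - 17 = -17 + h from by ring, h1]; ring
  -- the value package at powers of two
  have pk : ∀ t : ℕ, ∃ A B U : ℤ,
      T (2^(t+5)) = 2^(t+4) * A ∧ T (2^(t+5) - 1) = 2^(t+4) * B ∧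
      T (2^(t+5) + 1) = 1 + 2^(t+4) * U ∧ A % 2 = 1 ∧ B % 8 = 4 := by
    intro t
    induction t with
    | zero =>
      refine ⟨6184381, 3362380, 11374850, ?_, ?_, ?_, by norm_num, by norm_num⟩
      · norm_num [v32]
      · norm_num [v31]
      · norm_num [v33]
    | succ t ih =>
      obtain ⟨A, B, U, e0, e1, e2, hA, hB⟩ := ih
      set P : ℤ := 2^(t+5) with hP
      have eV : T (P - 2) = 1 + 2^(t+4)*U - 2^(t+4)*A - 2^(t+4)*B := by
        have h := hTrec (P - 2)
        have h' : T (P + 1) = T P + T (P - 1) + T (P - 2) := by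
          ring_nf at h ⊢; linarith [h]
        rw [e0, e1, e2] at h'
        linarith [h']
      have eS : T (P + 2) = T (P + 1) + T P + T (P - 1) := by
        have h := hTrec (P - 1); ring_nf at h ⊢; linarith [h]
      have a1 : T (P + P) = T (P+1) * T P + T P * (T (P+1) - T P) + T (P-1) * T (P-1) := by
        have h := addf' P P; ring_nf at h ⊢; linarith [h]
      have a2 : T (P - 1 + P) = T P * T P + T (P-1) * (T (P+1) - T P) + T (P-2) * T (P-1) := by
        have h := addf' (P-1) P; ring_nf at h ⊢; linarith [h]
      have a3 : T (P + 1 + P) = T (P+2) * T P + T (P+1) * (T (P+1) - T P) + T P * T (P-1) := by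
        have h := addf' (P+1) P; ring_nf at h ⊢; linarith [h]
      refine ⟨A + 2^(t+3)*(2*A*U - A^2 + B^2), B + 2^(t+3)*(A^2 - B^2 + 2*B*U - 2*A*B),
        U + 2^(t+3)*(A^2 + 2*A*B + U^2), ?_, ?_, ?_, ?_, ?_⟩
      · rw [show (2:ℤ)^(t+1+5) = P + P from by rw [hP]; ring, a1, e0, e1, e2]; ring
      · rw [show (2:ℤ)^(t+1+5) - 1 = P - 1 + P from by rw [hP]; ring, a2, eV, e0, e1, e2]; ring
      · rw [show (2:ℤ)^(t+1+5) + 1 = P + 1 + P from by rw [hP]; ring, a3, eS, e0, e1, e2]; ring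
      · obtain ⟨K, hK⟩ : ∃ K : ℤ, 2^(t+3)*(2*A*U - A^2 + B^2) = 2*K :=
          ⟨2^(t+2)*(2*A*U - A^2 + B^2), by ring⟩
        rw [hK]; omega
      · obtain ⟨K, hK⟩ : ∃ K : ℤ, 2^(t+3)*(A^2 - B^2 + 2*B*U - 2*A*B) = 8*K :=
          ⟨2^t*(A^2 - B^2 + 2*B*U - 2*A*B), by ring⟩
        rw [hK]; omega
  -- lifting lemma
  have lift : ∀ (t : ℕ) (n : ℤ), ∃ A B U : ℤ, A % 2 = 1 ∧ B % 8 = 4 ∧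
      T (n + 2^(t+5)) = T n + 2^(t+4) * (U * T n + A * (T (n+1) - T n) + B * T (n-1)) := by
    intro t n
    obtain ⟨A, B, U, e0, e1, e2, hA, hB⟩ := pk t
    refine ⟨A, B, U, hA, hB, ?_⟩
    have h := addf' (2^(t+5)) n
    rw [e0, e1, e2] at h
    rw [show n + 2^(t+5) = 2^(t+5) + n from by ring, h]; ring
  -- core claim A : ν(T(2^j·odd)) = j-1 for j ≥ 4
  have coreA : ∀ (i r : ℕ), ∃ s : ℤ, T (2^(i+4) * (2*(r:ℤ)+1)) = 2^(i+3) * (2*s+1) := by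
    intro i r
    induction r with
    | zero =>
      cases i with
      | zero => exact ⟨360, by norm_num [v16]⟩
      | succ i' =>
        obtain ⟨A, B, U, e0, _, _, hA, _⟩ := pk i'
        refine ⟨(A-1)/2, ?_⟩
        rw [show (2:ℤ)^(i'+1+4) * (2*((0:ℕ):ℤ)+1) = 2^(i'+5) from by push_cast; ring, e0]
        have hA2 : A = 2*((A-1)/2)+1 := by omega
        linear_combination (2:ℤ)^(i'+4) * hA2
    | succ r ih =>
      obtain ⟨s, hs⟩ := ih
      obtain ⟨A, B, U, hA, hB, hl⟩ := lift i (2^(i+4) * (2*(r:ℤ)+1))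
      refine ⟨s + (U * T (2^(i+4) * (2*(r:ℤ)+1))
        + A * (T (2^(i+4) * (2*(r:ℤ)+1)+1) - T (2^(i+4) * (2*(r:ℤ)+1)))
        + B * T (2^(i+4) * (2*(r:ℤ)+1)-1)), ?_⟩
      rw [show (2:ℤ)^(i+4) * (2*((r+1 : ℕ):ℤ)+1) = 2^(i+4) * (2*(r:ℤ)+1) + 2^(i+5)
        from by push_cast; ring]
      rw [hl, hs]; ring
  -- core claim B : ν(T(2^j·odd - 1)) = j+1 for j ≥ 5
  have coreB : ∀ (i r : ℕ), ∃ s : ℤ, T (2^(i+5) * (2*(r:ℤ)+1) - 1) = 2^(i+6) * (2*s+1) := by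
    intro i r
    induction r with
    | zero =>
      obtain ⟨A, B, U, _, e1, _, _, hB⟩ := pk i
      refine ⟨(B-4)/8, ?_⟩
      rw [show (2:ℤ)^(i+5) * (2*((0:ℕ):ℤ)+1) - 1 = 2^(i+5) - 1 from by push_cast; ring, e1]
      have hb : B = 8*((B-4)/8) + 4 := by omega
      linear_combination (2:ℤ)^(i+4) * hb
    | succ r ih =>
      obtain ⟨s, hs⟩ := ih
      set n0 : ℤ := 2^(i+5) * (2*(r:ℤ)+1) - 1 with hn0
      obtain ⟨A, B, U, hA, hB, hl⟩ := lift (i+1) n0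
      obtain ⟨a, ha⟩ := coreA (i+1) r
      have ha' : T (n0 + 1) = 2^(i+4) * (2*a+1) := by
        rw [show n0 + 1 = 2^(i+1+4) * (2*(r:ℤ)+1) from by rw [hn0]; ring, ha]
        all_goals ring
      have hb : B = 8*((B-4)/8) + 4 := by omega
      refine ⟨s + (2^(i+4)*U*(2*s+1) + 2^(i+2)*A*((2*a+1) - 4*(2*s+1))
        + (2*((B-4)/8)+1) * T (n0 - 1)), ?_⟩
      rw [show (2:ℤ)^(i+5) * (2*((r+1 : ℕ):ℤ)+1) - 1 = n0 + 2^(i+1+5)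
        from by rw [hn0]; push_cast; ring]
      rw [hl, hs, ha']
      linear_combination (2^(i+1+4) * T (n0 - 1)) * hb
  -- decomposition of an integer into 2-power times odd
  have decomp : ∀ (x : ℤ) (c : ℕ), 1 ≤ x → (2:ℤ)^c ∣ x →
      ∃ (i r : ℕ), x = 2^(c+i) * (2*(r:ℤ)+1) := by
    intro x c hx hdvd
    obtain ⟨k, m, hm, hkm⟩ := Nat.exists_eq_pow_mul_and_not_dvd
      (n := x.toNat) (by omega) 2 (by norm_num)
    have hxt : x = ((2^k * m : ℕ) : ℤ) := by
      rw [← hkm]; omega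
    have hN : (2:ℕ)^c ∣ 2^k * m := by
      have h2 := hdvd; rw [hxt] at h2; exact_mod_cast h2
    have hcop : Nat.Coprime 2 m := (Nat.prime_two.coprime_iff_not_dvd).mpr hm
    have hdk : (2:ℕ)^c ∣ 2^k := (Nat.Coprime.pow_left c hcop).dvd_of_dvd_mul_right hN
    have hck : c ≤ k := by
      by_contra hlt
      have h1 : (2:ℕ)^c ≤ 2^k := Nat.le_of_dvd (Nat.two_pow_pos k) hdk
      have h2 : (2:ℕ)^k < 2^c := Nat.pow_lt_pow_right (by norm_num) (by omega)
      omega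
    refine ⟨k - c, m / 2, ?_⟩
    have hmeq : (m:ℤ) = 2*((m/2 : ℕ):ℤ)+1 := by omega
    have hke : c + (k - c) = k := by omega
    rw [hxt, hke]
    have hcast : ((2^k * m : ℕ) : ℤ) = 2^k * (m:ℤ) := by push_cast; ring
    rw [hcast, hmeq]
  -- periodicity of T mod 16 with period 32
  have per : ∀ m : ℤ, (T (m + 32) - T m) % 16 = 0 := by
    intro m
    have h := addf' 32 m
    rw [show (32:ℤ)+1 = 33 from by norm_num, show (32:ℤ)-1 = 31 from by norm_num,
      v33, v32, v31] at h
    rw [show m + 32 = 32 + m from by ring, h]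
    omega
  have tmodc : ∀ n : ℤ, (T n - T (n % 32)) % 16 = 0 := by
    have key : ∀ q : ℤ, ∀ c : ℤ, (T (c + 32 * q) - T c) % 16 = 0 := by
      intro q
      induction q using Int.induction_on with
      | zero => intro c; norm_num
      | succ i ih =>
        intro c
        have h1 := per (c + 32 * (i:ℤ))
        have h2 := ih c
        rw [show c + 32*((i:ℤ)+1) = c + 32*(i:ℤ) + 32 from by ring]
        omega
      | pred i ih =>
        intro c
        have h1 := per (c + 32 * (-(i:ℤ)-1))
        have h2 := ih c
        rw [show c + 32*(-(i:ℤ)-1) + 32 = c + 32*(-(i:ℤ)) from by ring] at h1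
        omega
    intro n
    have h := key (n / 32) (n % 32)
    rw [show n % 32 + 32 * (n / 32) = n from Int.emod_add_mul_ediv n 32] at h
    exact h
  intro n hn
  obtain ⟨c, hceq, hc0, hc1⟩ : ∃ c, n % 32 = c ∧ 0 ≤ c ∧ c < 32 :=
    ⟨n % 32, rfl, Int.emod_nonneg n (by norm_num), Int.emod_lt_of_pos n (by norm_num)⟩
  have ht := tmodc n
  rw [hceq] at ht
  refine ⟨?_, ?_, ?_, ?_, ?_, ?_, ?_, ?_⟩
  · -- n ≡ 1, 2 mod 4
    intro hc
    have hc4 : c % 4 = 1 ∨ c % 4 = 2 := by omega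
    interval_cases c <;>
      first
      | (exfalso; omega)
      | (apply val2' (T n) 0 ((T n - 1)/2)
         simp only [hT1, hT2, v5, v6, v9, v10, v13, v14, v17, v18, v21, v22, v25, v26,
           v29, v30] at ht
         norm_num
         omega)
  · -- n ≡ 3, 11 mod 16
    intro hc
    have hc4 : c % 16 = 3 ∨ c % 16 = 11 := by omega
    interval_cases c <;>
      first
      | (exfalso; omega)
      | (apply val2' (T n) 1 ((T n - 2)/4)
         simp only [v3, v11, v19, v27] at ht
         norm_num
         omega)
  · -- n ≡ 4, 8 mod 16
    intro hc
    have hc4 : c % 16 = 4 ∨ c % 16 = 8 := by omega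
    interval_cases c <;>
      first
      | (exfalso; omega)
      | (apply val2' (T n) 2 ((T n - 4)/8)
         simp only [v4, v8, v20, v24] at ht
         norm_num
         omega)
  · -- n ≡ 7 mod 16
    intro hc
    have hc4 : c % 16 = 7 := by omega
    interval_cases c <;>
      first
      | (exfalso; omega)
      | (apply val2' (T n) 3 ((T n - 8)/16)
         simp only [v7, v23] at ht
         norm_num
         omega)
  · -- n ≡ 0 mod 16
    intro hc
    obtain ⟨i, r, hir⟩ := decomp n 4 hn (by rw [show ((2:ℤ)^4) = 16 from by norm_num]; omega)
    have hir' : n = 2^(i+4) * (2*(r:ℤ)+1) := by rw [hir]; ring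
    obtain ⟨s, hs⟩ := coreA i r
    rw [← hir'] at hs
    rw [val2' (T n) (i+3) s hs, val2' n (i+4) (r:ℤ) hir']
    all_goals omega
  · -- n ≡ 12 mod 16
    intro hc
    obtain ⟨i, r, hir⟩ := decomp (n+4) 4 (by omega)
      (by rw [show ((2:ℤ)^4) = 16 from by norm_num]; omega)
    have hir' : n + 4 = 2^(i+4) * (2*(r:ℤ)+1) := by rw [hir]; ring
    obtain ⟨a, ha⟩ := coreA i r
    rw [← hir'] at ha
    obtain ⟨cc, hcc⟩ : ∃ cc : ℤ, T (n+3) = 2^(i+5) * cc := by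
      cases i with
      | zero =>
        obtain ⟨e, m', hm', hem⟩ := Nat.exists_eq_pow_mul_and_not_dvd
          (n := r+1) (by omega) 2 (by norm_num)
        have hkey : n + 20 = 2^(e+5) * (2*((m'/2 : ℕ):ℤ)+1) := by
          have h1 : n + 4 = 2^(0+4) * (2*(r:ℤ)+1) := hir'
          have h2 : ((r:ℤ)+1) = 2^e * ((m':ℕ):ℤ) := by exact_mod_cast congrArg (Nat.cast : ℕ → ℤ) hem
          have h3 : ((m':ℕ):ℤ) = 2*((m'/2 : ℕ):ℤ)+1 := by omega
          rw [h3] at h2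
          norm_num at h1
          rw [show ((2:ℤ)^(e+5)) = 32 * 2^e from by ring]
          linear_combination h1 + 32 * h2
        obtain ⟨a2, ha2⟩ := coreA (e+1) (m'/2)
        have ha2' : T (n + 20) = 2^(e+4) * (2*a2+1) := by
          rw [show n + 20 = 2^(e+1+4) * (2*((m'/2 : ℕ):ℤ)+1) from by rw [hkey], ha2]
          all_goals ring
        obtain ⟨b2, hb2⟩ := coreB e (m'/2)
        have hb2' : T (n + 19) = 2^(e+6) * (2*b2+1) := by
          rw [show n + 19 = 2^(e+5) * (2*((m'/2 : ℕ):ℤ)+1) - 1 from by rw [← hkey]; ring, hb2]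
        refine ⟨2^(e+2)*7*(2*a2+1) - 103*2^(e+1)*(2*b2+1), ?_⟩
        have hi := Iz17 (n + 20)
        rw [show n + 20 - 17 = n + 3 from by ring, show n + 20 - 1 = n + 19 from by ring,
          ha2', hb2'] at hi
        rw [hi]; ring
      | succ i' =>
        obtain ⟨b, hb⟩ := coreB i' r
        refine ⟨2*b+1, ?_⟩
        rw [show n + 3 = 2^(i'+5) * (2*(r:ℤ)+1) - 1 from by linarith [hir'], hb]
        all_goals ring
    have hTn : T n = 2^(i+3) * (2*(4*cc - a - 1)+1) := by
      have hi := Iz4 (n + 4)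
      rw [show n + 4 - 4 = n from by ring, show n + 4 - 1 = n + 3 from by ring,
        ha, hcc] at hi
      rw [hi]; ring
    rw [val2' (T n) (i+3) (4*cc - a - 1) hTn, val2' (n+4) (i+4) (r:ℤ) hir']
    all_goals omega
  · -- n ≡ 15 mod 32
    intro hc
    obtain ⟨i, r, hir⟩ := decomp (n+17) 5 (by omega)
      (by rw [show ((2:ℤ)^5) = 32 from by norm_num]; omega)
    have hir' : n + 17 = 2^(i+5) * (2*(r:ℤ)+1) := by rw [hir]; ring
    obtain ⟨a, ha⟩ := coreA (i+1) r
    have ha' : T (n+17) = 2^(i+4) * (2*a+1) := by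
      rw [show n + 17 = 2^(i+1+4) * (2*(r:ℤ)+1) from by rw [hir'], ha]
      all_goals ring
    obtain ⟨b, hb⟩ := coreB i r
    have hb' : T (n+16) = 2^(i+6) * (2*b+1) := by
      rw [show n + 16 = 2^(i+5) * (2*(r:ℤ)+1) - 1 from by linarith [hir'], hb]
    have hTn : T n = 2^(i+6) * (2*(14*a - 103*b - 45)+1) := by
      have hi := Iz17 (n + 17)
      rw [show n + 17 - 17 = n from by ring, show n + 17 - 1 = n + 16 from by ring,
        ha', hb'] at hi
      rw [hi]; ring
    rw [val2' (T n) (i+6) (14*a - 103*b - 45) hTn, val2' (n+17) (i+5) (r:ℤ) hir']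
    all_goals omega
  · -- n ≡ 31 mod 32
    intro hc
    obtain ⟨i, r, hir⟩ := decomp (n+1) 5 (by omega)
      (by rw [show ((2:ℤ)^5) = 32 from by norm_num]; omega)
    have hir' : n + 1 = 2^(i+5) * (2*(r:ℤ)+1) := by rw [hir]; ring
    obtain ⟨b, hb⟩ := coreB i r
    have hb' : T n = 2^(i+6) * (2*b+1) := by
      rw [show n = 2^(i+5) * (2*(r:ℤ)+1) - 1 from by linarith [hir'], hb]
    rw [val2' (T n) (i+6) b hb', val2' (n+1) (i+5) (r:ℤ) hir']
    all_goals omega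
end

section
/- For every integer n ≥ 1 the 3-adic valuation of the Tribonacci number T(n) is given by: ν₃(T(n)) = 0 if n ≡ 1, 2, 3, 4, 5, 6, 8, 10, 11 (mod 13); ν₃(T(n)) = 1 if n ≡ 7 (mod 13); ν₃(T(n)) = ν₃(n) + 2 if n ≡ 0 (mod 13); ν₃(T(n)) = ν₃(n+1) + 2 if n ≡ 12 (mod 13); ν₃(T(n)) = 4 if n ≡ 9 (mod 39); ν₃(T(n)) = ν₃(n+17) + 4 if n ≡ 22 (mod 39); ν₃(T(n)) = ν₃(n+4) + 4 if n ≡ 35 (mod 39). -/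
open Matrix Finset

/-! Auxiliary machinery for the 3-adic valuation of Tribonacci numbers. -/

private lemma tribPadicEq (S : ℤ) (k : ℕ) (h1 : (3:ℤ)^k ∣ S) (h2 : ¬ (3:ℤ)^(k+1) ∣ S) :
    padicValInt 3 S = k := by
  haveI : Fact (Nat.Prime 3) := ⟨by norm_num⟩
  have hS : S ≠ 0 := by rintro rfl; exact h2 (dvd_zero _)
  have a1 := (padicValInt_dvd_iff (p := 3) k S).mp (by exact_mod_cast h1)
  have a2 := (padicValInt_dvd_iff (p := 3) (k+1) S).not.mp (by exact_mod_cast h2)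
  push_neg at a2
  omega

private lemma tribPow3Gt : ∀ i : ℕ, 4 ≤ i → i < 3^(i-2) := by
  intro i hi
  induction i, hi using Nat.le_induction with
  | base => norm_num
  | succ n hn ih =>
    have h2 : n + 1 - 2 = (n-2) + 1 := by omega
    rw [h2, pow_succ]
    have : n - 2 ≥ 2 := by omega
    omega

private lemma tribChooseDvd (a b j m i : ℕ) (hi1 : 1 ≤ i) (him : i ≤ m)
    (ha : 3^a ∣ m) (hib : i = 3^b * j) (hj : ¬ 3 ∣ j) :
    3^(a-b) ∣ m.choose i := by
  rcases le_or_gt a b with h | h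
  · simp [Nat.sub_eq_zero_of_le h]
  have hm1 : 1 ≤ m := le_trans hi1 him
  have key : m * Nat.choose (m-1) (i-1) = Nat.choose m i * i := by
    have := Nat.add_one_mul_choose_eq (m-1) (i-1)
    have e1 : m-1+1 = m := by omega
    have e2 : i-1+1 = i := by omega
    rwa [e1, e2] at this
  have hd : 3^a ∣ Nat.choose m i * i := key ▸ Dvd.dvd.mul_right ha _
  have hd2 : 3^b * 3^(a-b) ∣ 3^b * (Nat.choose m i * j) := by
    rw [← pow_add, Nat.add_sub_cancel' (le_of_lt h)]
    calc 3^a ∣ Nat.choose m i * i := hd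
    _ = 3^b * (Nat.choose m i * j) := by rw [hib]; ring
  have hd3 : 3^(a-b) ∣ Nat.choose m i * j := by
    have h3 : 0 < 3^b := Nat.pow_pos (by norm_num)
    exact (Nat.mul_dvd_mul_iff_left h3).mp hd2
  exact Nat.Coprime.dvd_of_dvd_mul_right
    (Nat.Coprime.pow_left _ ((Nat.prime_three.coprime_iff_not_dvd).mpr hj)) hd3

private lemma tribKey (t v a m : ℕ) (hm : 1 ≤ m) (e : ℕ → ℤ) (u : ℤ)
    (ha1 : 3^a ∣ m) (ha2 : ¬ 3^(a+1) ∣ m)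
    (he0 : e 0 = 0) (he1 : e 1 = 3^v * u) (hu : ¬ (3:ℤ) ∣ u)
    (he2 : (3:ℤ)^(v+1-t) ∣ e 2) (he3 : (3:ℤ)^(v+2-2*t) ∣ e 3)
    (ht2 : v+1-t + 2*t = t+v+1) (ht3 : (v+2-2*t) + 3*t = t+v+2)
    (hiv : ∀ i : ℕ, 4 ≤ i → t+v+1+(i-3) ≤ t*i) :
    padicValInt 3 (∑ i ∈ Finset.range (m+1), (m.choose i : ℤ) * (3:ℤ)^(t*i) * e i)
      = a + t + v := by
  set S := ∑ i ∈ Finset.range (m+1), (m.choose i : ℤ) * (3:ℤ)^(t*i) * e i with hSdef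
  set R := ∑ i ∈ Finset.Ico 2 (m+1), (m.choose i : ℤ) * (3:ℤ)^(t*i) * e i with hRdef
  have hsplit : Finset.range (m+1) = insert 0 (insert 1 (Finset.Ico 2 (m+1))) := by
    ext x; simp [Finset.mem_Ico, Finset.mem_range]; omega
  have hS : S = 3^(t+v) * ((m:ℤ) * u) + R := by
    rw [hSdef, hsplit, Finset.sum_insert (by simp), Finset.sum_insert (by simp)]
    rw [he0, he1]
    simp [Nat.choose_one_right]
    ring
  have hR : (3:ℤ)^(a+t+v+1) ∣ R := by
    apply Finset.dvd_sum
    intro i hi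
    rw [Finset.mem_Ico] at hi
    obtain ⟨hi2, him⟩ := hi
    have him' : i ≤ m := by omega
    rcases eq_or_ne i 2 with rfl | hne2
    · have hc : (3:ℤ)^a ∣ (Nat.choose m 2 : ℤ) := by
        exact_mod_cast Int.natCast_dvd_natCast.mpr
          (tribChooseDvd a 0 2 m 2 (by norm_num) him' ha1 (by norm_num) (by norm_num))
      calc (3:ℤ)^(a+t+v+1) = 3^a * 3^(2*t) * 3^(v+1-t) := by
            rw [← pow_add, ← pow_add]; congr 1; omega
      _ ∣ (Nat.choose m 2 : ℤ) * 3^(t*2) * e 2 := by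
            apply mul_dvd_mul (mul_dvd_mul hc _) he2
            rw [show t*2 = 2*t by ring]
    rcases eq_or_ne i 3 with rfl | hne3
    · have hc : (3:ℤ)^(a-1) ∣ (Nat.choose m 3 : ℤ) := by
        exact_mod_cast Int.natCast_dvd_natCast.mpr
          (tribChooseDvd a 1 1 m 3 (by norm_num) him' ha1 (by norm_num) (by norm_num))
      have hle : a+t+v+1 ≤ (a-1) + 3*t + (v+2-2*t) := by omega
      calc (3:ℤ)^(a+t+v+1) ∣ (3:ℤ)^((a-1) + 3*t + (v+2-2*t)) := pow_dvd_pow _ hle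
      _ = 3^(a-1) * 3^(3*t) * 3^(v+2-2*t) := by rw [← pow_add, ← pow_add]
      _ ∣ (Nat.choose m 3 : ℤ) * 3^(t*3) * e 3 := by
            apply mul_dvd_mul (mul_dvd_mul hc _) he3
            rw [show t*3 = 3*t by ring]
    have hi4 : 4 ≤ i := by omega
    set b := padicValNat 3 i with hbdef
    have hi0 : i ≠ 0 := by omega
    have hib : i = 3^b * (i / 3^b) := (Nat.ordProj_mul_ordCompl_eq_self i 3).symm
    have hj : ¬ 3 ∣ (i / 3^b) := Nat.not_dvd_ordCompl Nat.prime_three hi0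
    have hble : 3^b ≤ i := Nat.le_of_dvd (by omega) (Nat.ordProj_dvd i 3)
    have hb3 : b + 3 ≤ i := by
      by_contra hcon
      push_neg at hcon
      have hb2 : i - 2 ≤ b := by omega
      have := tribPow3Gt i hi4
      have h2 : (3:ℕ)^(i-2) ≤ 3^b := Nat.pow_le_pow_right (by norm_num) hb2
      omega
    have hc : (3:ℤ)^(a-b) ∣ (Nat.choose m i : ℤ) := by
      exact_mod_cast Int.natCast_dvd_natCast.mpr
        (tribChooseDvd a b (i / 3^b) m i (by omega) him' ha1 hib hj)
    have hle : a+t+v+1 ≤ (a-b) + t*i := by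
      have := hiv i hi4
      omega
    calc (3:ℤ)^(a+t+v+1) ∣ (3:ℤ)^((a-b) + t*i) := pow_dvd_pow _ hle
    _ = 3^(a-b) * 3^(t*i) := by rw [← pow_add]
    _ ∣ (Nat.choose m i : ℤ) * 3^(t*i) := mul_dvd_mul hc dvd_rfl
    _ ∣ (Nat.choose m i : ℤ) * 3^(t*i) * e i := Dvd.dvd.mul_right dvd_rfl _
  have h1 : (3:ℤ)^(a+t+v) ∣ S := by
    rw [hS]
    apply dvd_add
    · calc (3:ℤ)^(a+t+v) = 3^(t+v) * 3^a := by rw [← pow_add]; congr 1; omega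
      _ ∣ 3^(t+v) * ((m:ℤ) * u) := by
          apply mul_dvd_mul_left
          exact Dvd.dvd.mul_right (by exact_mod_cast Int.natCast_dvd_natCast.mpr ha1) u
    · exact dvd_trans (pow_dvd_pow _ (by omega)) hR
  have h2 : ¬ (3:ℤ)^(a+t+v+1) ∣ S := by
    intro hdvd
    have hM : (3:ℤ)^(a+t+v+1) ∣ 3^(t+v) * ((m:ℤ) * u) := by
      have := dvd_sub hdvd hR
      rwa [hS, add_sub_cancel_right] at this
    have hM2 : (3:ℤ)^(a+1) ∣ (m:ℤ) * u := by
      have h3 : (3:ℤ)^(t+v) ≠ 0 := by positivity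
      rw [show a+t+v+1 = (t+v) + (a+1) by omega, pow_add] at hM
      exact (mul_dvd_mul_iff_left h3).mp hM
    have hM3 : (3:ℤ)^(a+1) ∣ (m:ℤ) := Int.prime_three.pow_dvd_of_dvd_mul_right _ hu hM2
    have : (3:ℕ)^(a+1) ∣ m := by exact_mod_cast hM3
    exact ha2 this
  exact tribPadicEq S (a+t+v) h1 h2

private lemma tribKey2 (t w m : ℕ) (e : ℕ → ℤ) (u : ℤ)
    (he0 : e 0 = 3^w * u) (hu : ¬ (3:ℤ) ∣ u)
    (h : ∀ i : ℕ, 1 ≤ i → i ≤ m → (3:ℤ)^(w+1) ∣ (3:ℤ)^(t*i) * e i) :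
    padicValInt 3 (∑ i ∈ Finset.range (m+1), (m.choose i : ℤ) * (3:ℤ)^(t*i) * e i)
      = w := by
  set S := ∑ i ∈ Finset.range (m+1), (m.choose i : ℤ) * (3:ℤ)^(t*i) * e i with hSdef
  set R := ∑ i ∈ Finset.Ico 1 (m+1), (m.choose i : ℤ) * (3:ℤ)^(t*i) * e i with hRdef
  have hsplit : Finset.range (m+1) = insert 0 (Finset.Ico 1 (m+1)) := by
    ext x; simp [Finset.mem_Ico, Finset.mem_range]; omega
  have hS : S = 3^w * u + R := by
    rw [hSdef, hsplit, Finset.sum_insert (by simp), he0]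
    simp; rfl
  have hR : (3:ℤ)^(w+1) ∣ R := by
    apply Finset.dvd_sum
    intro i hi
    rw [Finset.mem_Ico] at hi
    have hd := h i hi.1 (by omega)
    calc (3:ℤ)^(w+1) ∣ (3:ℤ)^(t*i) * e i := hd
    _ ∣ (Nat.choose m i : ℤ) * 3^(t*i) * e i := by
        rw [mul_assoc]; exact Dvd.dvd.mul_left dvd_rfl _
  have h1 : (3:ℤ)^w ∣ S := by
    rw [hS]
    exact dvd_add (Dvd.dvd.mul_right dvd_rfl u) (dvd_trans (pow_dvd_pow _ (by omega)) hR)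
  have h2 : ¬ (3:ℤ)^(w+1) ∣ S := by
    intro hdvd
    have hM : (3:ℤ)^(w+1) ∣ 3^w * u := by
      have := dvd_sub hdvd hR
      rwa [hS, add_sub_cancel_right] at this
    have hM2 : (3:ℤ) ∣ u := by
      have h3 : (3:ℤ)^w ≠ 0 := by positivity
      rw [pow_succ] at hM
      have : (3:ℤ)^w * 3 ∣ 3^w * u := hM
      have h4 := (mul_dvd_mul_iff_left h3).mp this
      exact h4
    exact hu hM2
  exact tribPadicEq S w h1 h2

/-! Matrix computations. -/

private abbrev TribMat := Matrix (Fin 3) (Fin 3) ℤ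

private def Amat : TribMat := !![1,1,1;1,0,0;0,1,0]
private def Aimat : TribMat := !![0,1,0;0,0,1;1,-1,-1]
private def Bmat : TribMat := !![568, 477, 309; 309, 259, 168; 168, 141, 91]
private def Dmat : TribMat :=
  !![1440022435, 1208591757, 782924376;
     782924376, 657098059, 425667381;
     425667381, 357256995, 231430678]

private lemma tribMat3Ext {a b c d e f g h i a' b' c' d' e' f' g' h' i' : ℤ}
    (ha : a = a') (hb : b = b') (hc : c = c') (hd : d = d') (he : e = e')
    (hf : f = f') (hg : g = g') (hh : h = h') (hi : i = i') :
    !![a,b,c;d,e,f;g,h,i] = !![a',b',c';d',e',f';g',h',i'] := by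
  rw [ha,hb,hc,hd,he,hf,hg,hh,hi]

private lemma hA2 : Amat^2 = !![2, 2, 1; 1, 1, 1; 1, 0, 0] := by
  rw [pow_two, Amat]; norm_num [Matrix.mul_fin_three]
private lemma hA3 : Amat^3 = !![4, 3, 2; 2, 2, 1; 1, 1, 1] := by
  rw [pow_succ, hA2, Amat]; norm_num [Matrix.mul_fin_three]
private lemma hA4 : Amat^4 = !![7, 6, 4; 4, 3, 2; 2, 2, 1] := by
  rw [pow_succ, hA3, Amat]; norm_num [Matrix.mul_fin_three]
private lemma hA5 : Amat^5 = !![13, 11, 7; 7, 6, 4; 4, 3, 2] := by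
  rw [pow_succ, hA4, Amat]; norm_num [Matrix.mul_fin_three]
private lemma hA6 : Amat^6 = !![24, 20, 13; 13, 11, 7; 7, 6, 4] := by
  rw [pow_succ, hA5, Amat]; norm_num [Matrix.mul_fin_three]
private lemma hA7 : Amat^7 = !![44, 37, 24; 24, 20, 13; 13, 11, 7] := by
  rw [pow_succ, hA6, Amat]; norm_num [Matrix.mul_fin_three]
private lemma hA8 : Amat^8 = !![81, 68, 44; 44, 37, 24; 24, 20, 13] := by
  rw [pow_succ, hA7, Amat]; norm_num [Matrix.mul_fin_three]
private lemma hA9 : Amat^9 = !![149, 125, 81; 81, 68, 44; 44, 37, 24] := by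
  rw [pow_succ, hA8, Amat]; norm_num [Matrix.mul_fin_three]
private lemma hA10 : Amat^10 = !![274, 230, 149; 149, 125, 81; 81, 68, 44] := by
  rw [pow_succ, hA9, Amat]; norm_num [Matrix.mul_fin_three]
private lemma hA11 : Amat^11 = !![504, 423, 274; 274, 230, 149; 149, 125, 81] := by
  rw [pow_succ, hA10, Amat]; norm_num [Matrix.mul_fin_three]
private lemma hA13 : Amat^13 = !![1705, 1431, 927; 927, 778, 504; 504, 423, 274] := by
  rw [show (13:ℕ) = 11 + 2 from rfl, pow_add, hA11, hA2]
  norm_num [Matrix.mul_fin_three]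
private lemma hA26 : Amat^26 =
    !![4700770, 3945294, 2555757; 2555757, 2145013, 1389537; 1389537, 1166220, 755476] := by
  rw [show (26:ℕ) = 13 + 13 from rfl, pow_add, hA13]
  norm_num [Matrix.mul_fin_three]
private lemma hA39 : Amat^39 =
    !![12960201916, 10877325813, 7046319384;
       7046319384, 5913882532, 3831006429;
       3831006429, 3215312955, 2082876103] := by
  rw [show (39:ℕ) = 26 + 13 from rfl, pow_add, hA26, hA13]
  norm_num [Matrix.mul_fin_three]

private lemma hA13B : Amat^13 = 1 + (3:ℤ)^1 • Bmat := by
  rw [hA13, Bmat, Matrix.one_fin_three]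
  norm_num [Matrix.smul_of, Matrix.smul_cons, Matrix.add_cons, Matrix.head_cons]

private lemma hA39D : Amat^39 = 1 + (3:ℤ)^2 • Dmat := by
  rw [hA39, Dmat, Matrix.one_fin_three]
  norm_num [Matrix.smul_of, Matrix.smul_cons, Matrix.add_cons, Matrix.head_cons]

private lemma hB2 : Bmat^2 =
    !![521929, 438048, 283767; 283767, 238162, 154281; 154281, 129486, 83881] := by
  rw [pow_two, Bmat]; norm_num [Matrix.mul_fin_three]
private lemma hB3 : Bmat^3 =
    !![479485360, 402425712, 260690922;
       260690922, 218794438, 141734790;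
       141734790, 118956132, 77059648] := by
  rw [pow_succ, hB2, Bmat]; norm_num [Matrix.mul_fin_three]

private lemma hD2 : Dmat^2 =
    !![3353165929144277113, 2814267752366178078, 1823079473409160905;
       1823079473409160905, 1530086455735116208, 991188278957017173;
       991188278957017173, 831891194452143732, 538898176778099035] := by
  rw [pow_two, Dmat]; norm_num [Matrix.mul_fin_three]
private lemma hD3 : Dmat^3 =
    !![7808018454964528553638999288, 6553166473719466885189488618, 4245133844861176027763723796;
       4245133844861176027763723796, 3562884610103352525875275492, 2308032628858290857425764822;
       2308032628858290857425764822, 1937101216002885170337958974, 1254851981245061668449510670] := by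
  rw [pow_succ, hD2, Dmat]; norm_num [Matrix.mul_fin_three]

private lemma hAiUnit : Amat * Aimat = 1 := by
  rw [Amat, Aimat, Matrix.mul_fin_three, Matrix.one_fin_three]
  norm_num

private lemma hAAi : ∀ k : ℕ, Amat^k * Aimat^k = 1 := by
  intro k
  induction k with
  | zero => simp
  | succ n ih =>
    rw [pow_succ, pow_succ', mul_assoc, ← mul_assoc Amat Aimat (Aimat^n), hAiUnit, one_mul, ih]

private lemma hAi2 : Aimat^2 = !![0, 0, 1; 1, -1, -1; -1, 2, 0] := by
  rw [pow_two, Aimat]; norm_num [Matrix.mul_fin_three]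
private lemma hAi4 : Aimat^4 = !![-1, 2, 0; 0, -1, 2; 2, -2, -3] := by
  rw [show (4:ℕ) = 2 + 2 from rfl, pow_add, hAi2]; norm_num [Matrix.mul_fin_three]
private lemma hAi8 : Aimat^8 = !![1, -4, 4; 4, -3, -8; -8, 12, 5] := by
  rw [show (8:ℕ) = 4 + 4 from rfl, pow_add, hAi4]; norm_num [Matrix.mul_fin_three]
private lemma hAi16 : Aimat^16 = !![-47, 56, 56; 56, -103, 0; 0, 56, -103] := by
  rw [show (16:ℕ) = 8 + 8 from rfl, pow_add, hAi8]; norm_num [Matrix.mul_fin_three]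
private lemma hAi17 : Aimat^17 = !![56, -103, 0; 0, 56, -103; -103, 103, 159] := by
  rw [pow_succ, hAi16, Aimat]; norm_num [Matrix.mul_fin_three]

private lemma tribEntrySum (X M : TribMat) (t m : ℕ) (p q : Fin 3) :
    (((1 + (3:ℤ)^t • X))^m * M) p q
      = ∑ i ∈ Finset.range (m+1), ((m.choose i : ℤ) * (3:ℤ)^(t*i) * ((X^i * M) p q)) := by
  have hc : Commute ((3:ℤ)^t • X) (1 : TribMat) := Commute.one_right _
  rw [add_comm, hc.add_pow, Finset.sum_mul, Matrix.sum_apply]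
  apply Finset.sum_congr rfl
  intro i hi
  rw [smul_pow, one_pow, mul_one, ← (Nat.cast_commute (m.choose i) (((3:ℤ)^t)^i • X^i)).eq,
    ← nsmul_eq_mul, smul_mul_assoc, smul_mul_assoc, Matrix.smul_apply, Matrix.smul_apply,
    nsmul_eq_mul, ← pow_mul, smul_eq_mul]
  ring

private lemma tribTA (s : ℕ → ℤ) (hs : ∀ k, s (k+3) = s (k+2) + s (k+1) + s k)
    (h0 : s 0 = 0) (h1 : s 1 = 1) (h2 : s 2 = 1) :
    ∀ N : ℕ, Amat^(N+3) = !![s (N+4), s (N+3) + s (N+2), s (N+3);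
                             s (N+3), s (N+2) + s (N+1), s (N+2);
                             s (N+2), s (N+1) + s N, s (N+1)] := by
  intro N
  induction N with
  | zero =>
    have hs3 : s 3 = 2 := by rw [hs 0, h0, h1, h2]; norm_num
    have hs4 : s 4 = 4 := by rw [hs 1, hs3, h1, h2]; norm_num
    rw [hA3]
    apply tribMat3Ext <;> simp [hs3, hs4, h0, h1, h2]
  | succ n ih =>
    have e1 : n + 1 + 3 = (n + 3) + 1 := rfl
    rw [e1, pow_succ, ih]
    rw [show Amat = !![1,1,1;1,0,0;0,1,0] from rfl]
    rw [Matrix.mul_fin_three]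
    have r1 : s (n+1+4) = s (n+4) + s (n+3) + s (n+2) := hs (n+2)
    have r2 : s (n+1+3) = s (n+4) := rfl
    have r3 : s (n+1+2) = s (n+3) := rfl
    have r4 : s (n+1+1) = s (n+2) := rfl
    have r5 : s (n+3+1) = s (n+4) := rfl
    apply tribMat3Ext <;> simp only [r1, r2, r3, r4, r5] <;>
      linarith [(show s (n+4) = s (n+3) + s (n+2) + s (n+1) from hs (n+1)),
        (show s (n+3) = s (n+2) + s (n+1) + s n from hs n)]

/-- **3-adic valuation of Tribonacci numbers.**
`T : ℤ → ℤ` is the Tribonacci sequence. For `n ≥ 1` the 3-adic valuation of `T n`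
is given by the stated case distinction. -/
theorem tribonacci_padicValInt_three
    (T : ℤ → ℤ)
    (hT0 : T 0 = 0) (hT1 : T 1 = 1) (hT2 : T 2 = 1)
    (hTrec : ∀ n : ℤ, T (n + 3) = T (n + 2) + T (n + 1) + T n) :
    ∀ n : ℤ, 1 ≤ n →
      ((n % 13 = 1 ∨ n % 13 = 2 ∨ n % 13 = 3 ∨ n % 13 = 4 ∨ n % 13 = 5 ∨ n % 13 = 6 ∨
        n % 13 = 8 ∨ n % 13 = 10 ∨ n % 13 = 11) → padicValInt 3 (T n) = 0) ∧
      (n % 13 = 7 → padicValInt 3 (T n) = 1) ∧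
      (n % 13 = 0 → padicValInt 3 (T n) = padicValInt 3 n + 2) ∧
      (n % 13 = 12 → padicValInt 3 (T n) = padicValInt 3 (n + 1) + 2) ∧
      (n % 39 = 9 → padicValInt 3 (T n) = 4) ∧
      (n % 39 = 22 → padicValInt 3 (T n) = padicValInt 3 (n + 17) + 4) ∧
      (n % 39 = 35 → padicValInt 3 (T n) = padicValInt 3 (n + 4) + 4) := by
  haveI : Fact (Nat.Prime 3) := ⟨by norm_num⟩
  intro n hn
  obtain ⟨N, rfl⟩ : ∃ N : ℕ, n = (N : ℤ) := ⟨n.toNat, (Int.toNat_of_nonneg (by omega)).symm⟩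
  have hN1 : 1 ≤ N := by exact_mod_cast hn
  set s : ℕ → ℤ := fun k => T (k : ℤ) with hsdef
  have hs : ∀ k : ℕ, s (k+3) = s (k+2) + s (k+1) + s k := by
    intro k
    simp only [hsdef]
    push_cast
    exact hTrec (k : ℤ)
  have h0 : s 0 = 0 := by simpa [hsdef] using hT0
  have h1 : s 1 = 1 := by simpa [hsdef] using hT1
  have h2 : s 2 = 1 := by simpa [hsdef] using hT2
  have hTA := tribTA s hs h0 h1 h2
  have hs02 : ∀ K : ℕ, (Amat^K) 0 2 = s K := by
    intro K
    rcases K with _ | (_ | (_ | K))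
    · simpa [Matrix.one_apply] using h0.symm
    · show (Amat^1) 0 2 = s 1
      rw [pow_one, h1, Amat]; norm_num [Matrix.cons_val_two]
    · show (Amat^2) 0 2 = s 2
      rw [hA2, h2]; norm_num [Matrix.cons_val_two]
    · show (Amat^(K+3)) 0 2 = s (K+3)
      rw [hTA K]; norm_num [Matrix.cons_val_two]
  have hs20 : ∀ K : ℕ, (Amat^(K+3)) 2 0 = s (K+2) := by
    intro K
    rw [hTA K]; norm_num [Matrix.cons_val_two]
  have hdecomp13 : ∀ m r : ℕ, s (13*m + r) =
      ∑ i ∈ Finset.range (m+1), (m.choose i : ℤ) * (3:ℤ)^(1*i) * ((Bmat^i * Amat^r) 0 2) := by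
    intro m r
    rw [← hs02 (13*m+r), pow_add, pow_mul, hA13B, tribEntrySum]
  have hdecomp39 : ∀ m r : ℕ, s (39*m + r) =
      ∑ i ∈ Finset.range (m+1), (m.choose i : ℤ) * (3:ℤ)^(2*i) * ((Dmat^i * Amat^r) 0 2) := by
    intro m r
    rw [← hs02 (39*m+r), pow_add, pow_mul, hA39D, tribEntrySum]
  have c1gen : ∀ (m r : ℕ) (u : ℤ), ((Amat^r) 0 2 = u) → ¬ (3:ℤ) ∣ u →
      padicValInt 3 (s (13*m + r)) = 0 := by
    intro m r u hAr hu
    rw [hdecomp13 m r]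
    refine tribKey2 1 0 m (fun i => (Bmat^i * Amat^r) 0 2) u ?_ hu ?_
    · show (Bmat^0 * Amat^r) 0 2 = 3^0 * u
      rw [pow_zero, one_mul, hAr, pow_zero, one_mul]
    · intro i hi _
      exact dvd_mul_of_dvd_left (pow_dvd_pow (3:ℤ) (by omega : 0+1 ≤ 1*i)) _
  refine ⟨?_, ?_, ?_, ?_, ?_, ?_, ?_⟩
  -- component 1 : valuation 0
  · intro hr
    rcases hr with h|h|h|h|h|h|h|h|h
    · obtain ⟨m, hm⟩ : ∃ m, N = 13*m + 1 := ⟨N/13, by omega⟩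
      rw [show ((N:ℤ)) = ((13*m+1 : ℕ) : ℤ) from by exact_mod_cast hm]
      exact c1gen m 1 1 (by rw [pow_one, Amat]; norm_num [Matrix.cons_val_two]) (by norm_num)
    · obtain ⟨m, hm⟩ : ∃ m, N = 13*m + 2 := ⟨N/13, by omega⟩
      rw [show ((N:ℤ)) = ((13*m+2 : ℕ) : ℤ) from by exact_mod_cast hm]
      exact c1gen m 2 1 (by rw [hA2]; norm_num [Matrix.cons_val_two]) (by norm_num)
    · obtain ⟨m, hm⟩ : ∃ m, N = 13*m + 3 := ⟨N/13, by omega⟩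
      rw [show ((N:ℤ)) = ((13*m+3 : ℕ) : ℤ) from by exact_mod_cast hm]
      exact c1gen m 3 2 (by rw [hA3]; norm_num [Matrix.cons_val_two]) (by norm_num)
    · obtain ⟨m, hm⟩ : ∃ m, N = 13*m + 4 := ⟨N/13, by omega⟩
      rw [show ((N:ℤ)) = ((13*m+4 : ℕ) : ℤ) from by exact_mod_cast hm]
      exact c1gen m 4 4 (by rw [hA4]; norm_num [Matrix.cons_val_two]) (by norm_num)
    · obtain ⟨m, hm⟩ : ∃ m, N = 13*m + 5 := ⟨N/13, by omega⟩
      rw [show ((N:ℤ)) = ((13*m+5 : ℕ) : ℤ) from by exact_mod_cast hm]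
      exact c1gen m 5 7 (by rw [hA5]; norm_num [Matrix.cons_val_two]) (by norm_num)
    · obtain ⟨m, hm⟩ : ∃ m, N = 13*m + 6 := ⟨N/13, by omega⟩
      rw [show ((N:ℤ)) = ((13*m+6 : ℕ) : ℤ) from by exact_mod_cast hm]
      exact c1gen m 6 13 (by rw [hA6]; norm_num [Matrix.cons_val_two]) (by norm_num)
    · obtain ⟨m, hm⟩ : ∃ m, N = 13*m + 8 := ⟨N/13, by omega⟩
      rw [show ((N:ℤ)) = ((13*m+8 : ℕ) : ℤ) from by exact_mod_cast hm]
      exact c1gen m 8 44 (by rw [hA8]; norm_num [Matrix.cons_val_two]) (by norm_num)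
    · obtain ⟨m, hm⟩ : ∃ m, N = 13*m + 10 := ⟨N/13, by omega⟩
      rw [show ((N:ℤ)) = ((13*m+10 : ℕ) : ℤ) from by exact_mod_cast hm]
      exact c1gen m 10 149 (by rw [hA10]; norm_num [Matrix.cons_val_two]) (by norm_num)
    · obtain ⟨m, hm⟩ : ∃ m, N = 13*m + 11 := ⟨N/13, by omega⟩
      rw [show ((N:ℤ)) = ((13*m+11 : ℕ) : ℤ) from by exact_mod_cast hm]
      exact c1gen m 11 274 (by rw [hA11]; norm_num [Matrix.cons_val_two]) (by norm_num)
  -- component 2 : n ≡ 7 mod 13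
  · intro hr
    obtain ⟨m, hm⟩ : ∃ m, N = 13*m + 7 := ⟨N/13, by omega⟩
    rw [show ((N:ℤ)) = ((13*m+7 : ℕ) : ℤ) from by exact_mod_cast hm]
    show padicValInt 3 (s (13*m+7)) = 1
    rw [hdecomp13 m 7]
    refine tribKey2 1 1 m (fun i => (Bmat^i * Amat^7) 0 2) 8 ?_ (by norm_num) ?_
    · show (Bmat^0 * Amat^7) 0 2 = 3^1 * 8
      rw [pow_zero, one_mul, hA7]; norm_num [Matrix.cons_val_two]
    · intro i hi1 him
      rcases Nat.lt_or_ge i 2 with hlt | hge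
      · have hi : i = 1 := by omega
        subst hi
        show (3:ℤ)^(1+1) ∣ 3^(1*1) * ((Bmat^1 * Amat^7) 0 2)
        simp only [pow_one]
        rw [hA7, Bmat, Matrix.mul_fin_three]
        norm_num [Matrix.cons_val_two]
      · exact dvd_mul_of_dvd_left (pow_dvd_pow (3:ℤ) (by omega : 1+1 ≤ 1*i)) _
  -- component 3 : n ≡ 0 mod 13
  · intro hr
    obtain ⟨m, hm⟩ : ∃ m, N = 13*m := ⟨N/13, by omega⟩
    have hm1 : 1 ≤ m := by omega
    set a := padicValNat 3 m with hadef
    have ha1 : 3^a ∣ m := pow_padicValNat_dvd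
    have ha2 : ¬ 3^(a+1) ∣ m := pow_succ_padicValNat_not_dvd (by omega)
    have key_eq : T ((N:ℤ)) = ∑ i ∈ Finset.range (m+1),
        (m.choose i : ℤ) * (3:ℤ)^(1*i) * ((Bmat^i * Amat^0) 0 2) := by
      rw [show ((N:ℤ)) = ((13*m : ℕ) : ℤ) from by exact_mod_cast hm]
      exact hdecomp13 m 0
    have hres := tribKey 1 1 a m hm1 (fun i => (Bmat^i * Amat^0) 0 2) 103 ha1 ha2
      (by show (Bmat^0 * Amat^0) 0 2 = 0
          simp only [pow_zero, mul_one]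
          exact Matrix.one_apply_ne (by decide))
      (by show (Bmat^1 * Amat^0) 0 2 = 3^1 * 103
          simp only [pow_one, pow_zero, mul_one]
          rw [Bmat]; norm_num [Matrix.cons_val_two])
      (by norm_num)
      (by show (3:ℤ)^(1+1-1) ∣ (Bmat^2 * Amat^0) 0 2
          rw [hB2, pow_zero, mul_one]; norm_num [Matrix.cons_val_two])
      (by show (3:ℤ)^(1+2-2*1) ∣ (Bmat^3 * Amat^0) 0 2
          rw [hB3, pow_zero, mul_one]; norm_num [Matrix.cons_val_two])
      (by norm_num) (by norm_num) (fun i hi => by omega)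
    have hrhs : padicValInt 3 ((N:ℤ)) = a := by
      rw [show ((N:ℤ)) = ((13*m : ℕ) : ℤ) from by exact_mod_cast hm]
      rw [padicValInt.of_nat, padicValNat.mul (by norm_num) (by omega),
        padicValNat.eq_zero_of_not_dvd (by norm_num)]
      omega
    rw [key_eq, hrhs]
    exact hres.trans (by omega)
  -- component 4 : n ≡ 12 mod 13
  · intro hr
    obtain ⟨m, hm⟩ : ∃ m, N + 1 = 13*m := ⟨(N+1)/13, by omega⟩
    have hm1 : 1 ≤ m := by omega
    set a := padicValNat 3 m with hadef
    have ha1 : 3^a ∣ m := pow_padicValNat_dvd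
    have ha2 : ¬ 3^(a+1) ∣ m := pow_succ_padicValNat_not_dvd (by omega)
    have key_eq : T ((N:ℤ)) = ∑ i ∈ Finset.range (m+1),
        (m.choose i : ℤ) * (3:ℤ)^(1*i) * ((Bmat^i * (1:TribMat)) 2 0) := by
      have hent : (Amat^(13*m)) 2 0 = s N := by
        have hh := hs20 (13*m - 3)
        have e1 : 13*m - 3 + 3 = 13*m := by omega
        have e2 : 13*m - 3 + 2 = N := by omega
        rw [e1, e2] at hh
        exact hh
      calc T ((N:ℤ)) = s N := rfl
      _ = (Amat^(13*m)) 2 0 := hent.symm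
      _ = (((1:TribMat) + (3:ℤ)^1 • Bmat)^m * 1) 2 0 := by rw [pow_mul, hA13B, mul_one]
      _ = _ := tribEntrySum Bmat 1 1 m 2 0
    have hres := tribKey 1 1 a m hm1 (fun i => (Bmat^i * (1:TribMat)) 2 0) 56 ha1 ha2
      (by show (Bmat^0 * (1:TribMat)) 2 0 = 0
          simp only [pow_zero, mul_one]
          exact Matrix.one_apply_ne (by decide))
      (by show (Bmat^1 * (1:TribMat)) 2 0 = 3^1 * 56
          simp only [pow_one, mul_one]
          rw [Bmat]; norm_num [Matrix.cons_val_two])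
      (by norm_num)
      (by show (3:ℤ)^(1+1-1) ∣ (Bmat^2 * (1:TribMat)) 2 0
          rw [hB2, mul_one]; norm_num [Matrix.cons_val_two])
      (by show (3:ℤ)^(1+2-2*1) ∣ (Bmat^3 * (1:TribMat)) 2 0
          rw [hB3, mul_one]; norm_num [Matrix.cons_val_two])
      (by norm_num) (by norm_num) (fun i hi => by omega)
    have hrhs : padicValInt 3 ((N:ℤ) + 1) = a := by
      rw [show ((N:ℤ) + 1) = ((13*m : ℕ) : ℤ) from by push_cast; omega]
      rw [padicValInt.of_nat, padicValNat.mul (by norm_num) (by omega),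
        padicValNat.eq_zero_of_not_dvd (by norm_num)]
      omega
    rw [key_eq, hrhs]
    exact hres.trans (by omega)
  -- component 5 : n ≡ 9 mod 39
  · intro hr
    obtain ⟨m, hm⟩ : ∃ m, N = 39*m + 9 := ⟨N/39, by omega⟩
    rw [show ((N:ℤ)) = ((39*m+9 : ℕ) : ℤ) from by exact_mod_cast hm]
    show padicValInt 3 (s (39*m+9)) = 4
    rw [hdecomp39 m 9]
    refine tribKey2 2 4 m (fun i => (Dmat^i * Amat^9) 0 2) 1 ?_ (by norm_num) ?_
    · show (Dmat^0 * Amat^9) 0 2 = 3^4 * 1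
      rw [pow_zero, one_mul, hA9]; norm_num [Matrix.cons_val_two]
    · intro i hi1 him
      rcases Nat.lt_or_ge i 3 with hlt | hge
      · interval_cases i
        · show (3:ℤ)^(4+1) ∣ 3^(2*1) * ((Dmat^1 * Amat^9) 0 2)
          rw [pow_one, hA9, Dmat, Matrix.mul_fin_three]
          norm_num [Matrix.cons_val_two]
        · show (3:ℤ)^(4+1) ∣ 3^(2*2) * ((Dmat^2 * Amat^9) 0 2)
          rw [hD2, hA9, Matrix.mul_fin_three]
          norm_num [Matrix.cons_val_two]
      · exact dvd_mul_of_dvd_left (pow_dvd_pow (3:ℤ) (by omega : 4+1 ≤ 2*i)) _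
  -- component 6 : n ≡ 22 mod 39
  · intro hr
    obtain ⟨m, hm⟩ : ∃ m, N + 17 = 39*m := ⟨(N+17)/39, by omega⟩
    have hm1 : 1 ≤ m := by omega
    set a := padicValNat 3 m with hadef
    have ha1 : 3^a ∣ m := pow_padicValNat_dvd
    have ha2 : ¬ 3^(a+1) ∣ m := pow_succ_padicValNat_not_dvd (by omega)
    have key_eq : T ((N:ℤ)) = ∑ i ∈ Finset.range (m+1),
        (m.choose i : ℤ) * (3:ℤ)^(2*i) * ((Dmat^i * Aimat^17) 0 2) := by
      have hshift : Amat^(N+17) * Aimat^17 = Amat^N := by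
        rw [pow_add, mul_assoc, hAAi 17, mul_one]
      calc T ((N:ℤ)) = s N := rfl
      _ = (Amat^N) 0 2 := (hs02 N).symm
      _ = (Amat^(N+17) * Aimat^17) 0 2 := by rw [hshift]
      _ = (((1:TribMat) + (3:ℤ)^2 • Dmat)^m * Aimat^17) 0 2 := by rw [hm, pow_mul, hA39D]
      _ = _ := tribEntrySum Dmat (Aimat^17) 2 m 0 2
    have hres := tribKey 2 3 a m hm1 (fun i => (Dmat^i * Aimat^17) 0 2) 919 ha1 ha2
      (by show (Dmat^0 * Aimat^17) 0 2 = 0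
          rw [pow_zero, one_mul, hAi17]; norm_num [Matrix.cons_val_two])
      (by show (Dmat^1 * Aimat^17) 0 2 = 3^3 * 919
          simp only [pow_one]
          rw [hAi17, Dmat, Matrix.mul_fin_three]; norm_num [Matrix.cons_val_two])
      (by norm_num)
      (by show (3:ℤ)^(3+1-2) ∣ (Dmat^2 * Aimat^17) 0 2
          rw [hD2, hAi17, Matrix.mul_fin_three]; norm_num [Matrix.cons_val_two])
      (by show (3:ℤ)^(3+2-2*2) ∣ (Dmat^3 * Aimat^17) 0 2
          rw [hD3, hAi17, Matrix.mul_fin_three]; norm_num [Matrix.cons_val_two])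
      (by norm_num) (by norm_num) (fun i hi => by omega)
    have hrhs : padicValInt 3 ((N:ℤ) + 17) = 1 + a := by
      rw [show ((N:ℤ) + 17) = ((3*(13*m) : ℕ) : ℤ) from by push_cast; omega]
      rw [padicValInt.of_nat, padicValNat.mul (by norm_num) (by omega),
        padicValNat.self (by norm_num),
        padicValNat.mul (by norm_num) (by omega),
        padicValNat.eq_zero_of_not_dvd (by norm_num)]
      omega
    rw [key_eq, hrhs]
    exact hres.trans (by omega)
  -- component 7 : n ≡ 35 mod 39
  · intro hr
    obtain ⟨m, hm⟩ : ∃ m, N + 4 = 39*m := ⟨(N+4)/39, by omega⟩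
    have hm1 : 1 ≤ m := by omega
    set a := padicValNat 3 m with hadef
    have ha1 : 3^a ∣ m := pow_padicValNat_dvd
    have ha2 : ¬ 3^(a+1) ∣ m := pow_succ_padicValNat_not_dvd (by omega)
    have key_eq : T ((N:ℤ)) = ∑ i ∈ Finset.range (m+1),
        (m.choose i : ℤ) * (3:ℤ)^(2*i) * ((Dmat^i * Aimat^4) 0 2) := by
      have hshift : Amat^(N+4) * Aimat^4 = Amat^N := by
        rw [pow_add, mul_assoc, hAAi 4, mul_one]
      calc T ((N:ℤ)) = s N := rfl
      _ = (Amat^N) 0 2 := (hs02 N).symm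
      _ = (Amat^(N+4) * Aimat^4) 0 2 := by rw [hshift]
      _ = (((1:TribMat) + (3:ℤ)^2 • Dmat)^m * Aimat^4) 0 2 := by rw [hm, pow_mul, hA39D]
      _ = _ := tribEntrySum Dmat (Aimat^4) 2 m 0 2
    have hres := tribKey 2 3 a m hm1 (fun i => (Dmat^i * Aimat^4) 0 2) 2533718 ha1 ha2
      (by show (Dmat^0 * Aimat^4) 0 2 = 0
          rw [pow_zero, one_mul, hAi4]; norm_num [Matrix.cons_val_two])
      (by show (Dmat^1 * Aimat^4) 0 2 = 3^3 * 2533718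
          simp only [pow_one]
          rw [hAi4, Dmat, Matrix.mul_fin_three]; norm_num [Matrix.cons_val_two])
      (by norm_num)
      (by show (3:ℤ)^(3+1-2) ∣ (Dmat^2 * Aimat^4) 0 2
          rw [hD2, hAi4, Matrix.mul_fin_three]; norm_num [Matrix.cons_val_two])
      (by show (3:ℤ)^(3+2-2*2) ∣ (Dmat^3 * Aimat^4) 0 2
          rw [hD3, hAi4, Matrix.mul_fin_three]; norm_num [Matrix.cons_val_two])
      (by norm_num) (by norm_num) (fun i hi => by omega)
    have hrhs : padicValInt 3 ((N:ℤ) + 4) = 1 + a := by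
      rw [show ((N:ℤ) + 4) = ((3*(13*m) : ℕ) : ℤ) from by push_cast; omega]
      rw [padicValInt.of_nat, padicValNat.mul (by norm_num) (by omega),
        padicValNat.self (by norm_num),
        padicValNat.mul (by norm_num) (by omega),
        padicValNat.eq_zero_of_not_dvd (by norm_num)]
      omega
    rw [key_eq, hrhs]
    exact hres.trans (by omega)
end

section
/- Let p be a prime with p ∉ {2, 11}, p ≡ 2 (mod 3), and suppose that the polynomial X³ − X² − X − 1 splits into linear factors over ℚ_p. Then: (1) for every integer n with 3n ≡ 1 (mod p−1) and every natural number k, if p^k divides 3n − 1 then p^k divides T(n); and (2) for every integer n with 3n ≡ −5 (mod p−1) and every natural number k, if p^k divides 3n + 5 then p^k divides T(n). -/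
set_option maxHeartbeats 1600000


open Polynomial

section TribAux

variable {p : ℕ} [hp : Fact (Nat.Prime p)]

private lemma trib_isUnit_of_not_dvd {x : ℤ_[p]} (h : ¬ ((p : ℤ_[p]) ∣ x)) : IsUnit x := by
  rw [PadicInt.isUnit_iff]
  rcases lt_or_eq_of_le x.norm_le_one with h1 | h1
  · exact absurd ((PadicInt.norm_lt_one_iff_dvd x).1 h1) h
  · exact h1

private lemma trib_not_dvd_two (hp2 : p ≠ 2) : ¬ ((p : ℤ_[p]) ∣ (2 : ℤ_[p])) := by
  intro h
  have h2 : ((2 : ℤ) : ℤ_[p]) = (2 : ℤ_[p]) := by push_cast; ring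
  have h3 : ‖((2 : ℤ) : ℤ_[p])‖ < 1 := by
    rw [h2]; exact (PadicInt.norm_lt_one_iff_dvd _).2 h
  have h4 : (p : ℤ) ∣ 2 := (PadicInt.norm_int_lt_one_iff_dvd 2).1 h3
  have h5 : p ∣ 2 := Int.ofNat_dvd.mp (by exact_mod_cast h4)
  exact hp2 ((Nat.prime_dvd_prime_iff_eq hp.out Nat.prime_two).1 h5)

private lemma trib_zpow_sub_one_dvd (k : ℕ) (U : ℤ_[p]ˣ) {N : ℤ}
    (hN : ((p : ℤ) - 1) * (p : ℤ) ^ k ∣ N) :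
    (p : ℤ_[p]) ^ (k + 1) ∣ ((U ^ N : ℤ_[p]ˣ) : ℤ_[p]) - 1 := by
  haveI : NeZero (p ^ (k + 1)) := ⟨pow_ne_zero _ hp.out.pos.ne'⟩
  set φ : ℤ_[p] →+* ZMod (p ^ (k + 1)) := PadicInt.toZModPow (k + 1) with hφ
  have hple : 1 ≤ p := hp.out.pos
  have hpcast : ((p : ℤ) - 1) * (p : ℤ) ^ k = (((p - 1) * p ^ k : ℕ) : ℤ) := by
    push_cast [Nat.cast_sub hple]; ring
  obtain ⟨t, ht⟩ := hN
  have hUN : Units.map (φ : ℤ_[p] →* ZMod (p ^ (k + 1))) (U ^ N) = 1 := by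
    rw [map_zpow, ht, hpcast, zpow_mul, zpow_natCast]
    have h2 : (Units.map (φ : ℤ_[p] →* ZMod (p ^ (k + 1))) U) ^ ((p - 1) * p ^ k) = 1 := by
      have h3 := ZMod.pow_totient (Units.map (φ : ℤ_[p] →* ZMod (p ^ (k + 1))) U)
      rwa [Nat.totient_prime_pow hp.out (Nat.succ_pos k), Nat.succ_sub_one, mul_comm] at h3
    rw [h2, one_zpow]
  have hker : φ (((U ^ N : ℤ_[p]ˣ) : ℤ_[p]) - 1) = 0 := by
    have h4 := congrArg Units.val hUN
    rw [Units.coe_map] at h4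
    rw [map_sub, map_one]
    simp only [MonoidHom.coe_coe] at h4
    rw [h4, Units.val_one, sub_self]
  have hmem : (((U ^ N : ℤ_[p]ˣ) : ℤ_[p]) - 1) ∈ RingHom.ker φ := hker
  rwa [hφ, PadicInt.ker_toZModPow, Ideal.mem_span_singleton] at hmem

private lemma trib_no_sqrt_33 (hp2 : p ≠ 2) (hp11 : p ≠ 11) (hp3 : p % 3 = 2)
    {d s : ZMod p} (hd : d ^ 2 = -44) (hs : s ^ 2 = 33) : False := by
  have hcast : ∀ m : ℕ, (m : ZMod p) = 0 → p ∣ m := fun m h =>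
    (ZMod.natCast_eq_zero_iff m p).1 h
  have h2 : (2 : ZMod p) ≠ 0 := by
    intro h
    have := hcast 2 (by exact_mod_cast h)
    exact hp2 ((Nat.prime_dvd_prime_iff_eq hp.out Nat.prime_two).1 this)
  have h3 : (3 : ZMod p) ≠ 0 := by
    intro h
    have := hcast 3 (by exact_mod_cast h)
    have hp3' := (Nat.prime_dvd_prime_iff_eq hp.out Nat.prime_three).1 this
    omega
  have h11 : (11 : ZMod p) ≠ 0 := by
    intro h
    have := hcast 11 (by exact_mod_cast h)
    exact hp11 ((Nat.prime_dvd_prime_iff_eq hp.out (by norm_num)).1 this)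
  have hd0 : d ≠ 0 := by
    intro h
    rw [h] at hd
    have h44 : (44 : ZMod p) = 0 := by linear_combination hd
    have hz : (2 : ZMod p) * 2 * 11 = 0 := by linear_combination h44
    rcases mul_eq_zero.1 hz with h' | h'
    · rcases mul_eq_zero.1 h' with h'' | h'' <;> exact h2 h''
    · exact h11 h'
  set y : ZMod p := 2 * s / d with hy_def
  have hyd : y * d = 2 * s := by rw [hy_def]; exact div_mul_cancel₀ _ hd0
  have hy : y ^ 2 = -3 := by
    have h6 : (y ^ 2 + 3) * d ^ 2 = 0 := by
      linear_combination (y * d + 2 * s) * hyd + 4 * hs + 3 * hd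
    rcases mul_eq_zero.1 h6 with h' | h'
    · linear_combination h'
    · exact absurd (pow_eq_zero_iff (by norm_num) |>.1 h') hd0
  set ω : ZMod p := (y - 1) / 2 with hω_def
  have h4ne : (4 : ZMod p) ≠ 0 := by
    intro h
    exact h2 (by rcases mul_eq_zero.1 (show (2:ZMod p)*2 = 0 by linear_combination h) with h'|h' <;> exact h')
  have hω : ω ^ 2 + ω + 1 = 0 := by
    have h4 : (4 : ZMod p) * (ω ^ 2 + ω + 1) = y ^ 2 + 3 := by
      rw [hω_def]
      field_simp
      ring
    have h5 : (4 : ZMod p) * (ω ^ 2 + ω + 1) = 0 := by rw [h4, hy]; ring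
    exact (mul_eq_zero.1 h5).resolve_left h4ne
  have hω3 : ω ^ 3 = 1 := by linear_combination (ω - 1) * hω
  have hω1 : ω ≠ 1 := by
    intro h
    rw [h] at hω
    exact h3 (by linear_combination hω)
  have hωinv : ω * ω ^ 2 = 1 := by linear_combination hω3
  set ωu : (ZMod p)ˣ := Units.mkOfMulEqOne ω (ω ^ 2) hωinv with hωu_def
  haveI : Fact (Nat.Prime 3) := ⟨Nat.prime_three⟩
  have hord : orderOf ωu = 3 := by
    apply orderOf_eq_prime
    · ext
      rw [Units.val_pow_eq_pow_val]
      simpa [hωu_def] using hω3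
    · intro h
      have hval := congrArg Units.val h
      rw [Units.val_one] at hval
      exact hω1 hval
  have hdvd : (3 : ℕ) ∣ Fintype.card (ZMod p)ˣ := hord ▸ orderOf_dvd_card
  rw [ZMod.card_units_eq_totient, Nat.totient_prime hp.out] at hdvd
  omega

end TribAux

/-- Let `p ∉ {2,11}` be a prime with `p ≡ 2 (mod 3)` such that `X³ − X² − X − 1` splits
over `ℚ_p`. Then (1) if `3n ≡ 1 (mod p−1)` then `ν_p(T(n)) ≥ ν_p(3n−1)`, and
(2) if `3n ≡ −5 (mod p−1)` then `ν_p(T(n)) ≥ ν_p(3n+5)`, expressed via divisibility by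
powers of `p`. -/
theorem tribonacci_rational_zero_of_splits
    (T : ℤ → ℤ)
    (hT0 : T 0 = 0) (hT1 : T 1 = 1) (hT2 : T 2 = 1)
    (hTrec : ∀ n : ℤ, T (n + 3) = T (n + 2) + T (n + 1) + T n)
    (p : ℕ) [hp : Fact (Nat.Prime p)] (hp2 : p ≠ 2) (hp11 : p ≠ 11)
    (hp3 : p % 3 = 2)
    (hsplit : ((X ^ 3 - X ^ 2 - X - 1 : ℚ_[p][X])).Splits) :
    (∀ n : ℤ, ((p : ℤ) - 1) ∣ (3 * n - 1) →
      ∀ k : ℕ, (p : ℤ) ^ k ∣ (3 * n - 1) → (p : ℤ) ^ k ∣ T n) ∧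
    (∀ n : ℤ, ((p : ℤ) - 1) ∣ (3 * n + 5) →
      ∀ k : ℕ, (p : ℤ) ^ k ∣ (3 * n + 5) → (p : ℤ) ^ k ∣ T n) := by
  classical
  -- ### Step 1: extract the three roots
  have heq3 : (X ^ 3 - X ^ 2 - X - 1 : ℚ_[p][X]) = X ^ 3 - (X ^ 2 + X + 1) := by ring
  have hdlt : (X ^ 2 + X + 1 : ℚ_[p][X]).degree < ((3:ℕ) : WithBot ℕ) := by
    have h1 : (X ^ 2 + X + 1 : ℚ_[p][X]).degree ≤ ((2:ℕ) : WithBot ℕ) := by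
      apply le_trans (degree_add_le _ _)
      rw [max_le_iff]
      refine ⟨le_trans (degree_add_le _ _) ?_, le_trans degree_one_le (by exact_mod_cast Nat.zero_le 2)⟩
      rw [max_le_iff]
      exact ⟨by rw [degree_X_pow], by rw [degree_X]; exact_mod_cast one_le_two⟩
    exact lt_of_le_of_lt h1 (by exact_mod_cast (by norm_num : (2:ℕ) < 3))
  have hmonic : (X ^ 3 - X ^ 2 - X - 1 : ℚ_[p][X]).Monic := by
    rw [heq3]
    exact monic_X_pow_sub hdlt
  have hdeg : (X ^ 3 - X ^ 2 - X - 1 : ℚ_[p][X]).natDegree = 3 := by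
    have hdeg' : (X ^ 3 - X ^ 2 - X - 1 : ℚ_[p][X]).degree = ((3:ℕ) : WithBot ℕ) := by
      rw [heq3]
      rw [degree_sub_eq_left_of_degree_lt (by rwa [degree_X_pow])]
      exact degree_X_pow 3
    exact natDegree_eq_of_degree_eq_some hdeg'
  have hcard : (X ^ 3 - X ^ 2 - X - 1 : ℚ_[p][X]).roots.card = 3 :=
    (splits_iff_card_roots.mp hsplit).trans hdeg
  obtain ⟨α, β, γ, hroots⟩ := Multiset.card_eq_three.mp hcard
  have hprod : (X ^ 3 - X ^ 2 - X - 1 : ℚ_[p][X])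
      = (X - C α) * ((X - C β) * (X - C γ)) := by
    have h := Splits.eq_prod_roots hsplit
    rw [hmonic.leadingCoeff, map_one, one_mul, hroots] at h
    simpa [mul_assoc] using h
  have heval : ∀ x : ℚ_[p], x ^ 3 - x ^ 2 - x - 1 = (x - α) * ((x - β) * (x - γ)) := by
    intro x
    have h := congrArg (eval x) hprod
    simpa using h
  have h0 := heval 0
  have h1' := heval 1
  have hm1 := heval (-1)
  have he3 : α * β * γ = 1 := by linear_combination h0
  have he1 : α + β + γ = 1 := by linear_combination (1/2 : ℚ_[p]) * h1' + (1/2 : ℚ_[p]) * hm1 - h0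
  have he2 : α * β + β * γ + γ * α = -1 := by
    linear_combination (-1/2 : ℚ_[p]) * h1' + (1/2 : ℚ_[p]) * hm1
  have hαr : α ^ 3 = α ^ 2 + α + 1 := by linear_combination heval α
  have hβr : β ^ 3 = β ^ 2 + β + 1 := by linear_combination heval β
  have hγr : γ ^ 3 = γ ^ 2 + γ + 1 := by linear_combination heval γ
  -- ### Step 2: roots are p-adic integers of norm one
  have hint : ∀ x : ℚ_[p], x ^ 3 = x ^ 2 + x + 1 → ‖x‖ ≤ 1 := by
    intro x hx
    by_contra hgt
    push_neg at hgt
    have hn3 : ‖x ^ 3‖ = ‖x‖ ^ 3 := norm_pow x 3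
    have hmax : ‖x ^ 2 + x + 1‖ ≤ max (max ‖x ^ 2‖ ‖x‖) ‖(1 : ℚ_[p])‖ :=
      le_trans (Padic.nonarchimedean _ _)
        (max_le_max (Padic.nonarchimedean _ _) le_rfl)
    rw [norm_pow, norm_one] at hmax
    have hlt12 : ‖x‖ ^ 1 < ‖x‖ ^ 2 := pow_lt_pow_right₀ hgt one_lt_two
    rw [pow_one] at hlt12
    have hlt02 : (1 : ℝ) < ‖x‖ ^ 2 := one_lt_pow₀ hgt (by norm_num)
    have hb : max (max (‖x‖ ^ 2) ‖x‖) 1 ≤ ‖x‖ ^ 2 := by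
      rw [max_le_iff, max_le_iff]
      exact ⟨⟨le_rfl, hlt12.le⟩, hlt02.le⟩
    have hle : ‖x‖ ^ 3 ≤ ‖x‖ ^ 2 := by
      rw [← hn3, hx]; exact le_trans hmax hb
    have hlt23 : ‖x‖ ^ 2 < ‖x‖ ^ 3 := pow_lt_pow_right₀ hgt (by norm_num)
    linarith
  have hαle := hint α hαr
  have hβle := hint β hβr
  have hγle := hint γ hγr
  set A : ℤ_[p] := ⟨α, hαle⟩ with hA_def
  set B : ℤ_[p] := ⟨β, hβle⟩ with hB_def
  set Cz : ℤ_[p] := ⟨γ, hγle⟩ with hC_def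
  have hA3 : A ^ 3 = A ^ 2 + A + 1 := Subtype.coe_injective (by push_cast; exact hαr)
  have hB3 : B ^ 3 = B ^ 2 + B + 1 := Subtype.coe_injective (by push_cast; exact hβr)
  have hC3 : Cz ^ 3 = Cz ^ 2 + Cz + 1 := Subtype.coe_injective (by push_cast; exact hγr)
  have he1z : A + B + Cz = 1 := Subtype.coe_injective (by push_cast; exact he1)
  have he2z : A * B + B * Cz + Cz * A = -1 := Subtype.coe_injective (by push_cast; exact he2)
  have he3z : A * B * Cz = 1 := Subtype.coe_injective (by push_cast; exact he3)
  -- norms are one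
  have hnorm1 : ‖α‖ = 1 ∧ ‖β‖ = 1 ∧ ‖γ‖ = 1 := by
    have hmul : ‖α‖ * ‖β‖ * ‖γ‖ = 1 := by
      rw [← norm_mul, ← norm_mul, he3, norm_one]
    have hα0 := norm_nonneg α
    have hβ0 := norm_nonneg β
    have hγ0 := norm_nonneg γ
    have key : ∀ x y z : ℝ, 0 ≤ y → 0 ≤ z → 0 ≤ x → y ≤ 1 → z ≤ 1 → x * y * z = 1 → 1 ≤ x := by
      intro x y z hy hz hx hy1 hz1 h
      have hyz : y * z ≤ 1 := by nlinarith
      have h2 : x * (y * z) ≤ x * 1 := mul_le_mul_of_nonneg_left hyz hx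
      nlinarith
    exact ⟨le_antisymm hαle (key _ _ _ hβ0 hγ0 hα0 hβle hγle hmul),
      le_antisymm hβle (key _ _ _ hα0 hγ0 hβ0 hαle hγle (by linear_combination hmul)),
      le_antisymm hγle (key _ _ _ hα0 hβ0 hγ0 hαle hβle (by linear_combination hmul))⟩
  have hAu : IsUnit A := PadicInt.isUnit_iff.mpr (by rw [PadicInt.norm_def]; exact hnorm1.1)
  have hBu : IsUnit B := PadicInt.isUnit_iff.mpr (by rw [PadicInt.norm_def]; exact hnorm1.2.1)
  have hCu : IsUnit Cz := PadicInt.isUnit_iff.mpr (by rw [PadicInt.norm_def]; exact hnorm1.2.2)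
  obtain ⟨U, hU⟩ := hAu
  obtain ⟨V, hV⟩ := hBu
  obtain ⟨W, hW⟩ := hCu
  -- ### Step 3: the discriminant is a unit
  set Dz : ℤ_[p] := (A - B) * ((B - Cz) * (Cz - A)) with hDz_def
  have hD2 : Dz * Dz = -44 := by
    rw [hDz_def]
    linear_combination
      ((A*B+B*Cz+Cz*A)^2*((A+B+Cz)+1) - 4*(A*B*Cz)*((A+B+Cz)^2+(A+B+Cz)+1)
        + 18*(A*B+B*Cz+Cz*A)*(A*B*Cz)) * he1z
      + (((A*B+B*Cz+Cz*A) - 1) - 4*((A*B+B*Cz+Cz*A)^2-(A*B+B*Cz+Cz*A)+1)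
        + 18*(A*B*Cz)) * he2z
      + (-(27*(A*B*Cz) + 49)) * he3z
  have hDu : IsUnit Dz := by
    have h44 : ¬ ((p : ℤ_[p]) ∣ (-44 : ℤ_[p])) := by
      intro h
      have h2 : ((-44 : ℤ) : ℤ_[p]) = (-44 : ℤ_[p]) := by push_cast; ring
      have h3 : ‖((-44 : ℤ) : ℤ_[p])‖ < 1 := by
        rw [h2]; exact (PadicInt.norm_lt_one_iff_dvd _).2 h
      have h4 : (p : ℤ) ∣ -44 := (PadicInt.norm_int_lt_one_iff_dvd _).1 h3
      have h5 : p ∣ 44 := by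
        have := Int.dvd_natAbs.2 h4
        exact_mod_cast this
      have h6 : p ∣ 4 * 11 := by norm_num at h5 ⊢; exact h5
      rcases (Nat.Prime.dvd_mul hp.out).1 h6 with h7 | h7
      · have h8 : p ∣ 2 * 2 := by norm_num at h7 ⊢; exact h7
        rcases (Nat.Prime.dvd_mul hp.out).1 h8 with h9 | h9 <;>
          exact hp2 ((Nat.prime_dvd_prime_iff_eq hp.out Nat.prime_two).1 h9)
      · exact hp11 ((Nat.prime_dvd_prime_iff_eq hp.out (by norm_num)).1 h7)
    apply trib_isUnit_of_not_dvd
    intro h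
    exact h44 (hD2 ▸ h.mul_right Dz)
  -- ### Step 4: the closed formula for T
  have hval : ∀ (X0 : ℤ_[p]ˣ) (i j : ℤ),
      ((X0 ^ (i + j) : ℤ_[p]ˣ) : ℤ_[p]) = ((X0 ^ i : ℤ_[p]ˣ) : ℤ_[p]) * ((X0 ^ j : ℤ_[p]ˣ) : ℤ_[p]) := by
    intro X0 i j
    rw [zpow_add, Units.val_mul]
  have hidx : ∀ (X0 : ℤ_[p]ˣ) {i j : ℤ}, i = j →
      ((X0 ^ i : ℤ_[p]ˣ) : ℤ_[p]) = ((X0 ^ j : ℤ_[p]ˣ) : ℤ_[p]) := by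
    rintro X0 i j rfl; rfl
  have honeU : ((U ^ (1:ℤ) : ℤ_[p]ˣ) : ℤ_[p]) = A := by rw [zpow_one, hU]
  have honeV : ((V ^ (1:ℤ) : ℤ_[p]ˣ) : ℤ_[p]) = B := by rw [zpow_one, hV]
  have honeW : ((W ^ (1:ℤ) : ℤ_[p]ˣ) : ℤ_[p]) = Cz := by rw [zpow_one, hW]
  have hstep : ∀ (X0 : ℤ_[p]ˣ) (x : ℤ_[p]), ((X0 ^ (1:ℤ) : ℤ_[p]ˣ) : ℤ_[p]) = x →
      ∀ (n : ℤ) (j : ℕ), ((X0 ^ (n + (j:ℤ)) : ℤ_[p]ˣ) : ℤ_[p]) = ((X0 ^ n : ℤ_[p]ˣ) : ℤ_[p]) * x ^ j := by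
    intro X0 x hx n j
    induction j with
    | zero => simp
    | succ i ih =>
      have h1 : n + ((i+1:ℕ):ℤ) = (n + (i:ℤ)) + 1 := by push_cast; ring
      rw [hidx X0 h1, hval X0 (n + (i:ℤ)) 1, ih, hx]
      ring
  have hTf : ∀ n : ℤ, ((T n : ℤ_[p])) * Dz =
      -(((U ^ (n+1) : ℤ_[p]ˣ) : ℤ_[p]) * (B - Cz) + ((V ^ (n+1) : ℤ_[p]ˣ) : ℤ_[p]) * (Cz - A)
        + ((W ^ (n+1) : ℤ_[p]ˣ) : ℤ_[p]) * (A - B)) := by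
    set F : ℤ → Prop := fun n => ((T n : ℤ_[p])) * Dz =
      -(((U ^ (n+1) : ℤ_[p]ˣ) : ℤ_[p]) * (B - Cz) + ((V ^ (n+1) : ℤ_[p]ˣ) : ℤ_[p]) * (Cz - A)
        + ((W ^ (n+1) : ℤ_[p]ˣ) : ℤ_[p]) * (A - B)) with hF_def
    have Feq : ∀ {i j : ℤ}, i = j → F i → F j := by rintro i j rfl h; exact h
    have hup : ∀ n : ℤ, F n → F (n + 1) → F (n + 2) → F (n + 3) := by
      intro n f0 f1 f2
      simp only [hF_def] at f0 f1 f2 ⊢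
      have e1 : ((U ^ (n+1+1) : ℤ_[p]ˣ) : ℤ_[p]) = ((U ^ (n+1) : ℤ_[p]ˣ) : ℤ_[p]) * A ^ 1 := by
        rw [hidx U (show n+1+1 = (n+1) + ((1:ℕ):ℤ) by omega)]; exact hstep U A honeU (n+1) 1
      have e2 : ((U ^ (n+2+1) : ℤ_[p]ˣ) : ℤ_[p]) = ((U ^ (n+1) : ℤ_[p]ˣ) : ℤ_[p]) * A ^ 2 := by
        rw [hidx U (show n+2+1 = (n+1) + ((2:ℕ):ℤ) by omega)]; exact hstep U A honeU (n+1) 2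
      have e3 : ((U ^ (n+3+1) : ℤ_[p]ˣ) : ℤ_[p]) = ((U ^ (n+1) : ℤ_[p]ˣ) : ℤ_[p]) * A ^ 3 := by
        rw [hidx U (show n+3+1 = (n+1) + ((3:ℕ):ℤ) by omega)]; exact hstep U A honeU (n+1) 3
      have f1' : ((V ^ (n+1+1) : ℤ_[p]ˣ) : ℤ_[p]) = ((V ^ (n+1) : ℤ_[p]ˣ) : ℤ_[p]) * B ^ 1 := by
        rw [hidx V (show n+1+1 = (n+1) + ((1:ℕ):ℤ) by omega)]; exact hstep V B honeV (n+1) 1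
      have f2' : ((V ^ (n+2+1) : ℤ_[p]ˣ) : ℤ_[p]) = ((V ^ (n+1) : ℤ_[p]ˣ) : ℤ_[p]) * B ^ 2 := by
        rw [hidx V (show n+2+1 = (n+1) + ((2:ℕ):ℤ) by omega)]; exact hstep V B honeV (n+1) 2
      have f3' : ((V ^ (n+3+1) : ℤ_[p]ˣ) : ℤ_[p]) = ((V ^ (n+1) : ℤ_[p]ˣ) : ℤ_[p]) * B ^ 3 := by
        rw [hidx V (show n+3+1 = (n+1) + ((3:ℕ):ℤ) by omega)]; exact hstep V B honeV (n+1) 3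
      have g1' : ((W ^ (n+1+1) : ℤ_[p]ˣ) : ℤ_[p]) = ((W ^ (n+1) : ℤ_[p]ˣ) : ℤ_[p]) * Cz ^ 1 := by
        rw [hidx W (show n+1+1 = (n+1) + ((1:ℕ):ℤ) by omega)]; exact hstep W Cz honeW (n+1) 1
      have g2' : ((W ^ (n+2+1) : ℤ_[p]ˣ) : ℤ_[p]) = ((W ^ (n+1) : ℤ_[p]ˣ) : ℤ_[p]) * Cz ^ 2 := by
        rw [hidx W (show n+2+1 = (n+1) + ((2:ℕ):ℤ) by omega)]; exact hstep W Cz honeW (n+1) 2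
      have g3' : ((W ^ (n+3+1) : ℤ_[p]ˣ) : ℤ_[p]) = ((W ^ (n+1) : ℤ_[p]ˣ) : ℤ_[p]) * Cz ^ 3 := by
        rw [hidx W (show n+3+1 = (n+1) + ((3:ℕ):ℤ) by omega)]; exact hstep W Cz honeW (n+1) 3
      have htr : ((T (n+3) : ℤ_[p])) = ((T (n+2) : ℤ_[p])) + ((T (n+1) : ℤ_[p])) + ((T n : ℤ_[p])) := by
        rw [hTrec n]; push_cast; ring
      rw [htr, e3, f3', g3']
      rw [e1, f1', g1'] at f1
      rw [e2, f2', g2'] at f2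
      linear_combination f0 + f1 + f2
        + (((U ^ (n+1) : ℤ_[p]ˣ) : ℤ_[p]) * (B - Cz)) * hA3
        + (((V ^ (n+1) : ℤ_[p]ˣ) : ℤ_[p]) * (Cz - A)) * hB3
        + (((W ^ (n+1) : ℤ_[p]ˣ) : ℤ_[p]) * (A - B)) * hC3
    have hdown : ∀ n : ℤ, F (n + 1) → F (n + 2) → F (n + 3) → F n := by
      intro n f1 f2 f3
      simp only [hF_def] at f1 f2 f3 ⊢
      have e1 : ((U ^ (n+1+1) : ℤ_[p]ˣ) : ℤ_[p]) = ((U ^ (n+1) : ℤ_[p]ˣ) : ℤ_[p]) * A ^ 1 := by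
        rw [hidx U (show n+1+1 = (n+1) + ((1:ℕ):ℤ) by omega)]; exact hstep U A honeU (n+1) 1
      have f1'' : ((V ^ (n+1+1) : ℤ_[p]ˣ) : ℤ_[p]) = ((V ^ (n+1) : ℤ_[p]ˣ) : ℤ_[p]) * B ^ 1 := by
        rw [hidx V (show n+1+1 = (n+1) + ((1:ℕ):ℤ) by omega)]; exact hstep V B honeV (n+1) 1
      have g1'' : ((W ^ (n+1+1) : ℤ_[p]ˣ) : ℤ_[p]) = ((W ^ (n+1) : ℤ_[p]ˣ) : ℤ_[p]) * Cz ^ 1 := by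
        rw [hidx W (show n+1+1 = (n+1) + ((1:ℕ):ℤ) by omega)]; exact hstep W Cz honeW (n+1) 1
      rw [e1, f1'', g1''] at f1
      have e2 : ((U ^ (n+2+1) : ℤ_[p]ˣ) : ℤ_[p]) = ((U ^ (n+1) : ℤ_[p]ˣ) : ℤ_[p]) * A ^ 2 := by
        rw [hidx U (show n+2+1 = (n+1) + ((2:ℕ):ℤ) by omega)]; exact hstep U A honeU (n+1) 2
      have e3 : ((U ^ (n+3+1) : ℤ_[p]ˣ) : ℤ_[p]) = ((U ^ (n+1) : ℤ_[p]ˣ) : ℤ_[p]) * A ^ 3 := by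
        rw [hidx U (show n+3+1 = (n+1) + ((3:ℕ):ℤ) by omega)]; exact hstep U A honeU (n+1) 3
      have f2' : ((V ^ (n+2+1) : ℤ_[p]ˣ) : ℤ_[p]) = ((V ^ (n+1) : ℤ_[p]ˣ) : ℤ_[p]) * B ^ 2 := by
        rw [hidx V (show n+2+1 = (n+1) + ((2:ℕ):ℤ) by omega)]; exact hstep V B honeV (n+1) 2
      have f3' : ((V ^ (n+3+1) : ℤ_[p]ˣ) : ℤ_[p]) = ((V ^ (n+1) : ℤ_[p]ˣ) : ℤ_[p]) * B ^ 3 := by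
        rw [hidx V (show n+3+1 = (n+1) + ((3:ℕ):ℤ) by omega)]; exact hstep V B honeV (n+1) 3
      have g2' : ((W ^ (n+2+1) : ℤ_[p]ˣ) : ℤ_[p]) = ((W ^ (n+1) : ℤ_[p]ˣ) : ℤ_[p]) * Cz ^ 2 := by
        rw [hidx W (show n+2+1 = (n+1) + ((2:ℕ):ℤ) by omega)]; exact hstep W Cz honeW (n+1) 2
      have g3' : ((W ^ (n+3+1) : ℤ_[p]ˣ) : ℤ_[p]) = ((W ^ (n+1) : ℤ_[p]ˣ) : ℤ_[p]) * Cz ^ 3 := by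
        rw [hidx W (show n+3+1 = (n+1) + ((3:ℕ):ℤ) by omega)]; exact hstep W Cz honeW (n+1) 3
      have htr : ((T (n+3) : ℤ_[p])) = ((T (n+2) : ℤ_[p])) + ((T (n+1) : ℤ_[p])) + ((T n : ℤ_[p])) := by
        rw [hTrec n]; push_cast; ring
      rw [e3, f3', g3'] at f3
      rw [e2, f2', g2'] at f2
      linear_combination f3 - f2 - f1 - Dz * htr
        - (((U ^ (n+1) : ℤ_[p]ˣ) : ℤ_[p]) * (B - Cz)) * hA3
        - (((V ^ (n+1) : ℤ_[p]ˣ) : ℤ_[p]) * (Cz - A)) * hB3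
        - (((W ^ (n+1) : ℤ_[p]ˣ) : ℤ_[p]) * (A - B)) * hC3
    have base0 : F 0 := by
      simp only [hF_def]
      have e1 : ((U ^ ((0:ℤ)+1) : ℤ_[p]ˣ) : ℤ_[p]) = A := by
        rw [hidx U (show (0:ℤ)+1 = 1 by ring)]; exact honeU
      have e2 : ((V ^ ((0:ℤ)+1) : ℤ_[p]ˣ) : ℤ_[p]) = B := by
        rw [hidx V (show (0:ℤ)+1 = 1 by ring)]; exact honeV
      have e3 : ((W ^ ((0:ℤ)+1) : ℤ_[p]ˣ) : ℤ_[p]) = Cz := by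
        rw [hidx W (show (0:ℤ)+1 = 1 by ring)]; exact honeW
      rw [e1, e2, e3, hT0]
      push_cast
      ring
    have base1 : F 1 := by
      simp only [hF_def]
      have e1 : ((U ^ ((1:ℤ)+1) : ℤ_[p]ˣ) : ℤ_[p]) = A ^ 2 := by
        rw [hidx U (show (1:ℤ)+1 = (1:ℤ) + ((1:ℕ):ℤ) by omega)]
        rw [hstep U A honeU 1 1]
        try rw [honeU]
        try ring
      have e2 : ((V ^ ((1:ℤ)+1) : ℤ_[p]ˣ) : ℤ_[p]) = B ^ 2 := by
        rw [hidx V (show (1:ℤ)+1 = (1:ℤ) + ((1:ℕ):ℤ) by omega)]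
        rw [hstep V B honeV 1 1]
        try rw [honeV]
        try ring
      have e3 : ((W ^ ((1:ℤ)+1) : ℤ_[p]ˣ) : ℤ_[p]) = Cz ^ 2 := by
        rw [hidx W (show (1:ℤ)+1 = (1:ℤ) + ((1:ℕ):ℤ) by omega)]
        rw [hstep W Cz honeW 1 1]
        try rw [honeW]
        try ring
      rw [e1, e2, e3, hT1]
      push_cast
      ring
    have base2 : F 2 := by
      simp only [hF_def]
      have e1 : ((U ^ ((2:ℤ)+1) : ℤ_[p]ˣ) : ℤ_[p]) = A ^ 3 := by
        rw [hidx U (show (2:ℤ)+1 = (1:ℤ) + ((2:ℕ):ℤ) by omega)]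
        rw [hstep U A honeU 1 2]
        try rw [honeU]
        try ring
      have e2 : ((V ^ ((2:ℤ)+1) : ℤ_[p]ˣ) : ℤ_[p]) = B ^ 3 := by
        rw [hidx V (show (2:ℤ)+1 = (1:ℤ) + ((2:ℕ):ℤ) by omega)]
        rw [hstep V B honeV 1 2]
        try rw [honeV]
        try ring
      have e3 : ((W ^ ((2:ℤ)+1) : ℤ_[p]ˣ) : ℤ_[p]) = Cz ^ 3 := by
        rw [hidx W (show (2:ℤ)+1 = (1:ℤ) + ((2:ℕ):ℤ) by omega)]
        rw [hstep W Cz honeW 1 2]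
        try rw [honeW]
        try ring
      rw [e1, e2, e3, hT2]
      push_cast
      linear_combination (-((A - B) * ((B - Cz) * (Cz - A)))) * he1z
    -- strong induction over ℤ
    have main : ∀ n : ℤ, F n ∧ F (n + 1) ∧ F (n + 2) := by
      intro n
      induction n using Int.induction_on with
      | zero => exact ⟨base0, base1, base2⟩
      | succ i ih =>
        obtain ⟨q0, q1, q2⟩ := ih
        refine ⟨Feq (by ring) q1, Feq (by ring) q2, ?_⟩
        have := hup i q0 (Feq (by ring) q1) (Feq (by ring) q2)
        exact Feq (by ring) this
      | pred i ih =>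
        obtain ⟨q0, q1, q2⟩ := ih
        have hnew : F (-(i:ℤ) - 1) := by
          apply hdown (-(i:ℤ) - 1) (Feq (by ring) q0) (Feq (by ring) q1) (Feq (by ring) q2)
        exact ⟨hnew, Feq (by ring) q0, Feq (by ring) q1⟩
    exact fun n => (main n).1
  -- ### Step 5: the core congruence argument
  have core : ∀ (k : ℕ) (m : ℤ), (((p:ℤ) - 1) * (p:ℤ) ^ k ∣ (3 * m - 1)) →
      ((p : ℤ_[p]) ^ (k+1) ∣ ((T m : ℤ_[p])) * Dz) ∧
      ((p : ℤ_[p]) ^ (k+1) ∣ ((T (m - 2) : ℤ_[p])) * Dz) := by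
    intro k m hm
    set E : ℤ_[p] := (p : ℤ_[p]) ^ (k+1) with hE_def
    set a : ℤ_[p] := ((U ^ m : ℤ_[p]ˣ) : ℤ_[p]) with ha_def
    set b : ℤ_[p] := ((V ^ m : ℤ_[p]ˣ) : ℤ_[p]) with hb_def
    set c : ℤ_[p] := ((W ^ m : ℤ_[p]ˣ) : ℤ_[p]) with hc_def
    have hNU : E ∣ ((U ^ (3*m-1) : ℤ_[p]ˣ) : ℤ_[p]) - 1 := trib_zpow_sub_one_dvd k U hm
    have hNV : E ∣ ((V ^ (3*m-1) : ℤ_[p]ˣ) : ℤ_[p]) - 1 := trib_zpow_sub_one_dvd k V hm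
    have hNW : E ∣ ((W ^ (3*m-1) : ℤ_[p]ˣ) : ℤ_[p]) - 1 := trib_zpow_sub_one_dvd k W hm
    have hcube : ∀ (X0 : ℤ_[p]ˣ), ((X0 ^ m : ℤ_[p]ˣ) : ℤ_[p]) ^ 3
        = ((X0 ^ (3*m-1) : ℤ_[p]ˣ) : ℤ_[p]) * ((X0 : ℤ_[p])) := by
      intro X0
      have hu : (X0 ^ m) ^ (3:ℕ) = X0 ^ (3*m-1) * X0 := by
        rw [← zpow_natCast, ← zpow_mul]
        rw [show m * ((3:ℕ):ℤ) = (3*m-1) + 1 by push_cast; ring, zpow_add, zpow_one]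
      calc ((X0 ^ m : ℤ_[p]ˣ) : ℤ_[p]) ^ 3 = (((X0 ^ m) ^ (3:ℕ) : ℤ_[p]ˣ) : ℤ_[p]) := by
            rw [Units.val_pow_eq_pow_val]
        _ = ((X0 ^ (3*m-1) * X0 : ℤ_[p]ˣ) : ℤ_[p]) := by rw [hu]
        _ = ((X0 ^ (3*m-1) : ℤ_[p]ˣ) : ℤ_[p]) * ((X0 : ℤ_[p])) := by rw [Units.val_mul]
    have ha3 : E ∣ a ^ 3 - A := by
      rw [ha_def, hcube U, hU]
      have heq : ((U ^ (3*m-1) : ℤ_[p]ˣ) : ℤ_[p]) * A - A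
          = (((U ^ (3*m-1) : ℤ_[p]ˣ) : ℤ_[p]) - 1) * A := by ring
      rw [heq]
      exact hNU.mul_right A
    have hb3 : E ∣ b ^ 3 - B := by
      rw [hb_def, hcube V, hV]
      have heq : ((V ^ (3*m-1) : ℤ_[p]ˣ) : ℤ_[p]) * B - B
          = (((V ^ (3*m-1) : ℤ_[p]ˣ) : ℤ_[p]) - 1) * B := by ring
      rw [heq]
      exact hNV.mul_right B
    have hc3 : E ∣ c ^ 3 - Cz := by
      rw [hc_def, hcube W, hW]
      have heq : ((W ^ (3*m-1) : ℤ_[p]ˣ) : ℤ_[p]) * Cz - Cz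
          = (((W ^ (3*m-1) : ℤ_[p]ˣ) : ℤ_[p]) - 1) * Cz := by ring
      rw [heq]
      exact hNW.mul_right Cz
    have habc : a * b * c = 1 := by
      have hUVW : U * V * W = 1 := by
        apply Units.ext
        rw [Units.val_mul, Units.val_mul, hU, hV, hW, he3z, Units.val_one]
      have h : U ^ m * V ^ m * W ^ m = 1 := by
        rw [← mul_zpow, ← mul_zpow, hUVW, one_zpow]
      have := congrArg Units.val h
      rw [Units.val_mul, Units.val_mul, Units.val_one] at this
      exact this
    set e1' : ℤ_[p] := a + b + c with he1'_def
    set e2' : ℤ_[p] := a*b + b*c + c*a with he2'_def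
    set M : ℤ_[p] := e1' * e2' with hM_def
    have h1s : E ∣ (a^3 + b^3 + c^3) - 1 := by
      have heq : (a^3 + b^3 + c^3) - 1 = (a^3 - A) + (b^3 - B) + (c^3 - Cz) := by
        linear_combination he1z
      rw [heq]
      exact dvd_add (dvd_add ha3 hb3) hc3
    have h2s : E ∣ (a^3*b^3 + b^3*c^3 + c^3*a^3) + 1 := by
      have heq : (a^3*b^3 + b^3*c^3 + c^3*a^3) + 1
          = (a^3 - A)*(b^3) + A*(b^3 - B) + (b^3 - B)*(c^3) + B*(c^3 - Cz)
            + (c^3 - Cz)*(a^3) + Cz*(a^3 - A) := by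
        linear_combination he2z
      rw [heq]
      exact dvd_add (dvd_add (dvd_add (dvd_add (dvd_add
        (ha3.mul_right _) (hb3.mul_left _)) (hb3.mul_right _)) (hc3.mul_left _))
        (hc3.mul_right _)) (ha3.mul_left _)
    have hcube1 : E ∣ e1'^3 - (3*M - 2) := by
      have heq : e1'^3 - (3*M - 2) = ((a^3 + b^3 + c^3) - 1) + (-3)*(a*b*c - 1) := by
        rw [he1'_def, hM_def, he2'_def]; ring
      rw [heq, habc]
      simpa using h1s
    have hcube2 : E ∣ e2'^3 - (3*M - 4) := by
      have heq : e2'^3 - (3*M - 4) = ((a^3*b^3 + b^3*c^3 + c^3*a^3) + 1)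
          + (3*(M - a*b*c - 1))*(a*b*c - 1) := by
        rw [hM_def, he2'_def, he1'_def]; ring
      rw [heq, habc]
      simpa using h2s
    have hMdvd : E ∣ (M - 2) * (M^2 - 7*M + 4) := by
      have heq : (M - 2) * (M^2 - 7*M + 4)
          = (e1'^3 - (3*M - 2)) * e2'^3 + (3*M - 2) * (e2'^3 - (3*M - 4)) := by
        rw [hM_def]; ring
      rw [heq]
      exact dvd_add (hcube1.mul_right _) (hcube2.mul_left _)
    have hQnd : ¬ ((p : ℤ_[p]) ∣ (M^2 - 7*M + 4)) := by
      intro hdvd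
      have hψp : (PadicInt.toZMod : ℤ_[p] →+* ZMod p) (p : ℤ_[p]) = 0 := by
        rw [map_natCast, ZMod.natCast_self]
      have hQ0 : (PadicInt.toZMod (M^2 - 7*M + 4) : ZMod p) = 0 := by
        obtain ⟨z, hz⟩ := hdvd
        rw [hz, map_mul, hψp, zero_mul]
      have hs : (2 * PadicInt.toZMod M - 7)^2 = 33 := by
        have hexp : (PadicInt.toZMod (M^2 - 7*M + 4) : ZMod p)
            = (PadicInt.toZMod M)^2 - 7*(PadicInt.toZMod M) + 4 := by
          push_cast [map_add, map_sub, map_mul, map_pow, map_ofNat]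
          try rfl
        rw [hexp] at hQ0
        linear_combination 4 * hQ0
      have hd : (PadicInt.toZMod Dz)^2 = -44 := by
        have h := congrArg (PadicInt.toZMod : ℤ_[p] →+* ZMod p) hD2
        rw [map_mul, map_neg, map_ofNat] at h
        linear_combination h
      exact trib_no_sqrt_33 hp2 hp11 hp3 hd hs
    have hQu : IsUnit (M^2 - 7*M + 4) := trib_isUnit_of_not_dvd hQnd
    have hM2 : E ∣ M - 2 := (hQu.dvd_mul_right).mp hMdvd
    have he2c : E ∣ e2'^3 - 2 := by
      have heq : e2'^3 - 2 = (e2'^3 - (3*M - 4)) + 3*(M - 2) := by ring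
      rw [heq]
      exact dvd_add hcube2 (hM2.mul_left 3)
    have he2u : IsUnit e2' := by
      apply trib_isUnit_of_not_dvd
      intro hdvd
      have hpE : (p : ℤ_[p]) ∣ E := dvd_pow_self _ (Nat.succ_ne_zero k)
      have h1 : (p : ℤ_[p]) ∣ e2'^3 - 2 := hpE.trans he2c
      have h2 : (p : ℤ_[p]) ∣ e2'^3 := dvd_pow hdvd (by norm_num)
      have h3 : (p : ℤ_[p]) ∣ (2 : ℤ_[p]) := by
        have heq : (2 : ℤ_[p]) = e2'^3 - (e2'^3 - 2) := by ring
        rw [heq]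
        exact dvd_sub h2 h1
      exact trib_not_dvd_two hp2 h3
    have hS1 : E ∣ e1' - e2'^2 := by
      have h : E ∣ e2' * (e1' - e2'^2) := by
        have heq : e2' * (e1' - e2'^2) = (M - 2) - (e2'^3 - 2) := by
          rw [hM_def]; ring
        rw [heq]
        exact dvd_sub hM2 he2c
      exact he2u.dvd_mul_left.mp h
    have hS2 : E ∣ e2'^2 + e1' - e1'^2 * e2' := by
      have h : E ∣ e2' * (e2'^2 + e1' - e1'^2 * e2') := by
        have heq : e2' * (e2'^2 + e1' - e1'^2 * e2')
            = (e2'^3 - 2) + (M - 2) - ((M - 2) * (M + 2)) := by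
          rw [hM_def]; ring
        rw [heq]
        exact dvd_sub (dvd_add he2c hM2) (hM2.mul_right _)
      exact he2u.dvd_mul_left.mp h
    have ha3' : E ∣ A - a^3 := dvd_sub_comm.mp ha3
    have hb3' : E ∣ B - b^3 := dvd_sub_comm.mp hb3
    have hc3' : E ∣ Cz - c^3 := dvd_sub_comm.mp hc3
    constructor
    · -- case 1
      have hTm := hTf m
      have hgU : ((U ^ (m+1) : ℤ_[p]ˣ) : ℤ_[p]) = a * A := by
        rw [hval U m 1, honeU, ha_def]
      have hgV : ((V ^ (m+1) : ℤ_[p]ˣ) : ℤ_[p]) = b * B := by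
        rw [hval V m 1, honeV, hb_def]
      have hgW : ((W ^ (m+1) : ℤ_[p]ˣ) : ℤ_[p]) = c * Cz := by
        rw [hval W m 1, honeW, hc_def]
      rw [hTm, hgU, hgV, hgW, dvd_neg]
      have d1 : E ∣ a * A * (B - Cz) - a^4 * (b^3 - c^3) := by
        have heq : a * A * (B - Cz) - a^4 * (b^3 - c^3)
            = (a * (B - Cz)) * (A - a^3) + a^4 * ((B - b^3) - (Cz - c^3)) := by ring
        rw [heq]
        exact dvd_add (ha3'.mul_left _) ((dvd_sub hb3' hc3').mul_left _)
      have d2 : E ∣ b * B * (Cz - A) - b^4 * (c^3 - a^3) := by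
        have heq : b * B * (Cz - A) - b^4 * (c^3 - a^3)
            = (b * (Cz - A)) * (B - b^3) + b^4 * ((Cz - c^3) - (A - a^3)) := by ring
        rw [heq]
        exact dvd_add (hb3'.mul_left _) ((dvd_sub hc3' ha3').mul_left _)
      have d3 : E ∣ c * Cz * (A - B) - c^4 * (a^3 - b^3) := by
        have heq : c * Cz * (A - B) - c^4 * (a^3 - b^3)
            = (c * (A - B)) * (Cz - c^3) + c^4 * ((A - a^3) - (B - b^3)) := by ring
        rw [heq]
        exact dvd_add (hc3'.mul_left _) ((dvd_sub ha3' hb3').mul_left _)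
      have hP1 : E ∣ a^4*(b^3 - c^3) + b^4*(c^3 - a^3) + c^4*(a^3 - b^3) := by
        have heq : a^4*(b^3 - c^3) + b^4*(c^3 - a^3) + c^4*(a^3 - b^3)
            = ((a-b)*((b-c)*(c-a))) * (e1' - e2'^2)
              + (((a-b)*((b-c)*(c-a))) * e1') * (a*b*c - 1) := by
          rw [he1'_def, he2'_def]; ring
        rw [heq, habc]
        simpa using (hS1.mul_left _)
      have hfin : a * A * (B - Cz) + b * B * (Cz - A) + c * Cz * (A - B)
          = (a * A * (B - Cz) - a^4 * (b^3 - c^3)) + (b * B * (Cz - A) - b^4 * (c^3 - a^3))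
            + (c * Cz * (A - B) - c^4 * (a^3 - b^3))
            + (a^4*(b^3 - c^3) + b^4*(c^3 - a^3) + c^4*(a^3 - b^3)) := by ring
      rw [hfin]
      exact dvd_add (dvd_add (dvd_add d1 d2) d3) hP1
    · -- case 2
      have hTm := hTf (m - 2)
      rw [show m - 2 + 1 = m - 1 by ring] at hTm
      have hXval : ∀ (X0 : ℤ_[p]ˣ), ((X0 ^ (m-1) : ℤ_[p]ˣ) : ℤ_[p])
          * (((X0 ^ m : ℤ_[p]ˣ) : ℤ_[p]))^2 = ((X0 ^ (3*m-1) : ℤ_[p]ˣ) : ℤ_[p]) := by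
        intro X0
        have hu : X0 ^ (m-1) * (X0 ^ m) ^ (2:ℕ) = X0 ^ (3*m-1) := by
          rw [← zpow_natCast, ← zpow_mul, ← zpow_add]
          congr 1
          push_cast
          ring
        calc ((X0 ^ (m-1) : ℤ_[p]ˣ) : ℤ_[p]) * (((X0 ^ m : ℤ_[p]ˣ) : ℤ_[p]))^2
            = ((X0 ^ (m-1) * (X0 ^ m) ^ (2:ℕ) : ℤ_[p]ˣ) : ℤ_[p]) := by
              rw [Units.val_mul, Units.val_pow_eq_pow_val]
          _ = ((X0 ^ (3*m-1) : ℤ_[p]ˣ) : ℤ_[p]) := by rw [hu]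
      have hX1 : E ∣ ((U ^ (m-1) : ℤ_[p]ˣ) : ℤ_[p]) - (b*c)^2 := by
        have h := hXval U
        rw [← ha_def] at h
        have hrep : ((U ^ (m-1) : ℤ_[p]ˣ) : ℤ_[p]) = ((U ^ (3*m-1) : ℤ_[p]ˣ) : ℤ_[p]) * (b*c)^2 := by
          calc ((U ^ (m-1) : ℤ_[p]ˣ) : ℤ_[p])
              = ((U ^ (m-1) : ℤ_[p]ˣ) : ℤ_[p]) * (a*b*c)^2 := by rw [habc]; ring
            _ = (((U ^ (m-1) : ℤ_[p]ˣ) : ℤ_[p]) * a^2) * (b*c)^2 := by ring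
            _ = ((U ^ (3*m-1) : ℤ_[p]ˣ) : ℤ_[p]) * (b*c)^2 := by rw [h]
        rw [hrep]
        have heq : ((U ^ (3*m-1) : ℤ_[p]ˣ) : ℤ_[p]) * (b*c)^2 - (b*c)^2
            = (((U ^ (3*m-1) : ℤ_[p]ˣ) : ℤ_[p]) - 1) * (b*c)^2 := by ring
        rw [heq]
        exact hNU.mul_right _
      have hX2 : E ∣ ((V ^ (m-1) : ℤ_[p]ˣ) : ℤ_[p]) - (c*a)^2 := by
        have h := hXval V
        rw [← hb_def] at h
        have hrep : ((V ^ (m-1) : ℤ_[p]ˣ) : ℤ_[p]) = ((V ^ (3*m-1) : ℤ_[p]ˣ) : ℤ_[p]) * (c*a)^2 := by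
          calc ((V ^ (m-1) : ℤ_[p]ˣ) : ℤ_[p])
              = ((V ^ (m-1) : ℤ_[p]ˣ) : ℤ_[p]) * (a*b*c)^2 := by rw [habc]; ring
            _ = (((V ^ (m-1) : ℤ_[p]ˣ) : ℤ_[p]) * b^2) * (c*a)^2 := by ring
            _ = ((V ^ (3*m-1) : ℤ_[p]ˣ) : ℤ_[p]) * (c*a)^2 := by rw [h]
        rw [hrep]
        have heq : ((V ^ (3*m-1) : ℤ_[p]ˣ) : ℤ_[p]) * (c*a)^2 - (c*a)^2
            = (((V ^ (3*m-1) : ℤ_[p]ˣ) : ℤ_[p]) - 1) * (c*a)^2 := by ring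
        rw [heq]
        exact hNV.mul_right _
      have hX3 : E ∣ ((W ^ (m-1) : ℤ_[p]ˣ) : ℤ_[p]) - (a*b)^2 := by
        have h := hXval W
        rw [← hc_def] at h
        have hrep : ((W ^ (m-1) : ℤ_[p]ˣ) : ℤ_[p]) = ((W ^ (3*m-1) : ℤ_[p]ˣ) : ℤ_[p]) * (a*b)^2 := by
          calc ((W ^ (m-1) : ℤ_[p]ˣ) : ℤ_[p])
              = ((W ^ (m-1) : ℤ_[p]ˣ) : ℤ_[p]) * (a*b*c)^2 := by rw [habc]; ring
            _ = (((W ^ (m-1) : ℤ_[p]ˣ) : ℤ_[p]) * c^2) * (a*b)^2 := by ring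
            _ = ((W ^ (3*m-1) : ℤ_[p]ˣ) : ℤ_[p]) * (a*b)^2 := by rw [h]
        rw [hrep]
        have heq : ((W ^ (3*m-1) : ℤ_[p]ˣ) : ℤ_[p]) * (a*b)^2 - (a*b)^2
            = (((W ^ (3*m-1) : ℤ_[p]ˣ) : ℤ_[p]) - 1) * (a*b)^2 := by ring
        rw [heq]
        exact hNW.mul_right _
      rw [hTm, dvd_neg]
      have d1 : E ∣ ((U ^ (m-1) : ℤ_[p]ˣ) : ℤ_[p]) * (B - Cz) - (b*c)^2 * (b^3 - c^3) := by
        have heq : ((U ^ (m-1) : ℤ_[p]ˣ) : ℤ_[p]) * (B - Cz) - (b*c)^2 * (b^3 - c^3)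
            = (((U ^ (m-1) : ℤ_[p]ˣ) : ℤ_[p]) - (b*c)^2) * (B - Cz)
              + (b*c)^2 * ((B - b^3) - (Cz - c^3)) := by ring
        rw [heq]
        exact dvd_add (hX1.mul_right _) ((dvd_sub hb3' hc3').mul_left _)
      have d2 : E ∣ ((V ^ (m-1) : ℤ_[p]ˣ) : ℤ_[p]) * (Cz - A) - (c*a)^2 * (c^3 - a^3) := by
        have heq : ((V ^ (m-1) : ℤ_[p]ˣ) : ℤ_[p]) * (Cz - A) - (c*a)^2 * (c^3 - a^3)
            = (((V ^ (m-1) : ℤ_[p]ˣ) : ℤ_[p]) - (c*a)^2) * (Cz - A)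
              + (c*a)^2 * ((Cz - c^3) - (A - a^3)) := by ring
        rw [heq]
        exact dvd_add (hX2.mul_right _) ((dvd_sub hc3' ha3').mul_left _)
      have d3 : E ∣ ((W ^ (m-1) : ℤ_[p]ˣ) : ℤ_[p]) * (A - B) - (a*b)^2 * (a^3 - b^3) := by
        have heq : ((W ^ (m-1) : ℤ_[p]ˣ) : ℤ_[p]) * (A - B) - (a*b)^2 * (a^3 - b^3)
            = (((W ^ (m-1) : ℤ_[p]ˣ) : ℤ_[p]) - (a*b)^2) * (A - B)
              + (a*b)^2 * ((A - a^3) - (B - b^3)) := by ring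
        rw [heq]
        exact dvd_add (hX3.mul_right _) ((dvd_sub ha3' hb3').mul_left _)
      have hP2 : E ∣ (b*c)^2*(b^3 - c^3) + (c*a)^2*(c^3 - a^3) + (a*b)^2*(a^3 - b^3) := by
        have heq : (b*c)^2*(b^3 - c^3) + (c*a)^2*(c^3 - a^3) + (a*b)^2*(a^3 - b^3)
            = ((a-b)*((b-c)*(c-a))) * (e2'^2 + e1' - e1'^2 * e2')
              + (((a-b)*((b-c)*(c-a))) * e1') * (a*b*c - 1) := by
          rw [he1'_def, he2'_def]; ring
        rw [heq, habc]
        simpa using (hS2.mul_left _)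
      have hfin : ((U ^ (m-1) : ℤ_[p]ˣ) : ℤ_[p]) * (B - Cz) + ((V ^ (m-1) : ℤ_[p]ˣ) : ℤ_[p]) * (Cz - A)
          + ((W ^ (m-1) : ℤ_[p]ˣ) : ℤ_[p]) * (A - B)
          = (((U ^ (m-1) : ℤ_[p]ˣ) : ℤ_[p]) * (B - Cz) - (b*c)^2 * (b^3 - c^3))
            + (((V ^ (m-1) : ℤ_[p]ˣ) : ℤ_[p]) * (Cz - A) - (c*a)^2 * (c^3 - a^3))
            + (((W ^ (m-1) : ℤ_[p]ˣ) : ℤ_[p]) * (A - B) - (a*b)^2 * (a^3 - b^3))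
            + ((b*c)^2*(b^3 - c^3) + (c*a)^2*(c^3 - a^3) + (a*b)^2*(a^3 - b^3)) := by ring
      rw [hfin]
      exact dvd_add (dvd_add (dvd_add d1 d2) d3) hP2
  -- ### Step 6: conclude
  have hcop : ∀ k : ℕ, IsCoprime ((p:ℤ) - 1) ((p:ℤ) ^ k) := by
    intro k
    exact (show IsCoprime ((p:ℤ) - 1) ((p:ℤ)) from ⟨-1, 1, by ring⟩).pow_right
  have finish : ∀ (k : ℕ) (n : ℤ), ((p : ℤ_[p]) ^ (k+1) ∣ ((T n : ℤ_[p])) * Dz) →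
      (p : ℤ) ^ k ∣ T n := by
    intro k n h
    have h1 : (p : ℤ_[p]) ^ (k+1) ∣ ((T n : ℤ_[p])) := hDu.dvd_mul_right.mp h
    have h2 : (p : ℤ_[p]) ^ k ∣ ((T n : ℤ_[p])) := (pow_dvd_pow _ (Nat.le_succ k)).trans h1
    have h3 : ‖((T n : ℤ) : ℤ_[p])‖ ≤ (p : ℝ) ^ (-(k:ℤ)) := by
      rw [PadicInt.norm_le_pow_iff_mem_span_pow]
      exact Ideal.mem_span_singleton.mpr h2
    have h4 : ((p : ℤ) ^ k) ∣ (T n : ℤ) := PadicInt.norm_int_le_pow_iff_dvd.mp (by exact_mod_cast h3)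
    exact h4
  constructor
  · intro n hmod k hk
    have hm : ((p:ℤ) - 1) * (p:ℤ) ^ k ∣ (3 * n - 1) := (hcop k).mul_dvd hmod hk
    exact finish k n (core k n hm).1
  · intro n hmod k hk
    have hm : ((p:ℤ) - 1) * (p:ℤ) ^ k ∣ (3 * (n + 2) - 1) := by
      rw [show 3 * (n + 2) - 1 = 3 * n + 5 by ring]
      exact (hcop k).mul_dvd hmod hk
    have h := (core k (n + 2) hm).2
    rw [show (n + 2 : ℤ) - 2 = n by ring] at h
    exact finish k n h
end

section
/- Let α ∈ ℂ be algebraic of degree 3 over ℚ, with conjugates α₁ = α, α₂, α₃ (the three roots in ℂ of its minimal polynomial over ℚ). Assume that ℚ(α) is not a Galois (normal) extension of ℚ, and that the field ℚ(α₁, α₂, α₃) ⊆ ℂ contains no primitive cube root of unity (no element z with z² + z + 1 = 0). If ξ₁, ξ₂, ξ₃ ∈ ℂ are roots of unity (each satisfying ξᵢ^{mᵢ} = 1 for some integer mᵢ ≥ 1) such that α₁ξ₁ + α₂ξ₂ + α₃ξ₃ = 0, then ξ₁ = ξ₂ = ξ₃, and hence α₁ + α₂ + α₃ = 0. -/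
open Polynomial IntermediateField

private lemma aux_dvd_cubic {f : Polynomial ℂ} {a b c : ℂ}
    (hab : a ≠ b) (hac : a ≠ c) (hbc : b ≠ c)
    (ha : f.IsRoot a) (hb : f.IsRoot b) (hc : f.IsRoot c) :
    (X - C a) * (X - C b) * (X - C c) ∣ f := by
  have h1 : (X - C a) ∣ f := dvd_iff_isRoot.2 ha
  have h2 : (X - C b) ∣ f := dvd_iff_isRoot.2 hb
  have h3 : (X - C c) ∣ f := dvd_iff_isRoot.2 hc
  have c12 : IsCoprime (X - C a) (X - C b) :=
    isCoprime_X_sub_C_of_isUnit_sub (sub_ne_zero.2 hab).isUnit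
  have c13 : IsCoprime (X - C a) (X - C c) :=
    isCoprime_X_sub_C_of_isUnit_sub (sub_ne_zero.2 hac).isUnit
  have c23 : IsCoprime (X - C b) (X - C c) :=
    isCoprime_X_sub_C_of_isUnit_sub (sub_ne_zero.2 hbc).isUnit
  exact (c13.mul_left c23).mul_dvd (c12.mul_dvd h1 h2) h3

private lemma aux_eq_cubic {f : Polynomial ℂ} (hm : f.Monic) (h3 : f.natDegree = 3)
    {a b c : ℂ} (hab : a ≠ b) (hac : a ≠ c) (hbc : b ≠ c)
    (ha : f.IsRoot a) (hb : f.IsRoot b) (hc : f.IsRoot c) :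
    f = (X - C a) * (X - C b) * (X - C c) := by
  obtain ⟨g, hg⟩ := aux_dvd_cubic hab hac hbc ha hb hc
  have hTm : ((X - C a) * (X - C b) * (X - C c)).Monic :=
    ((monic_X_sub_C a).mul (monic_X_sub_C b)).mul (monic_X_sub_C c)
  have hTdeg : ((X - C a) * (X - C b) * (X - C c)).natDegree = 3 := by
    rw [((monic_X_sub_C a).mul (monic_X_sub_C b)).natDegree_mul (monic_X_sub_C c),
      (monic_X_sub_C a).natDegree_mul (monic_X_sub_C b), natDegree_X_sub_C, natDegree_X_sub_C,
      natDegree_X_sub_C]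
  have hgm : g.Monic := hTm.of_mul_monic_left (hg ▸ hm)
  have hgdeg : g.natDegree = 0 := by
    have h := natDegree_mul hTm.ne_zero hgm.ne_zero
    rw [← hg, h3, hTdeg] at h
    omega
  have hg1 : g = 1 := hgm.natDegree_eq_zero.mp hgdeg
  rw [hg, hg1, mul_one]

set_option maxHeartbeats 1000000 in
set_option synthInstance.maxHeartbeats 200000 in
/-- Let `α` be algebraic of degree 3 over `ℚ` with conjugates `α₁ = α, α₂, α₃ ∈ ℂ`.
If `ℚ(α)/ℚ` is not normal and the splitting field `ℚ(α₁,α₂,α₃) ⊆ ℂ` contains no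
primitive cube root of unity, then any roots-of-unity relation
`α₁ξ₁ + α₂ξ₂ + α₃ξ₃ = 0` forces `ξ₁ = ξ₂ = ξ₃`, and hence `α₁ + α₂ + α₃ = 0`. -/
theorem cubic_roots_of_unity_relation
    (α₁ α₂ α₃ : ℂ)
    (hdeg : (minpoly ℚ α₁).natDegree = 3)
    (hroot₂ : Polynomial.aeval α₂ (minpoly ℚ α₁) = 0)
    (hroot₃ : Polynomial.aeval α₃ (minpoly ℚ α₁) = 0)
    (h12 : α₁ ≠ α₂) (h13 : α₁ ≠ α₃) (h23 : α₂ ≠ α₃)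
    (hnotGalois : ¬ Normal ℚ (IntermediateField.adjoin ℚ ({α₁} : Set ℂ)))
    (hnocube : ∀ z : ℂ,
      z ∈ IntermediateField.adjoin ℚ ({α₁, α₂, α₃} : Set ℂ) → z ^ 2 + z + 1 ≠ 0)
    (ξ₁ ξ₂ ξ₃ : ℂ)
    (hξ₁ : ∃ m : ℕ, 1 ≤ m ∧ ξ₁ ^ m = 1)
    (hξ₂ : ∃ m : ℕ, 1 ≤ m ∧ ξ₂ ^ m = 1)
    (hξ₃ : ∃ m : ℕ, 1 ≤ m ∧ ξ₃ ^ m = 1)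
    (hsum : α₁ * ξ₁ + α₂ * ξ₂ + α₃ * ξ₃ = 0) :
    (ξ₁ = ξ₂ ∧ ξ₂ = ξ₃) ∧ α₁ + α₂ + α₃ = 0 := by
  classical
  set p : Polynomial ℚ := minpoly ℚ α₁ with hpdef
  have hp0 : p ≠ 0 := by
    intro h
    rw [h, natDegree_zero] at hdeg
    exact absurd hdeg (by norm_num)
  have hint1 : IsIntegral ℚ α₁ := by
    by_contra h
    exact hp0 (minpoly.eq_zero h)
  have hpmon : p.Monic := minpoly.monic hint1
  have hirr : Irreducible p := minpoly.irreducible hint1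
  have hroot₁ : Polynomial.aeval α₁ p = 0 := minpoly.aeval ℚ α₁
  have hint2 : IsIntegral ℚ α₂ := ⟨p, hpmon, by rwa [← aeval_def]⟩
  have hint3 : IsIntegral ℚ α₃ := ⟨p, hpmon, by rwa [← aeval_def]⟩
  have hevmapQ : ∀ z : ℂ, (p.map (algebraMap ℚ ℂ)).IsRoot z ↔ Polynomial.aeval z p = 0 := by
    intro z
    rw [IsRoot, eval_map, aeval_def]
  have hP : p.map (algebraMap ℚ ℂ) = (X - C α₁) * (X - C α₂) * (X - C α₃) := by
    refine aux_eq_cubic (hpmon.map _) (by rw [hpmon.natDegree_map]; exact hdeg) h12 h13 h23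
      ((hevmapQ α₁).2 hroot₁) ((hevmapQ α₂).2 hroot₂) ((hevmapQ α₃).2 hroot₃)
  have hevaliff : ∀ z : ℂ, Polynomial.aeval z p = 0 ↔ (z = α₁ ∨ z = α₂ ∨ z = α₃) := by
    intro z
    rw [← hevmapQ, IsRoot, hP]
    simp [sub_eq_zero, mul_eq_zero, or_assoc]
  obtain ⟨m₁, hm₁, hx₁⟩ := hξ₁
  obtain ⟨m₂, hm₂, hx₂⟩ := hξ₂
  obtain ⟨m₃, hm₃, hx₃⟩ := hξ₃
  set n : ℕ := m₁ * m₂ * m₃ with hndef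
  have hn : 0 < n := by positivity
  haveI : NeZero n := ⟨hn.ne'⟩
  have hξ₁n : ξ₁ ^ n = 1 := by
    rw [show n = m₁ * (m₂ * m₃) by ring, pow_mul, hx₁, one_pow]
  have hξ₂n : ξ₂ ^ n = 1 := by
    rw [show n = m₂ * (m₁ * m₃) by ring, pow_mul, hx₂, one_pow]
  have hξ₃n : ξ₃ ^ n = 1 := by
    rw [show n = m₃ * (m₁ * m₂) by ring, pow_mul, hx₃, one_pow]
  have hξ₁ne : ξ₁ ≠ 0 := by
    intro h
    rw [h, zero_pow hn.ne'] at hξ₁n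
    exact zero_ne_one hξ₁n
  set q : Polynomial ℚ := X ^ n - 1 with hqdef
  have hqmon : q.Monic := by
    have := monic_X_pow_sub_C (1 : ℚ) hn.ne'
    simpa [hqdef] using this
  have hq0 : q ≠ 0 := hqmon.ne_zero
  have haevalq : ∀ z : ℂ, Polynomial.aeval z q = z ^ n - 1 := by
    intro z; simp [hqdef]
  set ζ : ℂ := Complex.exp (2 * Real.pi * Complex.I / n) with hζdef
  have hζ : IsPrimitiveRoot ζ n := Complex.isPrimitiveRoot_exp n hn.ne'
  have hζint : IsIntegral ℚ ζ := ⟨q, hqmon, by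
    rw [← aeval_def, haevalq, hζ.pow_eq_one, sub_self]⟩
  set F : IntermediateField ℚ ℂ := IntermediateField.adjoin ℚ ({ζ} : Set ℂ) with hFdef
  have hζF : ζ ∈ F := IntermediateField.mem_adjoin_simple_self ℚ ζ
  have hmemF : ∀ z : ℂ, z ^ n = 1 → z ∈ F := by
    intro z hz
    obtain ⟨i, _, hi⟩ := hζ.eq_pow_of_pow_eq_one hz
    rw [← hi]
    exact pow_mem hζF i
  have hξF₁ : ξ₁ ∈ F := hmemF ξ₁ hξ₁n
  have hξF₂ : ξ₂ ∈ F := hmemF ξ₂ hξ₂n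
  have hξF₃ : ξ₃ ∈ F := hmemF ξ₃ hξ₃n
  have hFroot : F = IntermediateField.adjoin ℚ (q.rootSet ℂ) := by
    apply le_antisymm
    · rw [hFdef, IntermediateField.adjoin_le_iff]
      intro z hz
      rw [Set.mem_singleton_iff] at hz
      subst hz
      exact IntermediateField.subset_adjoin ℚ _ (by
        rw [Polynomial.mem_rootSet]
        exact ⟨hq0, by rw [haevalq, hζ.pow_eq_one, sub_self]⟩)
    · rw [IntermediateField.adjoin_le_iff]
      intro z hz
      rw [Polynomial.mem_rootSet] at hz
      have hz2 := hz.2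
      rw [haevalq] at hz2
      exact hmemF z (sub_eq_zero.mp hz2)
  haveI hFD : FiniteDimensional ℚ ↥F := IntermediateField.adjoin.finiteDimensional hζint
  haveI hnormF : Normal ℚ ↥F := by
    rw [hFroot]
    haveI := IntermediateField.adjoin_rootSet_isSplittingField
      (L := ℂ) (IsAlgClosed.splits (q.map (algebraMap ℚ ℂ)))
    exact Normal.of_isSplittingField (hFEp := this) q
  haveI hgalF : IsGalois ℚ ↥F := ⟨⟩
  have hgenF : (algebraMap ↥F ℂ) (IntermediateField.AdjoinSimple.gen ℚ ζ) = ζ := rfl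
  have hpowgen : ∀ (σ : ↥F ≃ₐ[ℚ] ↥F), ∃ i : ℕ,
      σ (IntermediateField.AdjoinSimple.gen ℚ ζ)
        = (IntermediateField.AdjoinSimple.gen ℚ ζ) ^ i := by
    intro σ
    have hgenpow : (IntermediateField.AdjoinSimple.gen ℚ ζ) ^ n = 1 := by
      apply (algebraMap ↥F ℂ).injective
      rw [map_pow, hgenF, hζ.pow_eq_one, map_one]
    have h1 : ((algebraMap ↥F ℂ) (σ (IntermediateField.AdjoinSimple.gen ℚ ζ))) ^ n = 1 := by
      rw [← map_pow, ← map_pow, hgenpow, map_one, map_one]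
    obtain ⟨i, _, hi⟩ := hζ.eq_pow_of_pow_eq_one h1
    refine ⟨i, (algebraMap ↥F ℂ).injective ?_⟩
    rw [map_pow, hgenF, hi]
  have hcomm : ∀ (σ τ : ↥F ≃ₐ[ℚ] ↥F) (x : ↥F), σ (τ x) = τ (σ x) := by
    intro σ τ x
    obtain ⟨i, hi⟩ := hpowgen σ
    obtain ⟨j, hj⟩ := hpowgen τ
    have hext : (σ.toAlgHom.comp τ.toAlgHom) = (τ.toAlgHom.comp σ.toAlgHom) := by
      apply (IntermediateField.adjoin.powerBasis hζint).algHom_ext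
      have hgen : (IntermediateField.adjoin.powerBasis hζint).gen
          = IntermediateField.AdjoinSimple.gen ℚ ζ := rfl
      rw [hgen]
      show σ (τ (IntermediateField.AdjoinSimple.gen ℚ ζ)) = τ (σ (IntermediateField.AdjoinSimple.gen ℚ ζ))
      rw [hi, hj, map_pow, map_pow, hi, hj, ← pow_mul, ← pow_mul, mul_comm]
    exact congrFun (congrArg DFunLike.coe hext) x
  -- No root of p lies in F
  have hnotF : ∀ z : ℂ, Polynomial.aeval z p = 0 → z ∉ F := by
    intro β hβroot hβF
    have hallF : ∀ w : ℂ, Polynomial.aeval w p = 0 → w ∈ F := by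
      have hb : Polynomial.aeval (⟨β, hβF⟩ : ↥F) p = 0 := by
        apply (algebraMap ↥F ℂ).injective
        rw [map_zero, ← Polynomial.aeval_algebraMap_apply]
        exact hβroot
      have hminb : minpoly ℚ (⟨β, hβF⟩ : ↥F) = p :=
        (minpoly.eq_of_irreducible_of_monic hirr hb hpmon).symm
      have hsplitsb : (p.map (algebraMap ℚ ↥F)).Splits := by
        rw [← hminb]
        exact hnormF.splits _
      have hfact : p.map (algebraMap ℚ ↥F)
          = (((p.map (algebraMap ℚ ↥F)).roots).map (fun r => X - C r)).prod :=
        hsplitsb.eq_prod_roots_of_monic (hpmon.map _)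
      intro w hw
      have hwP : Polynomial.eval w (p.map (algebraMap ℚ ℂ)) = 0 := by
        rw [eval_map, ← aeval_def]; exact hw
      have hPF : p.map (algebraMap ℚ ℂ)
          = (((p.map (algebraMap ℚ ↥F)).roots).map
              (fun r => X - C ((algebraMap ↥F ℂ) r))).prod := by
        have h1 : p.map (algebraMap ℚ ℂ) = (p.map (algebraMap ℚ ↥F)).map (algebraMap ↥F ℂ) := by
          rw [Polynomial.map_map, ← IsScalarTower.algebraMap_eq]
        rw [h1]
        conv_lhs => rw [hfact]
        rw [Polynomial.map_multiset_prod, Multiset.map_map]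
        congr 1
        apply Multiset.map_congr rfl
        intro r _
        simp [Polynomial.map_sub]
      rw [hPF, Polynomial.eval_multiset_prod, Multiset.map_map] at hwP
      rw [Multiset.prod_eq_zero_iff] at hwP
      obtain ⟨r, _, hr⟩ := Multiset.mem_map.1 hwP
      simp only [Function.comp_apply, eval_sub, eval_X, eval_C] at hr
      rw [sub_eq_zero] at hr
      rw [hr]
      exact r.2
    have hF1 : α₁ ∈ F := hallF α₁ hroot₁
    have hF2 : α₂ ∈ F := hallF α₂ hroot₂
    have hF3 : α₃ ∈ F := hallF α₃ hroot₃
    have haev : ∀ (a : ↥F), Polynomial.aeval ((a : ℂ)) p = 0 → Polynomial.aeval a p = 0 := by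
      intro a ha
      apply (algebraMap ↥F ℂ).injective
      rw [map_zero, ← Polynomial.aeval_algebraMap_apply]
      exact ha
    have ha₁ : Polynomial.aeval (⟨α₁, hF1⟩ : ↥F) p = 0 := haev _ hroot₁
    have ha₂ : Polynomial.aeval (⟨α₂, hF2⟩ : ↥F) p = 0 := haev _ hroot₂
    have ha₃ : Polynomial.aeval (⟨α₃, hF3⟩ : ↥F) p = 0 := haev _ hroot₃
    have hmin₂ : minpoly ℚ (⟨α₂, hF2⟩ : ↥F) = p :=
      (minpoly.eq_of_irreducible_of_monic hirr ha₂ hpmon).symm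
    have hmin₃ : minpoly ℚ (⟨α₃, hF3⟩ : ↥F) = p :=
      (minpoly.eq_of_irreducible_of_monic hirr ha₃ hpmon).symm
    obtain ⟨σ, hσ⟩ := minpoly.exists_algEquiv_of_root (K := ℚ) (L := ↥F)
      (Algebra.IsIntegral.isIntegral _).isAlgebraic (by rw [hmin₂]; exact ha₁)
    obtain ⟨τ, hτ⟩ := minpoly.exists_algEquiv_of_root (K := ℚ) (L := ↥F)
      (Algebra.IsIntegral.isIntegral _).isAlgebraic (by rw [hmin₃]; exact ha₁)
    have hmemadj : ∀ (ρ : ↥F ≃ₐ[ℚ] ↥F), ρ (⟨α₁, hF1⟩ : ↥F) ∈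
        IntermediateField.adjoin ℚ ({(⟨α₁, hF1⟩ : ↥F)} : Set ↥F) := by
      intro ρ
      have hfix : ρ (⟨α₁, hF1⟩ : ↥F) ∈ IntermediateField.fixedField
          (IntermediateField.fixingSubgroup
            (IntermediateField.adjoin ℚ ({(⟨α₁, hF1⟩ : ↥F)} : Set ↥F))) := by
        rintro ⟨g, hg⟩
        have hga₁ : g (⟨α₁, hF1⟩ : ↥F) = (⟨α₁, hF1⟩ : ↥F) := by
          rw [IntermediateField.mem_fixingSubgroup_iff] at hg
          exact hg _ (IntermediateField.mem_adjoin_simple_self ℚ _)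
        show g (ρ (⟨α₁, hF1⟩ : ↥F)) = ρ (⟨α₁, hF1⟩ : ↥F)
        rw [hcomm g ρ _, hga₁]
      rwa [IsGalois.fixedField_fixingSubgroup] at hfix
    have ha₂adj := hσ ▸ hmemadj σ
    have ha₃adj := hτ ▸ hmemadj τ
    have hmapadj : (IntermediateField.adjoin ℚ ({(⟨α₁, hF1⟩ : ↥F)} : Set ↥F)).map F.val
        = IntermediateField.adjoin ℚ ({α₁} : Set ℂ) := by
      erw [IntermediateField.adjoin_map]
      congr 1
      rw [Set.image_singleton]
      rfl
    have hα₂adj : α₂ ∈ IntermediateField.adjoin ℚ ({α₁} : Set ℂ) := by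
      rw [← hmapadj]
      exact ⟨_, ha₂adj, rfl⟩
    have hα₃adj : α₃ ∈ IntermediateField.adjoin ℚ ({α₁} : Set ℂ) := by
      rw [← hmapadj]
      exact ⟨_, ha₃adj, rfl⟩
    apply hnotGalois
    have hNeq : IntermediateField.adjoin ℚ ({α₁} : Set ℂ)
        = IntermediateField.adjoin ℚ (p.rootSet ℂ) := by
      apply le_antisymm
      · rw [IntermediateField.adjoin_le_iff]
        intro z hz
        rw [Set.mem_singleton_iff] at hz
        subst hz
        exact IntermediateField.subset_adjoin ℚ _ (by
          rw [Polynomial.mem_rootSet]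
          exact ⟨hp0, hroot₁⟩)
      · rw [IntermediateField.adjoin_le_iff]
        intro z hz
        rw [Polynomial.mem_rootSet] at hz
        rcases (hevaliff z).1 hz.2 with h | h | h
        · subst h; exact IntermediateField.mem_adjoin_simple_self ℚ z
        · subst h; exact hα₂adj
        · subst h; exact hα₃adj
    rw [hNeq]
    haveI := IntermediateField.adjoin_rootSet_isSplittingField
      (L := ℂ) (IsAlgClosed.splits (p.map (algebraMap ℚ ℂ)))
    exact Normal.of_isSplittingField (hFEp := this) p
  -- Step B : p stays irreducible over F
  have hintF1 : IsIntegral ↥F α₁ := hint1.tower_top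
  have hpF0 : p.map (algebraMap ℚ ↥F) ≠ 0 := (hpmon.map _).ne_zero
  have hpFdeg : (p.map (algebraMap ℚ ↥F)).natDegree = 3 := by
    rw [hpmon.natDegree_map]; exact hdeg
  have haevpF : ∀ z : ℂ, Polynomial.aeval z (p.map (algebraMap ℚ ↥F))
      = Polynomial.aeval z p := by
    intro z
    rw [Polynomial.aeval_map_algebraMap]
  have hdvdF : minpoly ↥F α₁ ∣ p.map (algebraMap ℚ ↥F) :=
    minpoly.dvd ↥F α₁ (by rw [haevpF]; exact hroot₁)
  have hlin : ∀ (h : Polynomial ↥F) (z : ℂ), h.natDegree = 1 →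
      Polynomial.aeval z h = 0 → z ∈ F := by
    intro h z h1 hz
    have hne : h ≠ 0 := fun hh => by rw [hh, natDegree_zero] at h1; norm_num at h1
    have hc1 : h.coeff 1 ≠ 0 := by
      have := Polynomial.leadingCoeff_ne_zero.2 hne
      rwa [Polynomial.leadingCoeff, h1] at this
    have hexp : h = C (h.coeff 1) * X + C (h.coeff 0) :=
      Polynomial.eq_X_add_C_of_natDegree_le_one h1.le
    rw [hexp] at hz
    simp only [map_add, map_mul, aeval_C, aeval_X] at hz
    have hc1c : (algebraMap ↥F ℂ) (h.coeff 1) ≠ 0 := by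
      simpa using (algebraMap ↥F ℂ).injective.ne_iff.2 hc1
    have hzval : z = (algebraMap ↥F ℂ) (-(h.coeff 0) / (h.coeff 1)) := by
      rw [map_div₀, map_neg, eq_div_iff hc1c]
      linear_combination hz
    rw [hzval, IntermediateField.algebraMap_apply]
    exact SetLike.coe_mem _
  have hdF3 : (minpoly ↥F α₁).natDegree = 3 := by
    have hdpos : 0 < (minpoly ↥F α₁).natDegree := minpoly.natDegree_pos hintF1
    have hdle : (minpoly ↥F α₁).natDegree ≤ 3 := by
      have := Polynomial.natDegree_le_of_dvd hdvdF hpF0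
      rwa [hpFdeg] at this
    have hdcases : (minpoly ↥F α₁).natDegree = 1 ∨ (minpoly ↥F α₁).natDegree = 2
        ∨ (minpoly ↥F α₁).natDegree = 3 := by omega
    rcases hdcases with hd | hd | hd
    · exact absurd (hlin _ α₁ hd (minpoly.aeval ↥F α₁)) (hnotF α₁ hroot₁)
    · exfalso
      obtain ⟨g, hg⟩ := hdvdF
      have hg0 : g ≠ 0 := fun hh => by rw [hh, mul_zero] at hg; exact hpF0 hg
      have hgdeg : g.natDegree = 1 := by
        have := natDegree_mul (minpoly.ne_zero hintF1) hg0
        rw [← hg, hpFdeg, hd] at this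
        omega
      have hnot23 : ¬ (Polynomial.aeval α₂ (minpoly ↥F α₁) = 0 ∧
          Polynomial.aeval α₃ (minpoly ↥F α₁) = 0) := by
        rintro ⟨h2, h3⟩
        have hdvd3 := aux_dvd_cubic (f := (minpoly ↥F α₁).map (algebraMap ↥F ℂ)) h12 h13 h23
          (by rw [IsRoot, eval_map, ← aeval_def]
              exact Polynomial.aeval_map_algebraMap ℂ α₁ (minpoly ↥F α₁) ▸
                (minpoly.aeval ↥F α₁))
          (by rw [IsRoot, eval_map, ← aeval_def]
              exact Polynomial.aeval_map_algebraMap ℂ α₂ (minpoly ↥F α₁) ▸ h2)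
          (by rw [IsRoot, eval_map, ← aeval_def]
              exact Polynomial.aeval_map_algebraMap ℂ α₃ (minpoly ↥F α₁) ▸ h3)
        have hne : (minpoly ↥F α₁).map (algebraMap ↥F ℂ) ≠ 0 :=
          ((minpoly.monic hintF1).map _).ne_zero
        have hle := Polynomial.natDegree_le_of_dvd hdvd3 hne
        rw [(minpoly.monic hintF1).natDegree_map, hd] at hle
        have hdeg3 : ((X - C α₁) * (X - C α₂) * (X - C α₃)).natDegree = 3 := by
          rw [((monic_X_sub_C α₁).mul (monic_X_sub_C α₂)).natDegree_mul (monic_X_sub_C α₃),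
            (monic_X_sub_C α₁).natDegree_mul (monic_X_sub_C α₂), natDegree_X_sub_C,
            natDegree_X_sub_C, natDegree_X_sub_C]
        rw [hdeg3] at hle
        omega
      rw [not_and_or] at hnot23
      rcases hnot23 with hne2 | hne3
      · have hroot2g : Polynomial.aeval α₂ g = 0 := by
          have h0 : Polynomial.aeval α₂ (p.map (algebraMap ℚ ↥F)) = 0 := by
            rw [haevpF]; exact hroot₂
          rw [hg, map_mul] at h0
          exact (mul_eq_zero.mp h0).resolve_left hne2
        exact (hnotF α₂ hroot₂) (hlin g α₂ hgdeg hroot2g)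
      · have hroot3g : Polynomial.aeval α₃ g = 0 := by
          have h0 : Polynomial.aeval α₃ (p.map (algebraMap ℚ ↥F)) = 0 := by
            rw [haevpF]; exact hroot₃
          rw [hg, map_mul] at h0
          exact (mul_eq_zero.mp h0).resolve_left hne3
        exact (hnotF α₃ hroot₃) (hlin g α₃ hgdeg hroot3g)
    · exact hd
  have hminF : minpoly ↥F α₁ = p.map (algebraMap ℚ ↥F) := by
    obtain ⟨g, hg⟩ := hdvdF
    have hg0 : g ≠ 0 := fun hh => by rw [hh, mul_zero] at hg; exact hpF0 hg
    have hgm : g.Monic := (minpoly.monic hintF1).of_mul_monic_left (hg ▸ (hpmon.map _))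
    have hgdeg : g.natDegree = 0 := by
      have := natDegree_mul (minpoly.ne_zero hintF1) hg0
      rw [← hg, hpFdeg, hdF3] at this
      omega
    rw [hg, hgm.natDegree_eq_zero.mp hgdeg, mul_one]
  have hpFirr : Irreducible (p.map (algebraMap ℚ ↥F)) := hminF ▸ minpoly.irreducible hintF1
  -- Step C : splitting field E of p over F
  set E : IntermediateField ↥F ℂ :=
    IntermediateField.adjoin ↥F ((p.map (algebraMap ℚ ↥F)).rootSet ℂ) with hEdef
  haveI hsfE : Polynomial.IsSplittingField ↥F ↥E (p.map (algebraMap ℚ ↥F)) :=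
    IntermediateField.adjoin_rootSet_isSplittingField
      (IsAlgClosed.splits ((p.map (algebraMap ℚ ↥F)).map (algebraMap ↥F ℂ)))
  haveI hnormE : Normal ↥F ↥E := Normal.of_isSplittingField (p.map (algebraMap ℚ ↥F))
  haveI hfdE : FiniteDimensional ↥F ↥E :=
    Polynomial.IsSplittingField.finiteDimensional ↥E (p.map (algebraMap ℚ ↥F))
  have hmemE : ∀ z : ℂ, Polynomial.aeval z p = 0 → z ∈ E := by
    intro z hz
    apply IntermediateField.subset_adjoin
    rw [Polynomial.mem_rootSet]
    exact ⟨hpF0, by rw [haevpF]; exact hz⟩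
  set β₁ : ↥E := ⟨α₁, hmemE α₁ hroot₁⟩ with hβ₁def
  set β₂ : ↥E := ⟨α₂, hmemE α₂ hroot₂⟩ with hβ₂def
  set β₃ : ↥E := ⟨α₃, hmemE α₃ hroot₃⟩ with hβ₃def
  have hβ12 : β₁ ≠ β₂ := fun h => h12 (congrArg Subtype.val h)
  have hβ13 : β₁ ≠ β₃ := fun h => h13 (congrArg Subtype.val h)
  have hβ23 : β₂ ≠ β₃ := fun h => h23 (congrArg Subtype.val h)
  have hEinj : Function.Injective (algebraMap ↥E ℂ) := (algebraMap ↥E ℂ).injective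
  have haevE : ∀ (x : ↥E), Polynomial.aeval ((x : ℂ)) p = 0 →
      Polynomial.aeval x (p.map (algebraMap ℚ ↥F)) = 0 := by
    intro x hx
    apply hEinj
    rw [map_zero, ← Polynomial.aeval_algebraMap_apply, haevpF]
    exact hx
  have hβ₁root : Polynomial.aeval β₁ (p.map (algebraMap ℚ ↥F)) = 0 := haevE β₁ hroot₁
  have hβ₂root : Polynomial.aeval β₂ (p.map (algebraMap ℚ ↥F)) = 0 := haevE β₂ hroot₂
  have hβ₃root : Polynomial.aeval β₃ (p.map (algebraMap ℚ ↥F)) = 0 := haevE β₃ hroot₃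
  have hminE : ∀ (x : ↥E), Polynomial.aeval x (p.map (algebraMap ℚ ↥F)) = 0 →
      minpoly ↥F x = p.map (algebraMap ℚ ↥F) := fun x hx =>
    (minpoly.eq_of_irreducible_of_monic hpFirr hx (hpmon.map _)).symm
  have halgE : ∀ (x : ↥E), IsAlgebraic ↥F x := fun x =>
    (Algebra.IsIntegral.isIntegral (R := ↥F) x).isAlgebraic
  have himg : ∀ (σ : ↥E ≃ₐ[↥F] ↥E) (x : ↥E),
      Polynomial.aeval x (p.map (algebraMap ℚ ↥F)) = 0 →
      (σ x = β₁ ∨ σ x = β₂ ∨ σ x = β₃) := by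
    intro σ x hx
    have h1 : Polynomial.aeval (σ x) (p.map (algebraMap ℚ ↥F)) = 0 := by
      have hh := Polynomial.aeval_algHom_apply (σ : ↥E →ₐ[↥F] ↥E) x (p.map (algebraMap ℚ ↥F))
      rw [hx, map_zero] at hh
      exact hh
    have h2 : Polynomial.aeval ((σ x : ℂ)) p = 0 := by
      have hh := Polynomial.aeval_algebraMap_apply ℂ (σ x) (p.map (algebraMap ℚ ↥F))
      rw [h1, map_zero] at hh
      rw [← haevpF]
      exact hh
    rcases (hevaliff _).1 h2 with h | h | h
    · exact Or.inl (Subtype.ext h)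
    · exact Or.inr (Or.inl (Subtype.ext h))
    · exact Or.inr (Or.inr (Subtype.ext h))
  set x₁ : ↥F := ⟨ξ₁, hξF₁⟩ with hx₁def
  set x₂ : ↥F := ⟨ξ₂, hξF₂⟩ with hx₂def
  set x₃ : ↥F := ⟨ξ₃, hξF₃⟩ with hx₃def
  have hcoe : ∀ (y : ↥F), (algebraMap ↥E ℂ) (algebraMap ↥F ↥E y) = (y : ℂ) := by
    intro y
    rw [← IsScalarTower.algebraMap_apply, IntermediateField.algebraMap_apply]
  have hEeq : β₁ * algebraMap ↥F ↥E x₁ + β₂ * algebraMap ↥F ↥E x₂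
      + β₃ * algebraMap ↥F ↥E x₃ = 0 := by
    apply hEinj
    rw [map_zero, map_add, map_add, map_mul, map_mul, map_mul, hcoe, hcoe, hcoe]
    exact hsum
  have apply_hom : ∀ (ϕ : ↥E ≃ₐ[↥F] ↥E),
      ((ϕ β₁ : ℂ)) * ξ₁ + ((ϕ β₂ : ℂ)) * ξ₂ + ((ϕ β₃ : ℂ)) * ξ₃ = 0 := by
    intro ϕ
    have h2 : ϕ β₁ * algebraMap ↥F ↥E x₁ + ϕ β₂ * algebraMap ↥F ↥E x₂
        + ϕ β₃ * algebraMap ↥F ↥E x₃ = 0 := by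
      have h := congrArg ϕ hEeq
      rw [map_zero, map_add, map_add, map_mul, map_mul, map_mul, AlgEquiv.commutes,
        AlgEquiv.commutes, AlgEquiv.commutes] at h
      exact h
    have h3 := congrArg (algebraMap ↥E ℂ) h2
    rw [map_zero, map_add, map_add, map_mul, map_mul, map_mul, hcoe, hcoe, hcoe] at h3
    exact h3
  have derive : ∀ (ϕ : ↥E ≃ₐ[↥F] ↥E), ϕ β₁ = β₂ → ϕ β₂ = β₃ → ϕ β₃ = β₁ →
      (α₂ * ξ₁ + α₃ * ξ₂ + α₁ * ξ₃ = 0) ∧ (α₃ * ξ₁ + α₁ * ξ₂ + α₂ * ξ₃ = 0) := by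
    intro ϕ h1 h2 h3
    have e1 := apply_hom ϕ
    rw [h1, h2, h3] at e1
    have e2 := apply_hom (ϕ.trans ϕ)
    rw [AlgEquiv.trans_apply, AlgEquiv.trans_apply, AlgEquiv.trans_apply,
      h1, h2, h3, h1] at e2
    exact ⟨e1, e2⟩
  have hcycle : (α₂ * ξ₁ + α₃ * ξ₂ + α₁ * ξ₃ = 0) ∧ (α₃ * ξ₁ + α₁ * ξ₂ + α₂ * ξ₃ = 0) := by
    obtain ⟨σ, hσ12⟩ := minpoly.exists_algEquiv_of_root (K := ↥F) (L := ↥E)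
      (halgE β₂) (by rw [hminE β₂ hβ₂root]; exact hβ₁root)
    rcases (himg σ β₂ hβ₂root) with h | h | h
    · -- σ β₂ = β₁, so σ β₃ = β₃
      have hσ33 : σ β₃ = β₃ := by
        rcases (himg σ β₃ hβ₃root) with h' | h' | h'
        · exact absurd (σ.injective (h'.trans h.symm)) (Ne.symm hβ23)
        · exact absurd (σ.injective (h'.trans hσ12.symm)) (Ne.symm hβ13)
        · exact h'
      obtain ⟨τ, hτ13⟩ := minpoly.exists_algEquiv_of_root (K := ↥F) (L := ↥E)
        (halgE β₃) (by rw [hminE β₃ hβ₃root]; exact hβ₁root)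
      rcases (himg τ β₂ hβ₂root) with h' | h' | h'
      · -- τ β₂ = β₁ : τ is the 3-cycle 1 → 3 → 2 → 1; use τ.trans τ
        have hτ32 : τ β₃ = β₂ := by
          rcases (himg τ β₃ hβ₃root) with h'' | h'' | h''
          · exact absurd (τ.injective (h''.trans h'.symm)) (Ne.symm hβ23)
          · exact h''
          · exact absurd (τ.injective (h''.trans hτ13.symm)) (Ne.symm hβ13)
        exact derive (τ.trans τ)
          (by rw [AlgEquiv.trans_apply, hτ13, hτ32])
          (by rw [AlgEquiv.trans_apply, h', hτ13])
          (by rw [AlgEquiv.trans_apply, hτ32, h'])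
      · -- τ β₂ = β₂, so τ β₃ = β₁ ; ρ := τ.trans σ is the 3-cycle 1 → 3 → 2 → 1
        have hτ31 : τ β₃ = β₁ := by
          rcases (himg τ β₃ hβ₃root) with h'' | h'' | h''
          · exact h''
          · exact absurd (τ.injective (h''.trans h'.symm)) (Ne.symm hβ23)
          · exact absurd (τ.injective (h''.trans hτ13.symm)) (Ne.symm hβ13)
        have hρ1 : (τ.trans σ) β₁ = β₃ := by rw [AlgEquiv.trans_apply, hτ13, hσ33]
        have hρ2 : (τ.trans σ) β₂ = β₁ := by rw [AlgEquiv.trans_apply, h', h]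
        have hρ3 : (τ.trans σ) β₃ = β₂ := by rw [AlgEquiv.trans_apply, hτ31, hσ12]
        exact derive ((τ.trans σ).trans (τ.trans σ))
          (by rw [AlgEquiv.trans_apply, hρ1, hρ3])
          (by rw [AlgEquiv.trans_apply, hρ2, hρ1])
          (by rw [AlgEquiv.trans_apply, hρ3, hρ2])
      · -- τ β₂ = β₃ contradicts τ β₁ = β₃
        exact absurd (τ.injective (h'.trans hτ13.symm)) (Ne.symm hβ12)
    · exact absurd (σ.injective (hσ12.trans h.symm)) hβ12
    · -- σ β₂ = β₃, so σ β₃ = β₁ : σ is the 3-cycle 1→2→3→1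
      have hσ31 : σ β₃ = β₁ := by
        rcases (himg σ β₃ hβ₃root) with h'' | h'' | h''
        · exact h''
        · exact absurd (σ.injective (h''.trans hσ12.symm)) (Ne.symm hβ13)
        · exact absurd (σ.injective (h''.trans h.symm)) (Ne.symm hβ23)
      exact derive σ hσ12 h hσ31
  obtain ⟨E2, E3⟩ := hcycle
  -- final elementary computation with a cube root of unity
  have hs : ((Real.sqrt 3 : ℝ) : ℂ) ^ 2 = 3 := by
    rw [← Complex.ofReal_pow, Real.sq_sqrt (by norm_num : (0:ℝ) ≤ 3)]
    norm_num
  set ω : ℂ := (-1 + Complex.I * ((Real.sqrt 3 : ℝ) : ℂ)) / 2 with hωdef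
  have hω : ω ^ 2 + ω + 1 = 0 := by
    have hI := Complex.I_sq
    rw [hωdef]
    linear_combination (((Real.sqrt 3 : ℝ) : ℂ) ^ 2 / 4) * hI + (-1 / 4 : ℂ) * hs
  have hω3 : ω ^ 3 = 1 := by linear_combination (ω - 1) * hω
  have hω0 : ω ≠ 0 := by
    intro h
    rw [h] at hω
    norm_num at hω
  have hω1 : ω ≠ 1 := by
    intro h
    rw [h] at hω
    norm_num at hω
  have hKmem : ∀ z : ℂ, z = (α₃ - α₁) / (α₂ - α₃) ∨ z = (α₂ - α₁) / (α₃ - α₂) →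
      z ∈ IntermediateField.adjoin ℚ ({α₁, α₂, α₃} : Set ℂ) := by
    intro z hz
    have hm1 : α₁ ∈ IntermediateField.adjoin ℚ ({α₁, α₂, α₃} : Set ℂ) :=
      IntermediateField.subset_adjoin ℚ _ (by simp)
    have hm2 : α₂ ∈ IntermediateField.adjoin ℚ ({α₁, α₂, α₃} : Set ℂ) :=
      IntermediateField.subset_adjoin ℚ _ (by simp)
    have hm3 : α₃ ∈ IntermediateField.adjoin ℚ ({α₁, α₂, α₃} : Set ℂ) :=
      IntermediateField.subset_adjoin ℚ _ (by simp)
    rcases hz with h | h <;> subst h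
    · exact div_mem (sub_mem hm3 hm1) (sub_mem hm2 hm3)
    · exact div_mem (sub_mem hm2 hm1) (sub_mem hm3 hm2)
  have hA : α₁ + ω * α₂ + ω ^ 2 * α₃ ≠ 0 := by
    intro h0
    have hz : (α₃ - α₁) / (α₂ - α₃) = ω := by
      rw [div_eq_iff (sub_ne_zero.2 h23)]
      linear_combination -h0 + α₃ * hω
    exact hnocube _ (hKmem _ (Or.inl rfl)) (by rw [hz]; exact hω)
  have hB : α₁ + ω ^ 2 * α₂ + ω * α₃ ≠ 0 := by
    intro h0
    have hz : (α₂ - α₁) / (α₃ - α₂) = ω := by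
      rw [div_eq_iff (sub_ne_zero.2 (Ne.symm h23))]
      linear_combination -h0 + α₂ * hω
    exact hnocube _ (hKmem _ (Or.inr rfl)) (by rw [hz]; exact hω)
  have hu : ξ₁ + ω ^ 2 * ξ₂ + ω * ξ₃ = 0 := by
    have h0 : (α₁ + ω * α₂ + ω ^ 2 * α₃) * (ξ₁ + ω ^ 2 * ξ₂ + ω * ξ₃) = 0 := by
      linear_combination hsum + ω * E2 + ω ^ 2 * E3
        + (α₂ * ξ₂ + α₃ * ξ₃ + ω * α₃ * ξ₂) * hω3
    exact (mul_eq_zero.mp h0).resolve_left hA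
  have hv : ξ₁ + ω * ξ₂ + ω ^ 2 * ξ₃ = 0 := by
    have h0 : (α₁ + ω ^ 2 * α₂ + ω * α₃) * (ξ₁ + ω * ξ₂ + ω ^ 2 * ξ₃) = 0 := by
      linear_combination hsum + ω ^ 2 * E2 + ω * E3
        + (α₂ * ξ₂ + ω * α₂ * ξ₃ + α₃ * ξ₃) * hω3
    exact (mul_eq_zero.mp h0).resolve_left hB
  have hωω : ω ^ 2 - ω ≠ 0 := by
    intro h
    rcases mul_eq_zero.mp (show ω * (ω - 1) = 0 by linear_combination h) with h' | h'
    · exact hω0 h'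
    · exact hω1 (by linear_combination h')
  have hξ23 : ξ₂ = ξ₃ := by
    have h0 : (ω ^ 2 - ω) * (ξ₂ - ξ₃) = 0 := by linear_combination hu - hv
    have h1 := (mul_eq_zero.mp h0).resolve_left hωω
    linear_combination h1
  have hξ12 : ξ₁ = ξ₂ := by
    have h := hu
    rw [← hξ23] at h
    linear_combination h - ξ₂ * hω
  have hsum0 : α₁ + α₂ + α₃ = 0 := by
    have h0 : (α₁ + α₂ + α₃) * ξ₁ = 0 := by
      linear_combination hsum + α₂ * hξ12 + α₃ * (hξ12.trans hξ23)
    exact (mul_eq_zero.mp h0).resolve_right hξ₁ne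
  exact ⟨⟨hξ12, hξ23⟩, hsum0⟩
end

section
/- Let λ ∈ ℂ be a root of P(X) = X³ − X² − X − 1 and let n ∈ ℤ. Set α = λⁿ · P′(λ)⁻¹, where P′(X) = 3X² − 2X − 1. Then α is algebraic of degree 3 over ℚ, the field ℚ(α) is not a Galois (normal) extension of ℚ, and the splitting field inside ℂ of the minimal polynomial of α over ℚ contains no primitive cube root of unity (no element z with z² + z + 1 = 0). -/
open Polynomial IntermediateField

noncomputable section TribonacciAux

/-- The tribonacci polynomial over ℚ. -/
private def Ptri : ℚ[X] := X ^ 3 - X ^ 2 - X - 1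

private lemma Ptri_monic : Ptri.Monic := by unfold Ptri; monicity!

private lemma Ptri_natDegree : Ptri.natDegree = 3 := by unfold Ptri; compute_degree!

private lemma Ptri_degree : Ptri.degree = 3 := by unfold Ptri; compute_degree!

private lemma Ptri_ne_zero : Ptri ≠ 0 := Ptri_monic.ne_zero

private lemma Ptri_aeval (x : ℂ) : aeval x Ptri = x ^ 3 - x ^ 2 - x - 1 := by
  simp [Ptri]

private lemma no_rat_root (q : ℚ) : q ^ 3 - q ^ 2 - q - 1 ≠ 0 := by
  intro h
  have hd0 : (q.den : ℚ) ≠ 0 := by exact_mod_cast q.den_nz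
  have hnum : (q.num : ℚ) = q * (q.den : ℚ) := by
    have h2 := Rat.num_div_den q
    rw [div_eq_iff hd0] at h2
    exact h2
  have key : q.num ^ 3 = q.num ^ 2 * q.den + q.num * (q.den : ℤ) ^ 2 + (q.den : ℤ) ^ 3 := by
    have : (q.num : ℚ) ^ 3 = (q.num : ℚ) ^ 2 * q.den + q.num * (q.den : ℚ) ^ 2 + (q.den:ℚ) ^ 3 := by
      rw [hnum]; linear_combination ((q.den:ℚ))^3 * h
    exact_mod_cast this
  -- q.den divides q.num ^ 3, but they are coprime, so q.den = 1
  have hdvd : (q.den : ℤ) ∣ q.num ^ 3 := ⟨q.num ^ 2 + q.num * q.den + (q.den:ℤ)^2, by linarith [key]⟩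
  have hcop : Nat.Coprime (q.num.natAbs ^ 3) q.den := (q.reduced).pow_left 3
  have hden1 : q.den = 1 := by
    have : q.den ∣ q.num.natAbs ^ 3 := by
      have := Int.natAbs_dvd_natAbs.mpr hdvd
      simpa [Int.natAbs_pow] using this
    exact Nat.eq_one_of_dvd_coprimes hcop.symm (dvd_refl _) this |>.symm ▸ rfl
  rw [hden1] at key
  have : q.num ^ 3 = q.num ^ 2 + q.num + 1 := by push_cast at key; linarith
  rcases le_or_gt q.num (-1) with hm | hm
  · nlinarith
  · rcases le_or_gt q.num 1 with hm2 | hm2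
    · interval_cases q.num <;> norm_num at this
    · nlinarith

private lemma Ptri_irreducible : Irreducible Ptri := by
  rw [Polynomial.irreducible_iff_roots_eq_zero_of_degree_le_three
    (by rw [Ptri_natDegree]; norm_num) (by rw [Ptri_natDegree])]
  rw [Multiset.eq_zero_iff_forall_notMem]
  intro q hq
  rw [mem_roots Ptri_ne_zero] at hq
  have : q ^ 3 - q ^ 2 - q - 1 = 0 := by
    have := hq; simpa [Ptri, IsRoot] using this
  exact no_rat_root q this

private lemma minpoly_eq_Ptri (x : ℂ) (hx : x ^ 3 - x ^ 2 - x - 1 = 0) :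
    minpoly ℚ x = Ptri :=
  (minpoly.eq_of_irreducible_of_monic Ptri_irreducible
    (by rw [Ptri_aeval]; exact hx) Ptri_monic).symm

private lemma isIntegral_root (x : ℂ) (hx : x ^ 3 - x ^ 2 - x - 1 = 0) :
    IsIntegral ℚ x :=
  ⟨Ptri, Ptri_monic, by rw [← Polynomial.aeval_def, Ptri_aeval]; exact hx⟩

/-- 1, x, x² are linearly independent over ℚ when x is a root of the tribonacci polynomial. -/
private lemma coords_unique (x : ℂ) (hx : x ^ 3 - x ^ 2 - x - 1 = 0) (a b c : ℚ)
    (h : (a : ℂ) + (b : ℂ) * x + (c : ℂ) * x ^ 2 = 0) : a = 0 ∧ b = 0 ∧ c = 0 := by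
  set g : ℚ[X] := C a + C b * X + C c * X ^ 2 with hg
  have hgx : aeval x g = 0 := by simpa [hg] using h
  have hg0 : g = 0 := by
    by_contra hne
    have hle := minpoly.degree_le_of_ne_zero ℚ x hne hgx
    rw [minpoly_eq_Ptri x hx, Ptri_degree] at hle
    have hd2 : g.degree ≤ 2 := by rw [hg]; compute_degree
    have h32 : (3 : WithBot ℕ) ≤ 2 := le_trans hle hd2
    norm_num at h32
  refine ⟨?_, ?_, ?_⟩
  · have := congrArg (fun p => Polynomial.coeff p 0) hg0; simpa [hg] using this
  · have := congrArg (fun p => Polynomial.coeff p 1) hg0; simpa [hg] using this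
  · have := congrArg (fun p => Polynomial.coeff p 2) hg0; simpa [hg] using this

private lemma root_ne_zero (x : ℂ) (hx : x ^ 3 - x ^ 2 - x - 1 = 0) : x ≠ 0 := by
  intro h0; rw [h0] at hx; norm_num at hx

private lemma Pprime_ne_zero (x : ℂ) (hx : x ^ 3 - x ^ 2 - x - 1 = 0) :
    3 * x ^ 2 - 2 * x - 1 ≠ 0 := by
  intro h2
  have : (1 : ℂ) = 0 := by
    linear_combination (-23/22 + 6/11 * x) * hx + (1/22 + 9/22 * x - 2/11 * x ^ 2) * h2
  norm_num at this

/-- Every integer power of a tribonacci root has integer coordinates in the basis 1,x,x²,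
and the coordinates satisfy a parity invariant. -/
private lemma exists_coords (x : ℂ) (hx : x ^ 3 - x ^ 2 - x - 1 = 0) (n : ℤ) :
    ∃ a b c : ℤ, x ^ n = (a : ℂ) + (b : ℂ) * x + (c : ℂ) * x ^ 2 ∧
      (b % 2 = 1 ∨ (a + c) % 2 = 1) := by
  have hx0 := root_ne_zero x hx
  induction n using Int.induction_on with
  | zero => exact ⟨1, 0, 0, by norm_num, by norm_num⟩
  | succ i ih =>
    obtain ⟨a, b, c, h, hpar⟩ := ih
    refine ⟨c, a + c, b + c, ?_, by omega⟩
    rw [zpow_add_one₀ hx0, h]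
    push_cast
    linear_combination (c : ℂ) * hx
  | pred i ih =>
    obtain ⟨a, b, c, h, hpar⟩ := ih
    refine ⟨b - a, c - a, a, mul_right_cancel₀ hx0 ?_, by omega⟩
    have hs : x ^ (-(i : ℤ) - 1) * x = x ^ (-(i : ℤ)) := by
      rw [← zpow_add_one₀ hx0]; norm_num
    rw [hs, h]
    push_cast
    linear_combination (-(a : ℂ)) * hx

/-- α = xⁿ·(3x²−2x−1)⁻¹ is never rational. -/
private lemma alpha_not_rat (x : ℂ) (hx : x ^ 3 - x ^ 2 - x - 1 = 0) (n : ℤ) (q : ℚ)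
    (h : x ^ n * (3 * x ^ 2 - 2 * x - 1)⁻¹ = (q : ℂ)) : False := by
  have hP' := Pprime_ne_zero x hx
  have hxn : x ^ n = (q : ℂ) * (3 * x ^ 2 - 2 * x - 1) := by
    rw [← h, inv_mul_cancel_right₀ hP']
  obtain ⟨a, b, c, hco, hpar⟩ := exists_coords x hx n
  have hzero : ((a + q : ℚ) : ℂ) + ((b + 2 * q : ℚ) : ℂ) * x + ((c - 3 * q : ℚ) : ℂ) * x ^ 2 = 0 := by
    push_cast
    linear_combination hxn - hco
  obtain ⟨h1, h2, h3⟩ := coords_unique x hx _ _ _ hzero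
  have ha : (a : ℚ) = -q := by linarith
  have hb : (b : ℚ) = -2 * q := by linarith
  have hc : (c : ℚ) = 3 * q := by linarith
  have hb' : (b : ℚ) = 2 * (a : ℚ) := by rw [ha, hb]; ring
  have hc' : (c : ℚ) = -3 * (a : ℚ) := by rw [ha, hc]; ring
  have hb2 : b = 2 * a := by exact_mod_cast hb'
  have hc2 : c = -3 * a := by exact_mod_cast hc'
  omega

/-- 3-adic descent: the quadratic system has no nontrivial integer solutions. -/
private lemma descent (d X Y Z : ℤ)
    (h1 : -5 * (X ^ 2 + 2 * Y * Z + Z ^ 2) + 3 * (2 * X * Y + 2 * Y * Z + 2 * Z ^ 2)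
        + (Y ^ 2 + 2 * X * Z + 2 * Y * Z + 2 * Z ^ 2) = 3 * d ^ 2)
    (h2 : -(X ^ 2 + 2 * Y * Z + Z ^ 2) - (2 * X * Y + 2 * Y * Z + 2 * Z ^ 2)
        + 2 * (Y ^ 2 + 2 * X * Z + 2 * Y * Z + 2 * Z ^ 2) = 0)
    (h3 : 3 * (X ^ 2 + 2 * Y * Z + Z ^ 2) + (2 * X * Y + 2 * Y * Z + 2 * Z ^ 2)
        - (Y ^ 2 + 2 * X * Z + 2 * Y * Z + 2 * Z ^ 2) = 0) :
    d = 0 := by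
  by_contra hd0
  -- reduce mod 3 : X, Y, Z must all be divisible by 3
  have key : ∀ u v w r : ZMod 3,
      -5 * (u ^ 2 + 2 * v * w + w ^ 2) + 3 * (2 * u * v + 2 * v * w + 2 * w ^ 2)
        + (v ^ 2 + 2 * u * w + 2 * v * w + 2 * w ^ 2) = 3 * r ^ 2 →
      -(u ^ 2 + 2 * v * w + w ^ 2) - (2 * u * v + 2 * v * w + 2 * w ^ 2)
        + 2 * (v ^ 2 + 2 * u * w + 2 * v * w + 2 * w ^ 2) = 0 →
      3 * (u ^ 2 + 2 * v * w + w ^ 2) + (2 * u * v + 2 * v * w + 2 * w ^ 2)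
        - (v ^ 2 + 2 * u * w + 2 * v * w + 2 * w ^ 2) = 0 →
      u = 0 ∧ v = 0 ∧ w = 0 := by decide
  have c1 := congrArg (fun t : ℤ => (t : ZMod 3)) h1
  have c2 := congrArg (fun t : ℤ => (t : ZMod 3)) h2
  have c3 := congrArg (fun t : ℤ => (t : ZMod 3)) h3
  push_cast at c1 c2 c3
  obtain ⟨hX0, hY0, hZ0⟩ := key (X : ZMod 3) (Y : ZMod 3) (Z : ZMod 3) (d : ZMod 3) c1 c2 c3
  obtain ⟨x, rfl⟩ := (ZMod.intCast_zmod_eq_zero_iff_dvd X 3).mp hX0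
  obtain ⟨y, rfl⟩ := (ZMod.intCast_zmod_eq_zero_iff_dvd Y 3).mp hY0
  obtain ⟨z, rfl⟩ := (ZMod.intCast_zmod_eq_zero_iff_dvd Z 3).mp hZ0
  -- now 3 ∣ d
  have h1' : 3 * (-5 * (x ^ 2 + 2 * y * z + z ^ 2) + 3 * (2 * x * y + 2 * y * z + 2 * z ^ 2)
      + (y ^ 2 + 2 * x * z + 2 * y * z + 2 * z ^ 2)) = d ^ 2 := by
    apply mul_left_cancel₀ (show (3 : ℤ) ≠ 0 by norm_num)
    linear_combination h1
  have hd3 : (d : ZMod 3) = 0 := by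
    have cd := congrArg (fun t : ℤ => (t : ZMod 3)) h1'
    push_cast at cd
    have hsq : ∀ r : ZMod 3, r ^ 2 = 0 → r = 0 := by decide
    apply hsq
    rw [← cd, show (3 : ZMod 3) = 0 by decide, zero_mul]
  obtain ⟨e, hde⟩ := (ZMod.intCast_zmod_eq_zero_iff_dvd d 3).mp hd3
  have he' : e ≠ 0 := by
    intro h; apply hd0; rw [hde, h]; ring
  have E1 : -5 * (x ^ 2 + 2 * y * z + z ^ 2) + 3 * (2 * x * y + 2 * y * z + 2 * z ^ 2)
      + (y ^ 2 + 2 * x * z + 2 * y * z + 2 * z ^ 2) = 3 * e ^ 2 := by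
    apply mul_left_cancel₀ (show (9 : ℤ) ≠ 0 by norm_num)
    linear_combination h1 + (3 * d + 9 * e) * hde
  have E2 : -(x ^ 2 + 2 * y * z + z ^ 2) - (2 * x * y + 2 * y * z + 2 * z ^ 2)
      + 2 * (y ^ 2 + 2 * x * z + 2 * y * z + 2 * z ^ 2) = 0 := by
    apply mul_left_cancel₀ (show (9 : ℤ) ≠ 0 by norm_num)
    linear_combination h2
  have E3 : 3 * (x ^ 2 + 2 * y * z + z ^ 2) + (2 * x * y + 2 * y * z + 2 * z ^ 2)
      - (y ^ 2 + 2 * x * z + 2 * y * z + 2 * z ^ 2) = 0 := by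
    apply mul_left_cancel₀ (show (9 : ℤ) ≠ 0 by norm_num)
    linear_combination h3
  exact he' (descent e x y z E1 E2 E3)
termination_by d.natAbs
decreasing_by
  rw [hde]
  omega

/-- Clear denominators of three rationals. -/
private lemma exists_int_rep (a b c : ℚ) :
    ∃ (X Y Z d : ℤ), d ≠ 0 ∧ (X : ℚ) = a * d ∧ (Y : ℚ) = b * d ∧ (Z : ℚ) = c * d := by
  have hnum : ∀ q : ℚ, (q.num : ℚ) = q * (q.den : ℚ) := by
    intro q
    have h2 := Rat.num_div_den q
    rw [div_eq_iff (by exact_mod_cast q.den_nz)] at h2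
    exact h2
  refine ⟨a.num * b.den * c.den, b.num * a.den * c.den, c.num * a.den * b.den,
    (a.den : ℤ) * b.den * c.den, ?_, ?_, ?_, ?_⟩
  · have := a.den_nz; have := b.den_nz; have := c.den_nz
    positivity
  · push_cast; rw [hnum a]; ring
  · push_cast; rw [hnum b]; ring
  · push_cast; rw [hnum c]; ring

/-- There is no rational solution to the key quadratic system. -/
private lemma no_rat_sol (a b c : ℚ)
    (e1 : -5 * (a ^ 2 + 2 * b * c + c ^ 2) + 3 * (2 * a * b + 2 * b * c + 2 * c ^ 2)
        + (b ^ 2 + 2 * a * c + 2 * b * c + 2 * c ^ 2) = 3)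
    (e2 : -(a ^ 2 + 2 * b * c + c ^ 2) - (2 * a * b + 2 * b * c + 2 * c ^ 2)
        + 2 * (b ^ 2 + 2 * a * c + 2 * b * c + 2 * c ^ 2) = 0)
    (e3 : 3 * (a ^ 2 + 2 * b * c + c ^ 2) + (2 * a * b + 2 * b * c + 2 * c ^ 2)
        - (b ^ 2 + 2 * a * c + 2 * b * c + 2 * c ^ 2) = 0) : False := by
  obtain ⟨X, Y, Z, d, hd, hX, hY, hZ⟩ := exists_int_rep a b c
  have E1 : -5 * (X ^ 2 + 2 * Y * Z + Z ^ 2) + 3 * (2 * X * Y + 2 * Y * Z + 2 * Z ^ 2)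
      + (Y ^ 2 + 2 * X * Z + 2 * Y * Z + 2 * Z ^ 2) = 3 * d ^ 2 := by
    have : ((-5 * (X ^ 2 + 2 * Y * Z + Z ^ 2) + 3 * (2 * X * Y + 2 * Y * Z + 2 * Z ^ 2)
        + (Y ^ 2 + 2 * X * Z + 2 * Y * Z + 2 * Z ^ 2) : ℤ) : ℚ) = ((3 * d ^ 2 : ℤ) : ℚ) := by
      push_cast
      rw [hX, hY, hZ]
      linear_combination (d : ℚ) ^ 2 * e1
    exact_mod_cast this
  have E2 : -(X ^ 2 + 2 * Y * Z + Z ^ 2) - (2 * X * Y + 2 * Y * Z + 2 * Z ^ 2)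
      + 2 * (Y ^ 2 + 2 * X * Z + 2 * Y * Z + 2 * Z ^ 2) = 0 := by
    have : ((-(X ^ 2 + 2 * Y * Z + Z ^ 2) - (2 * X * Y + 2 * Y * Z + 2 * Z ^ 2)
        + 2 * (Y ^ 2 + 2 * X * Z + 2 * Y * Z + 2 * Z ^ 2) : ℤ) : ℚ) = ((0 : ℤ) : ℚ) := by
      push_cast
      rw [hX, hY, hZ]
      linear_combination (d : ℚ) ^ 2 * e2
    exact_mod_cast this
  have E3 : 3 * (X ^ 2 + 2 * Y * Z + Z ^ 2) + (2 * X * Y + 2 * Y * Z + 2 * Z ^ 2)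
      - (Y ^ 2 + 2 * X * Z + 2 * Y * Z + 2 * Z ^ 2) = 0 := by
    have : ((3 * (X ^ 2 + 2 * Y * Z + Z ^ 2) + (2 * X * Y + 2 * Y * Z + 2 * Z ^ 2)
        - (Y ^ 2 + 2 * X * Z + 2 * Y * Z + 2 * Z ^ 2) : ℤ) : ℚ) = ((0 : ℤ) : ℚ) := by
      push_cast
      rw [hX, hY, hZ]
      linear_combination (d : ℚ) ^ 2 * e3
    exact_mod_cast this
  exact hd (descent d X Y Z E1 E2 E3)

/-- The real root of the tribonacci polynomial. -/
private lemma exists_real_root : ∃ t : ℝ, t ^ 3 - t ^ 2 - t - 1 = 0 ∧ 5 / 3 < t ∧ t ≤ 2 := by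
  have hcont : ContinuousOn (fun x : ℝ => x ^ 3 - x ^ 2 - x - 1) (Set.Icc (5 / 3) 2) := by
    fun_prop
  have hle : (5 / 3 : ℝ) ≤ 2 := by norm_num
  have hmem : (0 : ℝ) ∈ Set.Icc ((5/3:ℝ) ^ 3 - (5/3) ^ 2 - 5/3 - 1) ((2:ℝ) ^ 3 - 2 ^ 2 - 2 - 1) := by
    constructor <;> norm_num
  obtain ⟨t, htmem, ht⟩ := intermediate_value_Icc hle hcont hmem
  refine ⟨t, ht, ?_, htmem.2⟩
  rcases lt_or_eq_of_le htmem.1 with h | h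
  · exact h
  · exfalso
    rw [← h] at ht
    norm_num at ht

/-- Helper: all complex roots of a rational polynomial that splits in an intermediate
field `F` of `ℂ` belong to `F`. -/
private lemma mem_of_splits (F : IntermediateField ℚ ℂ) (g : ℚ[X]) (hg : g ≠ 0)
    (hsp : (g.map (algebraMap ℚ F)).Splits) (z : ℂ) (hz : aeval z g = 0) : z ∈ F := by
  have himg := Polynomial.Splits.image_rootSet hsp F.val
  have hzr : z ∈ g.rootSet ℂ := by
    rw [Polynomial.mem_rootSet]
    exact ⟨hg, hz⟩
  rw [← himg] at hzr
  obtain ⟨y, _, rfl⟩ := hzr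
  exact y.2

/-- Any element of ℚ(x) for x a tribonacci root is a rational quadratic expression in x. -/
private lemma rep_of_mem_adjoin (x : ℂ) (hx : x ^ 3 - x ^ 2 - x - 1 = 0) (v : ℂ)
    (hv : v ∈ IntermediateField.adjoin ℚ ({x} : Set ℂ)) :
    ∃ a b c : ℚ, v = (a : ℂ) + (b : ℂ) * x + (c : ℂ) * x ^ 2 := by
  have hint := isIntegral_root x hx
  have htos := IntermediateField.adjoin_simple_toSubalgebra_of_isAlgebraic hint.isAlgebraic
  have hv' : v ∈ Algebra.adjoin ℚ ({x} : Set ℂ) := by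
    rw [← htos]
    exact hv
  rw [Algebra.adjoin_singleton_eq_range_aeval] at hv'
  obtain ⟨g, hg⟩ := hv'
  set r := g %ₘ Ptri with hr
  have hmod : aeval x g = aeval x r := by
    conv_lhs => rw [← Polynomial.modByMonic_add_div g Ptri]
    rw [map_add, map_mul, Ptri_aeval, hx, zero_mul, add_zero]
  have hdeg : r.natDegree < 3 := by
    have hd := Polynomial.degree_modByMonic_lt g Ptri_monic
    rw [Ptri_degree] at hd
    by_cases hr0 : r = 0
    · rw [hr0]; simp
    · rw [Polynomial.natDegree_lt_iff_degree_lt hr0]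
      exact_mod_cast hd
  have hsum := Polynomial.aeval_eq_sum_range' hdeg x
  rw [Finset.sum_range_succ, Finset.sum_range_succ, Finset.sum_range_one] at hsum
  refine ⟨r.coeff 0, r.coeff 1, r.coeff 2, ?_⟩
  have hvr : v = aeval x r := by rw [← hg]; exact hmod
  rw [hvr, hsum]
  simp [Rat.smul_def]

private lemma pprime_mem {F : IntermediateField ℚ ℂ} {x : ℂ} (hx : x ∈ F) :
    3 * x ^ 2 - 2 * x - 1 ∈ F := by
  have h3 : (3 : ℂ) ∈ F := by exact_mod_cast _root_.natCast_mem F 3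
  have h2 : (2 : ℂ) ∈ F := by exact_mod_cast _root_.natCast_mem F 2
  exact sub_mem (sub_mem (mul_mem h3 (pow_mem hx 2)) (mul_mem h2 hx)) (one_mem F)

/-- The subalgebra of elements of the form `u + v * l2` with `u, v ∈ T`. -/
private def quadAlg (T : IntermediateField ℚ ℂ) (tc l2 : ℂ) (htcT : tc ∈ T)
    (hquad : l2 ^ 2 + (tc - 1) * l2 + (tc ^ 2 - tc - 1) = 0) : Subalgebra ℚ ℂ where
  carrier := {w : ℂ | ∃ u v : ℂ, u ∈ T ∧ v ∈ T ∧ w = u + v * l2}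
  mul_mem' := by
    rintro p q ⟨u1, v1, hu1, hv1, rfl⟩ ⟨u2, v2, hu2, hv2, rfl⟩
    refine ⟨u1 * u2 - v1 * v2 * (tc ^ 2 - tc - 1),
      u1 * v2 + u2 * v1 + v1 * v2 * (1 - tc), ?_, ?_, ?_⟩
    · exact sub_mem (mul_mem hu1 hu2)
        (mul_mem (mul_mem hv1 hv2)
          (sub_mem (sub_mem (pow_mem htcT 2) htcT) (one_mem T)))
    · exact add_mem (add_mem (mul_mem hu1 hv2) (mul_mem hu2 hv1))
        (mul_mem (mul_mem hv1 hv2) (sub_mem (one_mem T) htcT))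
    · linear_combination (v1 * v2) * hquad
  one_mem' := ⟨1, 0, one_mem T, zero_mem T, by ring⟩
  add_mem' := by
    rintro p q ⟨u1, v1, hu1, hv1, rfl⟩ ⟨u2, v2, hu2, hv2, rfl⟩
    exact ⟨u1 + u2, v1 + v2, add_mem hu1 hu2, add_mem hv1 hv2, by ring⟩
  zero_mem' := ⟨0, 0, zero_mem T, zero_mem T, by ring⟩
  algebraMap_mem' := fun q =>
    ⟨algebraMap ℚ ℂ q, 0, T.algebraMap_mem q, zero_mem T, by ring⟩

private lemma mem_quadAlg {T : IntermediateField ℚ ℂ} {tc l2 : ℂ} {htcT : tc ∈ T}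
    {hquad : l2 ^ 2 + (tc - 1) * l2 + (tc ^ 2 - tc - 1) = 0} {w : ℂ} :
    w ∈ quadAlg T tc l2 htcT hquad ↔ ∃ u v : ℂ, u ∈ T ∧ v ∈ T ∧ w = u + v * l2 :=
  Iff.rfl

end TribonacciAux

set_option maxHeartbeats 2000000 in
/-- Let `lam` be a root of `P(X) = X³ − X² − X − 1` and `n ∈ ℤ`. Then
`α = lamⁿ · P′(lam)⁻¹` is algebraic of degree 3 over `ℚ`, the field `ℚ(α)` is not a
normal extension of `ℚ`, and the splitting field of the minimal polynomial of `α`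
inside `ℂ` contains no primitive cube root of unity. -/
theorem tribonacci_alpha_satisfies_hypotheses
    (lam : ℂ) (hlam : lam ^ 3 - lam ^ 2 - lam - 1 = 0) (n : ℤ)
    (α : ℂ) (hα : α = lam ^ n * (3 * lam ^ 2 - 2 * lam - 1)⁻¹) :
    (minpoly ℚ α).natDegree = 3 ∧
    ¬ Normal ℚ (IntermediateField.adjoin ℚ ({α} : Set ℂ)) ∧
    (∀ z : ℂ,
      z ∈ IntermediateField.adjoin ℚ {x : ℂ | Polynomial.aeval x (minpoly ℚ α) = 0} →
      z ^ 2 + z + 1 ≠ 0) := by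
  classical
  have hlam0 : lam ≠ 0 := root_ne_zero lam hlam
  have hP' : 3 * lam ^ 2 - 2 * lam - 1 ≠ 0 := Pprime_ne_zero lam hlam
  have hintl : IsIntegral ℚ lam := isIntegral_root lam hlam
  set K : IntermediateField ℚ ℂ := IntermediateField.adjoin ℚ ({lam} : Set ℂ) with hK
  have hlamK : lam ∈ K := IntermediateField.mem_adjoin_simple_self ℚ lam
  have hαK : α ∈ K := by
    rw [hα]
    exact mul_mem (zpow_mem hlamK n) (inv_mem (pprime_mem hlamK))
  haveI hKfd : FiniteDimensional ℚ K := IntermediateField.adjoin.finiteDimensional hintl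
  have hKrank : Module.finrank ℚ K = 3 := by
    rw [hK, IntermediateField.adjoin.finrank hintl, minpoly_eq_Ptri lam hlam, Ptri_natDegree]
  set F : IntermediateField ℚ ℂ := IntermediateField.adjoin ℚ ({α} : Set ℂ) with hF
  have hFK : F ≤ K := by
    rw [hF]
    exact IntermediateField.adjoin_le_iff.mpr (by simpa using hαK)
  have hαKel : IsIntegral ℚ (⟨α, hαK⟩ : K) := IsIntegral.of_finite ℚ _
  have hminKel : minpoly ℚ α = minpoly ℚ (⟨α, hαK⟩ : K) := by
    have h1 := minpoly.algebraMap_eq (A := ℚ) (algebraMap K ℂ).injective (⟨α, hαK⟩ : K)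
    have h2 : algebraMap K ℂ (⟨α, hαK⟩ : K) = α := rfl
    rw [h2] at h1
    exact h1
  have hαint : IsIntegral ℚ α := by
    have := IsIntegral.map K.val hαKel
    simpa using this
  have hmindvd : (minpoly ℚ α).natDegree ∣ 3 := by
    rw [hminKel, ← hKrank]
    exact minpoly.degree_dvd hαKel
  have hdeg_ne1 : (minpoly ℚ α).natDegree ≠ 1 := by
    intro h1
    rw [minpoly.natDegree_eq_one_iff] at h1
    obtain ⟨q, hq⟩ := h1
    have hq' : lam ^ n * (3 * lam ^ 2 - 2 * lam - 1)⁻¹ = (q : ℂ) := by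
      rw [← hα, ← hq]
      exact (eq_ratCast (algebraMap ℚ ℂ) q).symm
    exact alpha_not_rat lam hlam n q hq'
  have hdeg3 : (minpoly ℚ α).natDegree = 3 := by
    rcases (Nat.Prime.eq_one_or_self_of_dvd Nat.prime_three _ hmindvd) with h | h
    · exact absurd h hdeg_ne1
    · exact h
  have hFrank : Module.finrank ℚ F = 3 := by
    rw [hF, IntermediateField.adjoin.finrank hαint, hdeg3]
  have hFKeq : F = K :=
    IntermediateField.eq_of_le_of_finrank_eq hFK (by rw [hFrank, hKrank])
  -- the real root and the nonreal roots
  obtain ⟨t, ht, ht53, ht2⟩ := exists_real_root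
  set tc : ℂ := (t : ℂ) with htcdef
  have htc : tc ^ 3 - tc ^ 2 - tc - 1 = 0 := by
    have h0 : ((t ^ 3 - t ^ 2 - t - 1 : ℝ) : ℂ) = 0 := by rw [ht]; norm_num
    push_cast at h0
    exact h0
  have htcint : IsIntegral ℚ tc := isIntegral_root tc htc
  have hs0 : 0 < 3 * t ^ 2 - 2 * t - 5 := by nlinarith
  set s : ℝ := Real.sqrt (3 * t ^ 2 - 2 * t - 5) with hsdef
  have hs2 : s ^ 2 = 3 * t ^ 2 - 2 * t - 5 := Real.sq_sqrt hs0.le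
  have hspos : 0 < s := Real.sqrt_pos.mpr hs0
  set l2 : ℂ := (((1 - t) / 2 : ℝ) : ℂ) + ((s / 2 : ℝ) : ℂ) * Complex.I with hl2
  have hs2' : ((s : ℂ)) ^ 2 = 3 * tc ^ 2 - 2 * tc - 5 := by
    have := congrArg (fun r : ℝ => (r : ℂ)) hs2
    push_cast at this
    exact this
  have hquad : l2 ^ 2 + (tc - 1) * l2 + (tc ^ 2 - tc - 1) = 0 := by
    rw [hl2]
    push_cast
    linear_combination (Complex.I ^ 2 / 4) * hs2' + ((3 * tc ^ 2 - 2 * tc - 5) / 4) * Complex.I_sq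
  have hl2root : l2 ^ 3 - l2 ^ 2 - l2 - 1 = 0 := by
    linear_combination (l2 - tc) * hquad + htc
  have hquad' : ((1 - tc) - l2) ^ 2 + (tc - 1) * ((1 - tc) - l2) + (tc ^ 2 - tc - 1) = 0 := by
    linear_combination hquad
  have hl2'root : ((1 - tc) - l2) ^ 3 - ((1 - tc) - l2) ^ 2 - ((1 - tc) - l2) - 1 = 0 := by
    linear_combination (((1 - tc) - l2) - tc) * hquad' + htc
  have hl2im : l2.im = s / 2 := by
    rw [hl2]; simp
  have hroots : ∀ w : ℂ, w ^ 3 - w ^ 2 - w - 1 = 0 → w = tc ∨ w = l2 ∨ w = (1 - tc) - l2 := by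
    intro w hw
    have hfac : (w - tc) * ((w - l2) * (w - ((1 - tc) - l2))) = 0 := by
      linear_combination hw - htc - (w - tc) * hquad
    rcases mul_eq_zero.mp hfac with h | h
    · left; exact sub_eq_zero.mp h
    · rcases mul_eq_zero.mp h with h' | h'
      · right; left; exact sub_eq_zero.mp h'
      · right; right; exact sub_eq_zero.mp h'
  refine ⟨hdeg3, ?_, ?_⟩
  · -- not normal
    intro hN
    have hlamF : lam ∈ F := by rw [hFKeq]; exact hlamK
    have hminl : minpoly ℚ (⟨lam, hlamF⟩ : F) = Ptri := by
      have h1 := minpoly.algebraMap_eq (A := ℚ) (algebraMap F ℂ).injective (⟨lam, hlamF⟩ : F)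
      have h2 : algebraMap F ℂ (⟨lam, hlamF⟩ : F) = lam := rfl
      rw [h2] at h1
      rw [← h1, minpoly_eq_Ptri lam hlam]
    have hsp : (Ptri.map (algebraMap ℚ F)).Splits := by
      rw [← hminl]
      exact hN.splits _
    have htcF : tc ∈ F := mem_of_splits F Ptri Ptri_ne_zero hsp tc
      (by rw [Ptri_aeval]; exact htc)
    have hl2F : l2 ∈ F := mem_of_splits F Ptri Ptri_ne_zero hsp l2
      (by rw [Ptri_aeval]; exact hl2root)
    have hTle : IntermediateField.adjoin ℚ ({tc} : Set ℂ) ≤ F :=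
      IntermediateField.adjoin_le_iff.mpr (by simpa using htcF)
    have hTrank : Module.finrank ℚ (IntermediateField.adjoin ℚ ({tc} : Set ℂ)) = 3 := by
      rw [IntermediateField.adjoin.finrank htcint, minpoly_eq_Ptri tc htc, Ptri_natDegree]
    haveI : FiniteDimensional ℚ F := hFKeq ▸ hKfd
    have hTF : IntermediateField.adjoin ℚ ({tc} : Set ℂ) = F :=
      IntermediateField.eq_of_le_of_finrank_eq hTle (by rw [hTrank, hFrank])
    rw [← hTF] at hl2F
    obtain ⟨a, b, c, habc⟩ := rep_of_mem_adjoin tc htc l2 hl2F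
    have hreal : (((a : ℝ) + (b : ℝ) * t + (c : ℝ) * t ^ 2 : ℝ) : ℂ) = l2 := by
      rw [habc]; push_cast; ring
    have him := congrArg Complex.im hreal
    rw [Complex.ofReal_im, hl2im] at him
    have : s = 0 := by linarith
    exact absurd this (ne_of_gt hspos)
  · -- no cube root of unity in the splitting field
    intro z hzL hz1
    set M : IntermediateField ℚ ℂ := IntermediateField.adjoin ℚ (Ptri.rootSet ℂ) with hM
    have hMsp : (Ptri.map (algebraMap ℚ ℂ)).Splits := IsAlgClosed.splits _
    haveI hMsf : Polynomial.IsSplittingField ℚ M Ptri :=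
      IntermediateField.adjoin_rootSet_isSplittingField hMsp
    haveI hMnormal : Normal ℚ M := Normal.of_isSplittingField Ptri
    have hlamM : lam ∈ M := IntermediateField.subset_adjoin ℚ _
      (by rw [Polynomial.mem_rootSet]; exact ⟨Ptri_ne_zero, by rw [Ptri_aeval]; exact hlam⟩)
    have hαM : α ∈ M := by
      rw [hα]
      exact mul_mem (zpow_mem hlamM n) (inv_mem (pprime_mem hlamM))
    have hminM : minpoly ℚ α = minpoly ℚ (⟨α, hαM⟩ : M) := by
      have h1 := minpoly.algebraMap_eq (A := ℚ) (algebraMap M ℂ).injective (⟨α, hαM⟩ : M)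
      have h2 : algebraMap M ℂ (⟨α, hαM⟩ : M) = α := rfl
      rw [h2] at h1
      exact h1
    have hspM : ((minpoly ℚ α).map (algebraMap ℚ M)).Splits := by
      rw [hminM]
      exact hMnormal.splits _
    have hminne : minpoly ℚ α ≠ 0 := minpoly.ne_zero hαint
    have hzM : z ∈ M := by
      have hLM : IntermediateField.adjoin ℚ {x : ℂ | Polynomial.aeval x (minpoly ℚ α) = 0} ≤ M :=
        IntermediateField.adjoin_le_iff.mpr
          (fun w hw => mem_of_splits M _ hminne hspM w hw)
      exact hLM hzL
    set T : IntermediateField ℚ ℂ := IntermediateField.adjoin ℚ ({tc} : Set ℂ) with hT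
    have htcT : tc ∈ T := IntermediateField.mem_adjoin_simple_self ℚ tc
    have hMA : z ∈ quadAlg T tc l2 htcT hquad := by
      have htos : M.toSubalgebra = Algebra.adjoin ℚ (Ptri.rootSet ℂ) :=
        IntermediateField.adjoin_toSubalgebra_of_isAlgebraic
          (fun x hx => isAlgebraic_of_mem_rootSet hx)
      have hz' : z ∈ Algebra.adjoin ℚ (Ptri.rootSet ℂ) := by
        rw [← htos]
        exact hzM
      have hsub : Ptri.rootSet ℂ ⊆ (quadAlg T tc l2 htcT hquad : Set ℂ) := by
        intro w hw
        have hwroot : w ^ 3 - w ^ 2 - w - 1 = 0 := by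
          rw [Polynomial.mem_rootSet] at hw
          rw [← Ptri_aeval w]
          exact hw.2
        rcases hroots w hwroot with rfl | rfl | rfl
        · exact ⟨tc, 0, htcT, zero_mem T, by ring⟩
        · exact ⟨0, 1, zero_mem T, one_mem T, by ring⟩
        · exact ⟨1 - tc, -1, sub_mem (one_mem T) htcT, neg_mem (one_mem T), by ring⟩
      exact Algebra.adjoin_le hsub hz'
    obtain ⟨u, v, huT, hvT, hzuv⟩ := hMA
    obtain ⟨a1, b1, c1, hu⟩ := rep_of_mem_adjoin tc htc u huT
    obtain ⟨a, b, c, hv⟩ := rep_of_mem_adjoin tc htc v hvT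
    set u0 : ℝ := (a1 : ℝ) + (b1 : ℝ) * t + (c1 : ℝ) * t ^ 2 with hu0
    set v0 : ℝ := (a : ℝ) + (b : ℝ) * t + (c : ℝ) * t ^ 2 with hv0
    have hureal : ((u0 : ℝ) : ℂ) = u := by rw [hu0, hu]; push_cast; ring
    have hvreal : ((v0 : ℝ) : ℂ) = v := by rw [hv0, hv]; push_cast; ring
    have hzim : z.im = v0 * (s / 2) := by
      rw [hzuv, ← hureal, ← hvreal, hl2]
      simp
    have hzre : z.re = u0 + v0 * ((1 - t) / 2) := by
      rw [hzuv, ← hureal, ← hvreal, hl2]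
      simp
    have hzsq : z ^ 2 = z * z := by ring
    have him : z.re * z.im + z.im * z.re + z.im = 0 := by
      have h := congrArg Complex.im hz1
      rw [hzsq] at h
      simpa using h
    have hre : z.re * z.re - z.im * z.im + z.re + 1 = 0 := by
      have h := congrArg Complex.re hz1
      rw [hzsq] at h
      simpa using h
    have him' : z.im * (2 * z.re + 1) = 0 := by linear_combination him
    rcases mul_eq_zero.mp him' with h0 | h0
    · rw [h0] at hre
      nlinarith [sq_nonneg (2 * z.re + 1)]
    · have hxre : z.re = -(1 / 2) := by linarith
      rw [hxre] at hre
      have him2 : z.im ^ 2 = 3 / 4 := by nlinarith [hre]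
      rw [hzim] at him2
      have hv2 : v0 ^ 2 * (3 * t ^ 2 - 2 * t - 5) = 3 := by
        rw [← hs2]; linear_combination 4 * him2
      have hcx : ((v0 ^ 2 * (3 * t ^ 2 - 2 * t - 5) : ℝ) : ℂ) = ((3 : ℝ) : ℂ) := by
        rw [hv2]
      rw [hv0] at hcx
      push_cast at hcx
      -- now hcx : ((a:ℂ) + b * tc + c * tc^2)^2 * (3 * tc^2 - 2*tc - 5) = 3
      have hsq2 : ((a : ℂ) + (b : ℂ) * tc + (c : ℂ) * tc ^ 2) ^ 2 =
          ((a : ℂ) ^ 2 + 2 * (b : ℂ) * (c : ℂ) + (c : ℂ) ^ 2)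
          + (2 * (a : ℂ) * (b : ℂ) + 2 * (b : ℂ) * (c : ℂ) + 2 * (c : ℂ) ^ 2) * tc
          + ((b : ℂ) ^ 2 + 2 * (a : ℂ) * (c : ℂ) + 2 * (b : ℂ) * (c : ℂ) + 2 * (c : ℂ) ^ 2) * tc ^ 2 := by
        linear_combination (2 * (b : ℂ) * (c : ℂ) + (c : ℂ) ^ 2 * (tc + 1)) * htc
      have heq : ((-5 * (a ^ 2 + 2 * b * c + c ^ 2) + 3 * (2 * a * b + 2 * b * c + 2 * c ^ 2)
            + (b ^ 2 + 2 * a * c + 2 * b * c + 2 * c ^ 2) - 3 : ℚ) : ℂ)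
          + ((-2 * (a ^ 2 + 2 * b * c + c ^ 2) - 2 * (2 * a * b + 2 * b * c + 2 * c ^ 2)
            + 4 * (b ^ 2 + 2 * a * c + 2 * b * c + 2 * c ^ 2) : ℚ) : ℂ) * tc
          + ((3 * (a ^ 2 + 2 * b * c + c ^ 2) + (2 * a * b + 2 * b * c + 2 * c ^ 2)
            - (b ^ 2 + 2 * a * c + 2 * b * c + 2 * c ^ 2) : ℚ) : ℂ) * tc ^ 2 = 0 := by
        push_cast
        linear_combination hcx - (3 * tc ^ 2 - 2 * tc - 5) * hsq2
          - ((3 * (2 * (a:ℂ) * b + 2 * (b:ℂ) * c + 2 * (c:ℂ) ^ 2)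
              - 2 * ((b:ℂ) ^ 2 + 2 * (a:ℂ) * c + 2 * (b:ℂ) * c + 2 * (c:ℂ) ^ 2))
            + 3 * ((b:ℂ) ^ 2 + 2 * (a:ℂ) * c + 2 * (b:ℂ) * c + 2 * (c:ℂ) ^ 2) * (tc + 1)) * htc
      obtain ⟨g1, g2, g3⟩ := coords_unique tc htc _ _ _ heq
      exact no_rat_sol a b c (by linarith) (by linarith) (by linarith)
end

section
/- Let p be a prime, Q a positive integer, and i, a ∈ ℤ. Then the following three statements are equivalent: (1) p^{ν_p(Q)} divides a − i; (2) the function n ↦ ν_p(n − a), with values in ℕ ∪ {∞}, is not constant on the residue class {n ∈ ℤ : n ≡ i (mod Q)}; (3) for every natural number k there exists an integer n with n ≡ i (mod Q) and p^k ∣ n − a (i.e. ν_p(n − a) is unbounded on the class). -/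
/-- The `p`-adic valuation on `ℤ` with values in `ℕ∞`, with `ν_p(0) = ∞`. -/
noncomputable def nuInf (p : ℕ) (m : ℤ) : ℕ∞ :=
  if m = 0 then ⊤ else (padicValInt p m : ℕ∞)

/-- For a prime `p`, a positive integer `Q` and integers `i, a`, the following are
equivalent: (1) `p^{ν_p(Q)} ∣ a − i`; (2) `n ↦ ν_p(n − a)` is not constant on the
residue class `n ≡ i (mod Q)`; (3) `ν_p(n − a)` is unbounded on that class. -/
theorem padic_valuation_class_tfae
    (p : ℕ) (hp : Nat.Prime p) (Q : ℕ) (hQ : 0 < Q) (i a : ℤ) :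
    ((p : ℤ) ^ (padicValNat p Q) ∣ (a - i) ↔
      ¬ ∀ m n : ℤ, (Q : ℤ) ∣ (m - i) → (Q : ℤ) ∣ (n - i) →
        nuInf p (m - a) = nuInf p (n - a)) ∧
    ((p : ℤ) ^ (padicValNat p Q) ∣ (a - i) ↔
      ∀ k : ℕ, ∃ n : ℤ, (Q : ℤ) ∣ (n - i) ∧ (p : ℤ) ^ k ∣ (n - a)) := by
  haveI : Fact (Nat.Prime p) := ⟨hp⟩
  set v := padicValNat p Q with hv
  have hpvQ : (p : ℤ) ^ v ∣ (Q : ℤ) := by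
    have := pow_padicValNat_dvd (p := p) (n := Q)
    exact_mod_cast Int.natCast_dvd_natCast.mpr this
  -- (1) → (3)
  have h13 : (p:ℤ)^v ∣ (a - i) → ∀ k : ℕ, ∃ n : ℤ, (Q:ℤ) ∣ (n - i) ∧ (p:ℤ)^k ∣ (n - a) := by
    rintro ⟨c, hc⟩ k
    set m := k - v with hm
    have hfac : Q.factorization p = v := Nat.factorization_def Q hp
    have hQ' : Nat.Coprime p (Q / p ^ v) := hfac ▸ Nat.coprime_ordCompl hp hQ.ne'
    have hcop : IsCoprime ((p:ℤ)^m) ((Q / p^v : ℕ) : ℤ) := by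
      rw [← Nat.cast_pow, Nat.isCoprime_iff_coprime]
      exact Nat.Coprime.pow_left m hQ'
    obtain ⟨x, y, hxy⟩ := hcop
    refine ⟨i + (Q:ℤ) * (c * y), ⟨c*y, by ring⟩, ?_⟩
    have hQeq : (Q : ℤ) = (p:ℤ)^v * ((Q / p^v : ℕ) : ℤ) := by
      rw [← Nat.cast_pow, ← Nat.cast_mul, Nat.mul_div_cancel' pow_padicValNat_dvd]
    have key : i + (Q:ℤ) * (c*y) - a = (p:ℤ)^(v+m) * (-(c*x)) := by
      have h1 : ((Q/p^v : ℕ):ℤ) * y = 1 - x * (p:ℤ)^m := by linarith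
      calc i + (Q:ℤ)*(c*y) - a
          = (p:ℤ)^v * (((Q/p^v:ℕ):ℤ) * y * c) - (a - i) := by rw [hQeq]; ring
        _ = (p:ℤ)^v * ((1 - x*(p:ℤ)^m) * c) - (p:ℤ)^v * c := by rw [h1, hc]
        _ = (p:ℤ)^(v+m) * (-(c*x)) := by rw [pow_add]; ring
    rw [key]
    exact Dvd.dvd.mul_right (pow_dvd_pow _ (by omega)) _
  -- (3) → (1)
  have h31 : (∀ k : ℕ, ∃ n : ℤ, (Q:ℤ) ∣ (n - i) ∧ (p:ℤ)^k ∣ (n - a)) → (p:ℤ)^v ∣ (a - i) := by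
    intro h
    obtain ⟨n, hn1, hn2⟩ := h v
    have heq : a - i = (n - i) - (n - a) := by ring
    rw [heq]
    exact dvd_sub (hpvQ.trans hn1) hn2
  -- ¬(1) → constant
  have hcon : ¬ (p:ℤ)^v ∣ (a - i) →
      ∀ m n : ℤ, (Q:ℤ) ∣ (m - i) → (Q:ℤ) ∣ (n - i) →
        nuInf p (m - a) = nuInf p (n - a) := by
    intro hnd
    have hia : i - a ≠ 0 := by
      intro h
      exact hnd (by rw [show a - i = -(i - a) by ring, h]; simp)
    set c := padicValInt p (i - a) with hcdef
    have hcdvd : (p:ℤ)^c ∣ (i - a) := padicValInt_dvd _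
    have hcv : c < v := by
      by_contra hle
      push_neg at hle
      have : (p:ℤ)^v ∣ (i - a) := (padicValInt_dvd_iff v (i-a)).mpr (Or.inr hle)
      exact hnd (by rw [show a - i = -(i - a) by ring]; exact this.neg_right)
    have key : ∀ m : ℤ, (Q:ℤ) ∣ (m - i) → nuInf p (m - a) = (c : ℕ∞) := by
      intro m hm
      have hmi : (p:ℤ)^v ∣ (m - i) := hpvQ.trans hm
      have hma : m - a ≠ 0 := by
        intro h
        apply hnd
        have : a - i = (m - i) - (m - a) := by ring
        rw [this, h, sub_zero]
        exact hmi
      have hd1 : (p:ℤ)^c ∣ (m - a) := by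
        have : m - a = (m - i) + (i - a) := by ring
        rw [this]
        exact dvd_add ((pow_dvd_pow _ hcv.le).trans hmi) hcdvd
      have hd2 : ¬ (p:ℤ)^(c+1) ∣ (m - a) := by
        intro h
        have : (p:ℤ)^(c+1) ∣ (i - a) := by
          have heq : i - a = (m - a) - (m - i) := by ring
          rw [heq]
          exact dvd_sub h ((pow_dvd_pow _ (by omega)).trans hmi)
        rcases (padicValInt_dvd_iff (c+1) (i-a)).mp this with h0 | hle
        · exact hia h0
        · omega
      have hval : padicValInt p (m - a) = c := by
        have h1 : c ≤ padicValInt p (m - a) := by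
          rcases (padicValInt_dvd_iff c (m-a)).mp hd1 with h0 | hle
          · exact absurd h0 hma
          · exact hle
        have h2 : padicValInt p (m - a) < c + 1 := by
          by_contra h
          push_neg at h
          exact hd2 ((padicValInt_dvd_iff (c+1) (m-a)).mpr (Or.inr h))
        omega
      simp [nuInf, hma, hval]
    intro m n hm hn
    rw [key m hm, key n hn]
  -- (3) → ¬constant
  have h3nc : (∀ k : ℕ, ∃ n : ℤ, (Q:ℤ) ∣ (n - i) ∧ (p:ℤ)^k ∣ (n - a)) →
      ¬ ∀ m n : ℤ, (Q:ℤ) ∣ (m - i) → (Q:ℤ) ∣ (n - i) →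
        nuInf p (m - a) = nuInf p (n - a) := by
    intro h3 hconst
    by_cases hia : i - a = 0
    · have := hconst i (i + Q) (by simp) (by simp)
      rw [show i + (Q:ℤ) - a = (Q:ℤ) by rw [← sub_eq_zero] at hia ⊢; linarith] at this
      have hQ0 : (Q:ℤ) ≠ 0 := by exact_mod_cast hQ.ne'
      simp [nuInf, hia, hQ0] at this
      exact hQ.ne' this
    · set c := padicValInt p (i - a) with hcdef
      obtain ⟨n, hn1, hn2⟩ := h3 (c+1)
      have := hconst i n (by simp) hn1
      by_cases hna : n - a = 0
      · simp [nuInf, hia, hna] at this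
      · rcases (padicValInt_dvd_iff (c+1) (n-a)).mp hn2 with h0 | hle
        · exact hna h0
        · simp [nuInf, hia, hna] at this
          omega
  constructor
  · constructor
    · intro h1
      exact h3nc (h13 h1)
    · intro hnc
      by_contra h1
      exact hnc (hcon h1)
  · exact ⟨h13, h31⟩
end
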